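/- arXiv:1901.02991 — 6 statements merged into one kernel-verified Lean document; each statement's English description precedes it below -/
import Mathlib

section
/- Under assumptions (A1)–(A4), (A6) and (R), suppose P(S=0, D=1) > 0, P(S=1, T=1, C=1) > 0 and P(S=1, T=0, C=1) > 0, and suppose the law of W under P(·|{S=0, D=1}) is absolutely continuous with respect to its law under P(·|{S=1, T=1, C=1}) and with respect to its law under P(·|{S=1, T=0, C=1}). Let g₁ : 𝒲 → ℝ be a version of E[Y₍11₎ | {S=1, D=1}, W] and g₀ : 𝒲 → ℝ a version of E[Y₍10₎ | {S=1, T=0, C=1}, W]. Then E[Y₍01₎ − Y₍00₎ | S=0, D=1] = E[g₁(W) − g₀(W) | S=0, D=1]. (This identifies the population average treatment effect on treated compliers, PATT-C, from RCT data.) -/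
open MeasureTheory ProbabilityTheory

section Aux

variable {Ω : Type*} {mΩ : MeasurableSpace Ω}

lemma cond_congr_set (μ : Measure Ω) {s t : Set Ω} (h : s =ᵐ[μ] t) : μ[|s] = μ[|t] := by
  unfold ProbabilityTheory.cond
  rw [measure_congr h, Measure.restrict_congr_set h]

lemma integrable_cond_of_integrable (μ : Measure Ω) {f : Ω → ℝ} (hf : Integrable f μ)
    (s : Set Ω) (hs : μ s ≠ 0) : Integrable f (μ[|s]) := by
  unfold ProbabilityTheory.cond
  exact (hf.restrict).smul_measure (ENNReal.inv_ne_top.mpr hs)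

lemma setIntegral_cond (μ : Measure Ω) (f : Ω → ℝ) {A B : Set Ω} (hB : MeasurableSet B) :
    ∫ x in B, f x ∂(μ[|A]) = (μ A)⁻¹.toReal * ∫ x in B ∩ A, f x ∂μ := by
  unfold ProbabilityTheory.cond
  rw [Measure.restrict_smul, integral_smul_measure, Measure.restrict_restrict hB, smul_eq_mul]

lemma integral_indicator_eq_mul_integral_of_Iic (μ : Measure Ω) [IsProbabilityMeasure μ]
    {Y : Ω → ℝ} (hY : Measurable Y) {A : Set Ω} (hA : MeasurableSet A)
    (hq : ∀ q : ℚ, μ (Y ⁻¹' Set.Iic (q : ℝ) ∩ A) = μ (Y ⁻¹' Set.Iic (q : ℝ)) * μ A) :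
    ∫ ω, A.indicator Y ω ∂μ = (μ A).toReal * ∫ ω, Y ω ∂μ := by
  have hmap : (μ.restrict A).map Y = μ A • μ.map Y := by
    refine ext_of_generate_finite _ Real.borel_eq_generateFrom_Iic_rat Real.isPiSystem_Iic_rat
      ?_ ?_
    · rintro s hs
      simp only [Set.mem_iUnion, Set.mem_singleton_iff] at hs
      obtain ⟨q, rfl⟩ := hs
      rw [Measure.map_apply hY measurableSet_Iic, Measure.restrict_apply (hY measurableSet_Iic),
        Measure.smul_apply, Measure.map_apply hY measurableSet_Iic, smul_eq_mul, hq q, mul_comm]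
    · rw [Measure.map_apply hY MeasurableSet.univ, Measure.smul_apply,
        Measure.map_apply hY MeasurableSet.univ, smul_eq_mul]
      simp
  have h1 : ∫ ω, A.indicator Y ω ∂μ = ∫ y, y ∂((μ.restrict A).map Y) := by
    rw [integral_indicator hA,
      integral_map (f := fun y : ℝ => y) hY.aemeasurable aestronglyMeasurable_id]
  have h2 : ∫ ω, Y ω ∂μ = ∫ y, y ∂(μ.map Y) := by
    rw [integral_map (f := fun y : ℝ => y) hY.aemeasurable aestronglyMeasurable_id]
  rw [h1, h2, hmap, integral_smul_measure, smul_eq_mul]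

end Aux


section Aux2

variable {Ω : Type*} {m : MeasurableSpace Ω} [mΩ : MeasurableSpace Ω]
  [StandardBorelSpace Ω]

lemma condexp_indicator_mul_of_condIndepFun (hm : m ≤ mΩ) (ν : Measure Ω)
    [IsProbabilityMeasure ν] {Y : Ω → ℝ} {S : Ω → Bool} (hY : Measurable Y)
    (hS : Measurable S) (h : CondIndepFun m hm Y S ν) (hYi : Integrable Y ν) (b : Bool) :
    ν[(S ⁻¹' {b}).indicator Y | m] =ᵐ[ν]
      fun ω => ((condExpKernel ν m ω) (S ⁻¹' {b})).toReal * (ν[Y | m]) ω := by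
  set A : Set Ω := S ⁻¹' {b} with hA_def
  have hA : MeasurableSet A := hS (measurableSet_singleton b)
  have hind : Integrable (A.indicator Y) ν := hYi.indicator hA
  have h1 := condExp_ae_eq_integral_condExpKernel hm hind
  have h2 := condExp_ae_eq_integral_condExpKernel hm hYi
  have h3 : ∀ᵐ ω ∂ν, ∀ q : ℚ,
      condExpKernel ν m ω (Y ⁻¹' Set.Iic (q : ℝ) ∩ A)
        = condExpKernel ν m ω (Y ⁻¹' Set.Iic (q : ℝ)) * condExpKernel ν m ω A := by
    rw [ae_all_iff]
    intro q
    have h4 := (ProbabilityTheory.Kernel.indepFun_iff_measure_inter_preimage_eq_mul.mp h)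
      (Set.Iic (q : ℝ)) {b} measurableSet_Iic (measurableSet_singleton b)
    exact ae_eq_of_ae_eq_trim h4
  filter_upwards [h1, h2, h3] with ω hω1 hω2 hω3
  rw [hω1, hω2]
  exact integral_indicator_eq_mul_integral_of_Iic (condExpKernel ν m ω) hY hA hω3

lemma condexp_cond_ae_eq_condexp (hm : m ≤ mΩ) (ν : Measure Ω)
    [IsProbabilityMeasure ν] {Y : Ω → ℝ} {S : Ω → Bool} (hY : Measurable Y)
    (hS : Measurable S) (h : CondIndepFun m hm Y S ν) (hYi : Integrable Y ν) (b : Bool)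
    (hb : ν (S ⁻¹' {b}) ≠ 0) :
    (ν[Y | m]) =ᵐ[ν[|S ⁻¹' {b}]] (ν[|S ⁻¹' {b}])[Y | m] := by
  set A : Set Ω := S ⁻¹' {b} with hA_def
  have hA : MeasurableSet A := hS (measurableSet_singleton b)
  haveI : IsProbabilityMeasure (ν[|A]) := cond_isProbabilityMeasure hb
  have hind : Integrable (A.indicator Y) ν := hYi.indicator hA
  have hindc : Integrable (A.indicator (ν[Y | m])) ν := integrable_condExp.indicator hA
  have key : ∀ B : Set Ω, MeasurableSet[m] B →
      ∫ x in B, (ν[Y | m]) x ∂(ν[|A]) = ∫ x in B, Y x ∂(ν[|A]) := by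
    intro B hBm
    have hB : MeasurableSet B := hm _ hBm
    rw [setIntegral_cond ν _ hB, setIntegral_cond ν _ hB]
    congr 1
    have e1 : ∫ x in B ∩ A, Y x ∂ν = ∫ x in B, A.indicator Y x ∂ν := by
      rw [setIntegral_indicator hA]
    have e2 : ∫ x in B ∩ A, (ν[Y | m]) x ∂ν = ∫ x in B, A.indicator (ν[Y | m]) x ∂ν := by
      rw [setIntegral_indicator hA]
    rw [e1, e2, ← setIntegral_condExp hm hind hBm, ← setIntegral_condExp hm hindc hBm]
    -- both condexps equal (condExpKernel · A).toReal * (ν[Y|m]) a.e.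
    have hcrux := condexp_indicator_mul_of_condIndepFun hm ν hY hS h hYi b
    have hpull : ν[A.indicator (ν[Y | m]) | m] =ᵐ[ν]
        fun ω => ((condExpKernel ν m ω) A).toReal * (ν[Y | m]) ω := by
      have hfg : A.indicator (ν[Y | m]) = (ν[Y | m]) * A.indicator (fun _ => (1:ℝ)) := by
        funext ω
        by_cases hω : ω ∈ A <;> simp [Set.indicator_apply, hω]
      have hone : Integrable (A.indicator (fun _ => (1:ℝ))) ν :=
        (integrable_const (1:ℝ)).indicator hA
      have hmul := condExp_mul_of_stronglyMeasurable_left (μ := ν) (m := m) (f := ν[Y | m])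
        (g := A.indicator fun _ => (1:ℝ)) stronglyMeasurable_condExp
        (hfg ▸ hindc) hone
      rw [hfg]
      refine Filter.EventuallyEq.trans (show _ =ᵐ[ν] (ν[Y | m]) * ν[A.indicator (fun _ => (1:ℝ)) | m] from hmul) ?_
      have hker := condExpKernel_ae_eq_condExp (μ := ν) hm hA
      filter_upwards [hker] with ω hω
      simp only [Pi.mul_apply]
      rw [measureReal_def] at hω
      rw [← hω]
      ring
    rw [integral_congr_ae ((ae_restrict_iff' (hm _ hBm)).mpr (hcrux.mono fun x hx _ => hx)),
      integral_congr_ae ((ae_restrict_iff' (hm _ hBm)).mpr (hpull.mono fun x hx _ => hx))]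
  have hYic : Integrable Y (ν[|A]) := integrable_cond_of_integrable ν hYi A hb
  have hcondc : Integrable (ν[Y | m]) (ν[|A]) :=
    integrable_cond_of_integrable ν integrable_condExp A hb
  exact ae_eq_condExp_of_forall_setIntegral_eq hm hYic
    (fun s hs _ => hcondc.integrableOn)
    (fun s hs _ => key s hs)
    (stronglyMeasurable_condExp.aestronglyMeasurable)

end Aux2



/-- **PATT-C identification (Theorem 1).** Under consistency (A1), conditional independence of
compliance and sample/treatment assignment (A2), strong ignorability of sample assignment for
treated (A3) and controls (A4), one-sided noncompliance (A6) and RCT randomization (R), the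
population average treatment effect on treated compliers is identified from the RCT data:
`E[Y₀₁ − Y₀₀ | S=0, D=1] = E[g₁(W) − g₀(W) | S=0, D=1]`, where `g₁` is a version of
`E[Y₁₁ | S=1, D=1, W]` and `g₀` a version of `E[Y₁₀ | S=1, T=0, C=1, W]`. -/
theorem pattc_identification
    {Ω 𝒲 : Type*} [MeasurableSpace Ω] [StandardBorelSpace Ω]
    [MeasurableSpace 𝒲] [StandardBorelSpace 𝒲]
    (P : Measure Ω) [IsProbabilityMeasure P]
    (S T C D : Ω → Bool) (hS : Measurable S) (hT : Measurable T)
    (hC : Measurable C) (hD : Measurable D)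
    (W : Ω → 𝒲) (hW : Measurable W)
    (Y : Bool → Bool → Ω → ℝ)
    (hYmeas : ∀ s d, Measurable (Y s d)) (hYint : ∀ s d, Integrable (Y s d) P)
    -- (A1) consistency under parallel studies
    (hA1 : ∀ d, Y false d =ᵐ[P] Y true d)
    -- (A2) conditional independence of compliance and sample/treatment assignment given W
    (hA2 : CondIndepFun (MeasurableSpace.comap W inferInstance) hW.comap_le C (fun ω => (S ω, T ω)) P)
    -- (A3) strong ignorability of sample assignment for treated
    (hA3 : CondIndepFun (MeasurableSpace.comap W inferInstance) hW.comap_le (Y true true) S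
      (P[|{ω | T ω = true ∧ C ω = true}]))
    (hA3pos : ∀ᵐ ω ∂(P[|{ω | T ω = true ∧ C ω = true}]),
      0 < ((P[|{ω | T ω = true ∧ C ω = true}])[({ω | S ω = true}).indicator
            (fun _ => (1 : ℝ)) | MeasurableSpace.comap W inferInstance]) ω ∧
      ((P[|{ω | T ω = true ∧ C ω = true}])[({ω | S ω = true}).indicator
            (fun _ => (1 : ℝ)) | MeasurableSpace.comap W inferInstance]) ω < 1)
    -- (A4) strong ignorability of sample assignment for controls
    (hA4 : CondIndepFun (MeasurableSpace.comap W inferInstance) hW.comap_le (Y true false) S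
      (P[|{ω | T ω = true ∧ C ω = true}]))
    -- (A6) one-sided noncompliance: {D=1} = {T=1} ∩ {C=1} up to null sets
    (hA6 : ({ω | D ω = true} : Set Ω) =ᵐ[P] ({ω | T ω = true} ∩ {ω | C ω = true} : Set Ω))
    -- (R) randomization in the RCT
    (hR : IndepFun T (fun ω => (W ω, C ω, (Y true false ω, Y true true ω)))
      (P[|{ω | S ω = true}]))
    -- positivity of the conditioning events
    (hpos0 : 0 < P {ω | S ω = false ∧ D ω = true})
    (hpos1 : 0 < P {ω | S ω = true ∧ T ω = true ∧ C ω = true})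
    (hpos2 : 0 < P {ω | S ω = true ∧ T ω = false ∧ C ω = true})
    -- absolute continuity of the covariate laws
    (hac1 : (P[|{ω | S ω = false ∧ D ω = true}]).map W ≪
      (P[|{ω | S ω = true ∧ T ω = true ∧ C ω = true}]).map W)
    (hac0 : (P[|{ω | S ω = false ∧ D ω = true}]).map W ≪
      (P[|{ω | S ω = true ∧ T ω = false ∧ C ω = true}]).map W)
    -- g₁ : version of E[Y₁₁ | S=1, D=1, W] ; g₀ : version of E[Y₁₀ | S=1, T=0, C=1, W]
    (g₁ g₀ : 𝒲 → ℝ) (hg₁m : Measurable g₁) (hg₀m : Measurable g₀)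
    (hg₁ : (fun ω => g₁ (W ω)) =ᵐ[P[|{ω | S ω = true ∧ D ω = true}]]
      (P[|{ω | S ω = true ∧ D ω = true}])[Y true true | MeasurableSpace.comap W inferInstance])
    (hg₀ : (fun ω => g₀ (W ω)) =ᵐ[P[|{ω | S ω = true ∧ T ω = false ∧ C ω = true}]]
      (P[|{ω | S ω = true ∧ T ω = false ∧ C ω = true}])[Y true false | MeasurableSpace.comap W inferInstance]) :
    ∫ ω, (Y false true ω - Y false false ω) ∂(P[|{ω | S ω = false ∧ D ω = true}]) =
      ∫ ω, (g₁ (W ω) - g₀ (W ω)) ∂(P[|{ω | S ω = false ∧ D ω = true}]) := by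
  classical
  have hm : MeasurableSpace.comap W inferInstance ≤ ‹MeasurableSpace Ω› := hW.comap_le
  -- basic sets
  set sTC : Set Ω := {ω | T ω = true ∧ C ω = true} with hsTC_def
  have hsTC_eq : sTC = T ⁻¹' {true} ∩ C ⁻¹' {true} := rfl
  have hsTC : MeasurableSet sTC := by
    rw [hsTC_eq]
    exact (hT (measurableSet_singleton true)).inter (hC (measurableSet_singleton true))
  set A1 : Set Ω := S ⁻¹' {true} with hA1_def
  set A0 : Set Ω := S ⁻¹' {false} with hA0_def
  have hA1m : MeasurableSet A1 := hS (measurableSet_singleton true)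
  have hA0m : MeasurableSet A0 := hS (measurableSet_singleton false)
  set ν : Measure Ω := P[|sTC] with hν_def
  -- a.e. set equalities from (A6)
  have hDset : ({ω | D ω = true} : Set Ω) =ᵐ[P] sTC := hA6
  have e_fd : ({ω | S ω = false ∧ D ω = true} : Set Ω) =ᵐ[P] (A0 ∩ sTC : Set Ω) :=
    Filter.EventuallyEq.inter (Filter.EventuallyEq.refl (ae P) (A0 : Set Ω)) hDset
  have e_td : ({ω | S ω = true ∧ D ω = true} : Set Ω) =ᵐ[P] (A1 ∩ sTC : Set Ω) :=
    Filter.EventuallyEq.inter (Filter.EventuallyEq.refl (ae P) (A1 : Set Ω)) hDset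
  have e_t1 : ({ω | S ω = true ∧ T ω = true ∧ C ω = true} : Set Ω) = sTC ∩ A1 := by
    ext ω
    simp only [Set.mem_setOf_eq, Set.mem_inter_iff, hsTC_def, hA1_def, Set.mem_preimage,
      Set.mem_singleton_iff]
    tauto
  -- positivity
  have hPsTC : P sTC ≠ 0 := by
    have hsub : {ω | S ω = true ∧ T ω = true ∧ C ω = true} ⊆ sTC := fun ω hω => ⟨hω.2.1, hω.2.2⟩
    exact fun h => (hpos1.ne' (measure_mono_null hsub h)).elim
  haveI : IsProbabilityMeasure ν := cond_isProbabilityMeasure hPsTC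
  have hPA1 : P A1 ≠ 0 := by
    have hsub : {ω | S ω = true ∧ T ω = true ∧ C ω = true} ⊆ A1 := fun ω hω => hω.1
    exact fun h => (hpos1.ne' (measure_mono_null hsub h)).elim
  -- measure identities
  have hμeq : P[|{ω | S ω = false ∧ D ω = true}] = ν[|A0] := by
    rw [hν_def, cond_cond_eq_cond_inter hsTC hA0m, cond_congr_set P e_fd, Set.inter_comm]
  have hιeq : P[|{ω | S ω = true ∧ T ω = true ∧ C ω = true}] = ν[|A1] := by
    rw [hν_def, cond_cond_eq_cond_inter hsTC hA1m, e_t1]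
  have hSDeq : P[|{ω | S ω = true ∧ D ω = true}] = ν[|A1] := by
    rw [hν_def, cond_cond_eq_cond_inter hsTC hA1m, cond_congr_set P e_td, Set.inter_comm]
  have hνA0 : ν A0 ≠ 0 := by
    rw [hν_def, cond_apply hsTC, Set.inter_comm, ← measure_congr e_fd]
    exact mul_ne_zero (ENNReal.inv_ne_zero.mpr (measure_ne_top P sTC)) hpos0.ne'
  have hνA1 : ν A1 ≠ 0 := by
    rw [hν_def, cond_apply hsTC, ← e_t1]
    exact mul_ne_zero (ENNReal.inv_ne_zero.mpr (measure_ne_top P sTC)) hpos1.ne'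
  haveI : IsProbabilityMeasure (ν[|A0]) := cond_isProbabilityMeasure hνA0
  haveI : IsProbabilityMeasure (ν[|A1]) := cond_isProbabilityMeasure hνA1
  -- integrability
  have hY11ν : Integrable (Y true true) ν := integrable_cond_of_integrable P (hYint true true) sTC hPsTC
  have hY10ν : Integrable (Y true false) ν := integrable_cond_of_integrable P (hYint true false) sTC hPsTC
  -- conditional independence applications (Lemma B)
  have k1t : (ν[Y true true | MeasurableSpace.comap W inferInstance]) =ᵐ[ν[|A1]] (ν[|A1])[Y true true | MeasurableSpace.comap W inferInstance] :=
    condexp_cond_ae_eq_condexp hm ν (hYmeas true true) hS hA3 hY11ν true hνA1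
  have k1f : (ν[Y true true | MeasurableSpace.comap W inferInstance]) =ᵐ[ν[|A0]] (ν[|A0])[Y true true | MeasurableSpace.comap W inferInstance] :=
    condexp_cond_ae_eq_condexp hm ν (hYmeas true true) hS hA3 hY11ν false hνA0
  have k0t : (ν[Y true false | MeasurableSpace.comap W inferInstance]) =ᵐ[ν[|A1]] (ν[|A1])[Y true false | MeasurableSpace.comap W inferInstance] :=
    condexp_cond_ae_eq_condexp hm ν (hYmeas true false) hS hA4 hY10ν true hνA1
  have k0f : (ν[Y true false | MeasurableSpace.comap W inferInstance]) =ᵐ[ν[|A0]] (ν[|A0])[Y true false | MeasurableSpace.comap W inferInstance] :=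
    condexp_cond_ae_eq_condexp hm ν (hYmeas true false) hS hA4 hY10ν false hνA0
  -- measurable versions of ν[Y|m] as functions of W
  set h1 : 𝒲 → ℝ := fun w => ∫ y, y ∂(condDistrib (Y true true) W ν w) with h1_def
  set h0 : 𝒲 → ℝ := fun w => ∫ y, y ∂(condDistrib (Y true false) W ν w) with h0_def
  have h1meas : Measurable h1 := by
    have : StronglyMeasurable (fun w => ∫ y, (fun (_ : 𝒲) (y : ℝ) => y) w y
        ∂(condDistrib (Y true true) W ν w)) :=
      MeasureTheory.StronglyMeasurable.integral_kernel_prod_right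
        (measurable_snd.stronglyMeasurable)
    exact this.measurable
  have h0meas : Measurable h0 := by
    have : StronglyMeasurable (fun w => ∫ y, (fun (_ : 𝒲) (y : ℝ) => y) w y
        ∂(condDistrib (Y true false) W ν w)) :=
      MeasureTheory.StronglyMeasurable.integral_kernel_prod_right
        (measurable_snd.stronglyMeasurable)
    exact this.measurable
  have hνY1 : (ν[Y true true | MeasurableSpace.comap W inferInstance]) =ᵐ[ν] fun ω => h1 (W ω) :=
    condExp_ae_eq_integral_condDistrib' hW hY11ν
  have hνY0 : (ν[Y true false | MeasurableSpace.comap W inferInstance]) =ᵐ[ν] fun ω => h0 (W ω) :=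
    condExp_ae_eq_integral_condDistrib' hW hY10ν
  -- transfer of a.e. equalities to conditional measures
  have hacA0 : (ν[|A0]) ≪ ν := cond_absolutelyContinuous
  have hacA1 : (ν[|A1]) ≪ ν := cond_absolutelyContinuous
  -- ## Step: the g₁ version
  rw [hSDeq] at hg₁
  have hg1h1 : (fun ω => g₁ (W ω)) =ᵐ[ν[|A1]] fun ω => h1 (W ω) :=
    (hg₁.trans k1t.symm).trans (hνY1.filter_mono hacA1.ae_le)
  -- ## Step: the g₀ version, using randomization (R)
  set ρ : Measure Ω := P[|A1] with hρ_def
  have hρR : (P[|{ω | S ω = true}]) = ρ := rfl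
  set Bf : Set Ω := T ⁻¹' {false} ∩ C ⁻¹' {true} with hBf_def
  set Bt : Set Ω := T ⁻¹' {true} ∩ C ⁻¹' {true} with hBt_def
  have hBfm : MeasurableSet Bf :=
    (hT (measurableSet_singleton false)).inter (hC (measurableSet_singleton true))
  have hBtm : MeasurableSet Bt :=
    (hT (measurableSet_singleton true)).inter (hC (measurableSet_singleton true))
  have e_bf : ({ω | S ω = true ∧ T ω = false ∧ C ω = true} : Set Ω) = A1 ∩ Bf := by
    ext ω
    simp only [Set.mem_setOf_eq, Set.mem_inter_iff, hA1_def, hBf_def, Set.mem_preimage,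
      Set.mem_singleton_iff, and_assoc]
  have e_bt : ({ω | S ω = true ∧ T ω = true ∧ C ω = true} : Set Ω) = A1 ∩ Bt := by
    ext ω
    simp only [Set.mem_setOf_eq, Set.mem_inter_iff, hA1_def, hBt_def, Set.mem_preimage,
      Set.mem_singleton_iff, and_assoc]
  have hκρ : P[|{ω | S ω = true ∧ T ω = false ∧ C ω = true}] = ρ[|Bf] := by
    rw [hρ_def, cond_cond_eq_cond_inter hA1m hBfm, e_bf]
  have hιρ : ν[|A1] = ρ[|Bt] := by
    rw [hρ_def, cond_cond_eq_cond_inter hA1m hBtm, hν_def,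
      cond_cond_eq_cond_inter hsTC hA1m, Set.inter_comm, hsTC_eq]
  set κ : Measure Ω := ρ[|Bf] with hκ_def
  set ι : Measure Ω := ρ[|Bt] with hι_def2
  haveI : IsProbabilityMeasure ρ := cond_isProbabilityMeasure hPA1
  have hρBf : ρ Bf ≠ 0 := by
    rw [hρ_def, cond_apply hA1m, ← e_bf]
    exact mul_ne_zero (ENNReal.inv_ne_zero.mpr (measure_ne_top P A1)) hpos2.ne'
  have hρBt : ρ Bt ≠ 0 := by
    rw [hρ_def, cond_apply hA1m, ← e_bt]
    exact mul_ne_zero (ENNReal.inv_ne_zero.mpr (measure_ne_top P A1)) hpos1.ne'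
  have hρTf : ρ (T ⁻¹' {false}) ≠ 0 :=
    fun h => hρBf (measure_mono_null Set.inter_subset_left h)
  have hρTt : ρ (T ⁻¹' {true}) ≠ 0 :=
    fun h => hρBt (measure_mono_null Set.inter_subset_left h)
  set φ : Ω → 𝒲 × ℝ := fun ω => (W ω, Y true false ω) with hφ_def
  have hφmeas : Measurable φ := hW.prodMk (hYmeas true false)
  set ψ : Ω → 𝒲 × Bool × ℝ × ℝ := fun ω => (W ω, C ω, (Y true false ω, Y true true ω)) with hψ_def
  have hψmeas : Measurable ψ :=
    hW.prodMk (hC.prodMk ((hYmeas true false).prodMk (hYmeas true true)))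
  have hR' : IndepFun T ψ ρ := hR
  -- the joint law of (W, Y₁₀) is the same under κ and ι
  have hJ : κ.map φ = ι.map φ := by
    ext E hE
    rw [Measure.map_apply hφmeas hE, Measure.map_apply hφmeas hE]
    set E' : Set (𝒲 × Bool × ℝ × ℝ) := {p | p.2.1 = true ∧ (p.1, p.2.2.1) ∈ E} with hE'_def
    have hE'm : MeasurableSet E' := by
      refine MeasurableSet.inter ?_ ?_
      · exact (measurable_fst.comp measurable_snd) (measurableSet_singleton true)
      · exact (measurable_fst.prodMk (measurable_fst.comp (measurable_snd.comp measurable_snd))) hE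
    set Ec : Set (𝒲 × Bool × ℝ × ℝ) := {p | p.2.1 = true} with hEc_def
    have hEcm : MeasurableSet Ec :=
      (measurable_fst.comp measurable_snd) (measurableSet_singleton true)
    have key : ∀ b : Bool, ρ (T ⁻¹' {b}) ≠ 0 →
        (ρ[|T ⁻¹' {b} ∩ C ⁻¹' {true}]) (φ ⁻¹' E) = (ρ (ψ ⁻¹' Ec))⁻¹ * ρ (ψ ⁻¹' E') := by
      intro b hb
      have hBm : MeasurableSet (T ⁻¹' {b} ∩ C ⁻¹' {true}) :=
        (hT (measurableSet_singleton b)).inter (hC (measurableSet_singleton true))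
      rw [cond_apply hBm]
      have e1 : (T ⁻¹' {b} ∩ C ⁻¹' {true}) ∩ φ ⁻¹' E = T ⁻¹' {b} ∩ ψ ⁻¹' E' := by
        ext ω
        simp only [Set.mem_inter_iff, Set.mem_preimage, Set.mem_singleton_iff, hE'_def,
          Set.mem_setOf_eq, hφ_def, hψ_def]
        tauto
      have e2 : T ⁻¹' {b} ∩ C ⁻¹' {true} = T ⁻¹' {b} ∩ ψ ⁻¹' Ec := by
        ext ω
        simp only [Set.mem_inter_iff, Set.mem_preimage, Set.mem_singleton_iff, hEc_def,
          Set.mem_setOf_eq, hψ_def]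
      rw [e1, e2, hR'.measure_inter_preimage_eq_mul _ _ (measurableSet_singleton b) hE'm,
        hR'.measure_inter_preimage_eq_mul _ _ (measurableSet_singleton b) hEcm]
      rw [ENNReal.mul_inv (Or.inl hb) (Or.inl (measure_ne_top _ _))]
      calc (ρ (T ⁻¹' {b}))⁻¹ * (ρ (ψ ⁻¹' Ec))⁻¹ * (ρ (T ⁻¹' {b}) * ρ (ψ ⁻¹' E'))
          = (ρ (T ⁻¹' {b}))⁻¹ * ρ (T ⁻¹' {b}) * ((ρ (ψ ⁻¹' Ec))⁻¹ * ρ (ψ ⁻¹' E')) := by ring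
        _ = (ρ (ψ ⁻¹' Ec))⁻¹ * ρ (ψ ⁻¹' E') := by
            rw [ENNReal.inv_mul_cancel hb (measure_ne_top _ _), one_mul]
    rw [hκ_def, hι_def2, hBf_def, hBt_def, key false hρTf, key true hρTt]
  have hWmap : κ.map W = ι.map W := by
    have e1 : κ.map W = (κ.map φ).map Prod.fst := by
      rw [Measure.map_map measurable_fst hφmeas]
      rfl
    have e2 : ι.map W = (ι.map φ).map Prod.fst := by
      rw [Measure.map_map measurable_fst hφmeas]
      rfl
    rw [e1, e2, hJ]
  -- transfer hg₀ from κ to ι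
  rw [hκρ] at hg₀
  have hg0κint : Integrable (fun ω => g₀ (W ω)) κ := integrable_condExp.congr hg₀.symm
  have hg0fst : Measurable (fun p : 𝒲 × ℝ => g₀ p.1) := hg₀m.comp measurable_fst
  have hg0map : Integrable (fun p : 𝒲 × ℝ => g₀ p.1) (κ.map φ) := by
    rw [integrable_map_measure hg0fst.aestronglyMeasurable hφmeas.aemeasurable]
    exact hg0κint
  have hg0ιint : Integrable (fun ω => g₀ (W ω)) ι := by
    rw [hJ] at hg0map
    have := (integrable_map_measure hg0fst.aestronglyMeasurable hφmeas.aemeasurable).mp hg0map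
    exact this
  have hY10κ : Integrable (Y true false) κ := by
    rw [hκ_def, hρ_def, cond_cond_eq_cond_inter hA1m hBfm]
    refine integrable_cond_of_integrable P (hYint true false) _ ?_
    intro h
    apply hρBf
    rw [hρ_def, cond_apply hA1m, h, mul_zero]
  have hY10ι : Integrable (Y true false) ι := by
    rw [← hιρ]
    exact integrable_cond_of_integrable ν hY10ν A1 hνA1
  have hg₀ι : (fun ω => g₀ (W ω)) =ᵐ[ι] ι[Y true false | MeasurableSpace.comap W inferInstance] := by
    refine ae_eq_condExp_of_forall_setIntegral_eq hm hY10ι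
      (fun s hs _ => hg0ιint.integrableOn) (fun B hBm _ => ?_) ?_
    · obtain ⟨B', hB', rfl⟩ := hBm
      have hBmeas : MeasurableSet (W ⁻¹' B') := hW hB'
      set F : 𝒲 × ℝ → ℝ := fun p => B'.indicator g₀ p.1 with hF_def
      set G : 𝒲 × ℝ → ℝ := fun p => B'.indicator (fun _ => (1:ℝ)) p.1 * p.2 with hG_def
      have hFm : StronglyMeasurable F := ((hg₀m.indicator hB').comp measurable_fst).stronglyMeasurable
      have hGm : StronglyMeasurable G :=
        (((measurable_const.indicator hB').comp measurable_fst).mul measurable_snd).stronglyMeasurable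
      have hFφ : (fun ω => F (φ ω)) = (W ⁻¹' B').indicator (fun ω => g₀ (W ω)) := by
        funext ω
        by_cases hω : W ω ∈ B' <;> simp [hF_def, hφ_def, Set.indicator_apply, hω]
      have hGφ : (fun ω => G (φ ω)) = (W ⁻¹' B').indicator (Y true false) := by
        funext ω
        by_cases hω : W ω ∈ B' <;> simp [hG_def, hφ_def, Set.indicator_apply, hω]
      have stepF : ∫ ω in W ⁻¹' B', g₀ (W ω) ∂ι = ∫ ω in W ⁻¹' B', g₀ (W ω) ∂κ := by
        rw [← integral_indicator hBmeas, ← integral_indicator hBmeas, ← hFφ,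
          ← integral_map hφmeas.aemeasurable hFm.aestronglyMeasurable,
          ← integral_map hφmeas.aemeasurable hFm.aestronglyMeasurable, hJ]
      have stepG : ∫ ω in W ⁻¹' B', Y true false ω ∂κ = ∫ ω in W ⁻¹' B', Y true false ω ∂ι := by
        rw [← integral_indicator hBmeas, ← integral_indicator hBmeas, ← hGφ,
          ← integral_map hφmeas.aemeasurable hGm.aestronglyMeasurable,
          ← integral_map hφmeas.aemeasurable hGm.aestronglyMeasurable, hJ]
      have stepmid : ∫ ω in W ⁻¹' B', g₀ (W ω) ∂κ = ∫ ω in W ⁻¹' B', Y true false ω ∂κ := by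
        rw [setIntegral_congr_ae hBmeas (hg₀.mono fun x hx _ => hx)]
        exact setIntegral_condExp hm hY10κ ⟨B', hB', rfl⟩
      rw [stepF, stepmid, stepG]
    · exact ((hg₀m.comp (comap_measurable W)).stronglyMeasurable).aestronglyMeasurable
  have hg0h0 : (fun ω => g₀ (W ω)) =ᵐ[ν[|A1]] fun ω => h0 (W ω) := by
    have : ι = ν[|A1] := hιρ.symm
    rw [this] at hg₀ι
    exact (hg₀ι.trans k0t.symm).trans (hνY0.filter_mono hacA1.ae_le)
  -- transfer the versions to the target measure via absolute continuity of W-laws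
  rw [hμeq, hιeq] at hac1
  have hg1μ : (fun ω => g₁ (W ω)) =ᵐ[ν[|A0]] fun ω => h1 (W ω) := by
    have hN : MeasurableSet {w | ¬ g₁ w = h1 w} := (measurableSet_eq_fun hg₁m h1meas).compl
    have hnull : (ν[|A1]).map W {w | ¬ g₁ w = h1 w} = 0 := by
      rw [Measure.map_apply hW hN]
      exact ae_iff.mp hg1h1
    have := hac1 hnull
    rw [Measure.map_apply hW hN] at this
    exact ae_iff.mpr this
  have hg0μ : (fun ω => g₀ (W ω)) =ᵐ[ν[|A0]] fun ω => h0 (W ω) := by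
    rw [hμeq, hκρ] at hac0
    have hacι : (ν[|A0]).map W ≪ (ν[|A1]).map W := by
      rw [hιρ, ← hWmap]
      exact hac0
    have hN : MeasurableSet {w | ¬ g₀ w = h0 w} := (measurableSet_eq_fun hg₀m h0meas).compl
    have hnull : (ν[|A1]).map W {w | ¬ g₀ w = h0 w} = 0 := by
      rw [Measure.map_apply hW hN]
      exact ae_iff.mp hg0h0
    have := hacι hnull
    rw [Measure.map_apply hW hN] at this
    exact ae_iff.mpr this
  -- integrability over the target measure
  have hY11μ : Integrable (Y true true) (ν[|A0]) := integrable_cond_of_integrable ν hY11ν A0 hνA0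
  have hY10μ : Integrable (Y true false) (ν[|A0]) := integrable_cond_of_integrable ν hY10ν A0 hνA0
  have hh1int : Integrable (fun ω => h1 (W ω)) (ν[|A0]) :=
    integrable_cond_of_integrable ν (integrable_condExp.congr hνY1) A0 hνA0
  have hh0int : Integrable (fun ω => h0 (W ω)) (ν[|A0]) :=
    integrable_cond_of_integrable ν (integrable_condExp.congr hνY0) A0 hνA0
  have hg1int : Integrable (fun ω => g₁ (W ω)) (ν[|A0]) := hh1int.congr hg1μ.symm
  have hg0int : Integrable (fun ω => g₀ (W ω)) (ν[|A0]) := hh0int.congr hg0μ.symm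
  -- the two key integral identities
  have hI1 : ∫ ω, Y true true ω ∂(ν[|A0]) = ∫ ω, g₁ (W ω) ∂(ν[|A0]) := by
    rw [← integral_condExp hm (f := Y true true) (μ := ν[|A0])]
    rw [integral_congr_ae k1f.symm, integral_congr_ae (hνY1.filter_mono hacA0.ae_le),
      integral_congr_ae hg1μ.symm]
  have hI0 : ∫ ω, Y true false ω ∂(ν[|A0]) = ∫ ω, g₀ (W ω) ∂(ν[|A0]) := by
    rw [← integral_condExp hm (f := Y true false) (μ := ν[|A0])]
    rw [integral_congr_ae k0f.symm, integral_congr_ae (hνY0.filter_mono hacA0.ae_le),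
      integral_congr_ae hg0μ.symm]
  -- conclusion
  rw [hμeq]
  have hacP : (ν[|A0]) ≪ P := hacA0.trans cond_absolutelyContinuous
  have hcons : (fun ω => Y false true ω - Y false false ω) =ᵐ[ν[|A0]]
      fun ω => Y true true ω - Y true false ω := by
    filter_upwards [(hA1 true).filter_mono hacP.ae_le, (hA1 false).filter_mono hacP.ae_le]
      with ω h1' h0'
    rw [h1', h0']
  rw [integral_congr_ae hcons, integral_sub hY11μ hY10μ, hI1, hI0,
    ← integral_sub hg1int hg0int]
end

section
/- Under assumptions (A1), (A3) and (A6), suppose P(S=0, D=1) > 0 and P(S=1, T=1, C=1) > 0, and suppose the law of W under P(·|{S=0, D=1}) is absolutely continuous with respect to its law under P(·|{S=1, T=1, C=1}). Let g₁ : 𝒲 → ℝ be a version of E[Y₍11₎ | {S=1, D=1}, W]. Then E[Y₍01₎ | S=0, D=1] = E[g₁(W) | S=0, D=1]. -/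
open MeasureTheory ProbabilityTheory Set
open scoped ENNReal NNReal

set_option maxHeartbeats 1000000

private lemma indicator_one_mul_eq {α : Type*} {B : Set α} (φ : α → ℝ) :
    (fun ω => φ ω * B.indicator (fun _ => (1:ℝ)) ω) = B.indicator φ := by
  ext ω; by_cases h : ω ∈ B <;> simp [h]

section Aux

variable {Ω : Type*} {m : MeasurableSpace Ω} [mΩ : MeasurableSpace Ω]
  [StandardBorelSpace Ω] {μ : Measure Ω} [IsProbabilityMeasure μ]

/-- Pull-out: for `m`-measurable `φ`, `∫_{s∩B} φ = ∫_s φ · μ⟦B|m⟧`. -/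
private lemma aux_pullout (hm : m ≤ mΩ) {B : Set Ω} (hB : MeasurableSet B) {φ : Ω → ℝ}
    (hφm : StronglyMeasurable[m] φ) (hφ : Integrable φ μ) {s : Set Ω}
    (hs : MeasurableSet[m] s) :
    ∫ ω in s ∩ B, φ ω ∂μ =
      ∫ ω in s, φ ω * (μ[B.indicator (fun _ => (1:ℝ)) | m]) ω ∂μ := by
  have hind_int : Integrable (B.indicator (fun _ => (1:ℝ))) μ :=
    (integrable_const (1:ℝ)).indicator hB
  have hmul_int : Integrable (fun ω => φ ω * B.indicator (fun _ => (1:ℝ)) ω) μ := by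
    rw [indicator_one_mul_eq]; exact hφ.indicator hB
  have hpull := condExp_mul_of_stronglyMeasurable_left (m := m) (μ := μ) hφm hmul_int hind_int
  calc ∫ ω in s ∩ B, φ ω ∂μ = ∫ ω in s, B.indicator φ ω ∂μ := (setIntegral_indicator hB).symm
    _ = ∫ ω in s, (fun ω => φ ω * B.indicator (fun _ => (1:ℝ)) ω) ω ∂μ := by
        rw [indicator_one_mul_eq]
    _ = ∫ ω in s, (μ[fun ω => φ ω * B.indicator (fun _ => (1:ℝ)) ω | m]) ω ∂μ :=
        (setIntegral_condExp hm hmul_int hs).symm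
    _ = ∫ ω in s, φ ω * (μ[B.indicator (fun _ => (1:ℝ)) | m]) ω ∂μ := by
        refine integral_congr_ae (ae_restrict_of_ae (hpull.mono fun ω hω => ?_))
        exact hω

/-- Key lemma: conditional independence of `f` and `g` given `m` gives
`∫_{s∩{g=b}} f = ∫_s f · μ⟦{g=b}|m⟧` for `s ∈ m`. -/
private lemma aux_indep (hm : m ≤ mΩ) {f : Ω → ℝ} {g : Ω → Bool}
    (hfM : Measurable f) (hgM : Measurable g) (hf : Integrable f μ)
    (hind : CondIndepFun m hm f g μ) (b : Bool) {s : Set Ω} (hs : MeasurableSet[m] s) :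
    ∫ ω in s ∩ g ⁻¹' {b}, f ω ∂μ =
      ∫ ω in s, f ω * (μ[(g ⁻¹' {b}).indicator (fun _ => (1:ℝ)) | m]) ω ∂μ := by
  set B : Set Ω := g ⁻¹' {b} with hBdef
  have hB : MeasurableSet B := hgM (measurableSet_singleton b)
  set p : Ω → ℝ := μ[B.indicator (fun _ => (1:ℝ)) | m] with hpdef
  have hp_sm : StronglyMeasurable[m] p := stronglyMeasurable_condExp
  have hp_meas : Measurable p := (hp_sm.mono hm).measurable
  have hp_nonneg : 0 ≤ᵐ[μ] p :=
    condExp_nonneg (Filter.Eventually.of_forall fun ω =>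
      Set.indicator_nonneg (fun _ _ => zero_le_one) ω)
  have hindic_int : ∀ (u : Set Ω), MeasurableSet u →
      Integrable (u.indicator (fun _ => (1:ℝ))) μ :=
    fun u hu => (integrable_const (1:ℝ)).indicator hu
  -- the key measure identity
  have key : ∀ t : Set ℝ, MeasurableSet t →
      μ (f ⁻¹' t ∩ (s ∩ B)) = ∫⁻ ω in f ⁻¹' t ∩ s, ENNReal.ofReal (p ω) ∂μ := by
    intro t ht
    have htB : MeasurableSet (f ⁻¹' t ∩ B) := (hfM ht).inter hB
    have hprod := (condIndepFun_iff m hm f g hfM hgM μ).mp hind (f ⁻¹' t) B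
        ⟨t, ht, rfl⟩ ⟨{b}, measurableSet_singleton b, rfl⟩
    have hmul_int : Integrable (fun ω => (f ⁻¹' t).indicator (fun _ => (1:ℝ)) ω * p ω) μ :=
      integrable_condExp.bdd_mul (c := 1) (hindic_int _ (hfM ht)).aestronglyMeasurable
        (Filter.Eventually.of_forall fun ω => by by_cases h : ω ∈ f ⁻¹' t <;> simp [h])
    have hmul_int' : Integrable (p * (f ⁻¹' t).indicator (fun _ => (1:ℝ))) μ := by
      have heq : (p * (f ⁻¹' t).indicator (fun _ => (1:ℝ)))
          = fun ω => (f ⁻¹' t).indicator (fun _ => (1:ℝ)) ω * p ω := by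
        ext ω; exact mul_comm _ _
      rw [heq]; exact hmul_int
    have hpull := condExp_mul_of_stronglyMeasurable_left (m := m) (μ := μ) hp_sm hmul_int'
      (hindic_int _ (hfM ht))
    have hreal : (μ (f ⁻¹' t ∩ (s ∩ B))).toReal = ∫ ω in s ∩ f ⁻¹' t, p ω ∂μ := by
      calc (μ (f ⁻¹' t ∩ (s ∩ B))).toReal
          = (μ (s ∩ (f ⁻¹' t ∩ B))).toReal := by rw [Set.inter_left_comm]
        _ = ∫ ω in s, ((f ⁻¹' t ∩ B).indicator (fun _ => (1:ℝ))) ω ∂μ := by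
            rw [setIntegral_indicator htB, setIntegral_const, smul_eq_mul, mul_one]
            rfl
        _ = ∫ ω in s, (μ[(f ⁻¹' t ∩ B).indicator (fun _ => (1:ℝ)) | m]) ω ∂μ :=
            (setIntegral_condExp hm (hindic_int _ htB) hs).symm
        _ = ∫ ω in s, (μ[(f ⁻¹' t).indicator (fun _ => (1:ℝ)) | m]) ω * p ω ∂μ := by
            refine integral_congr_ae (ae_restrict_of_ae (hprod.mono fun ω hω => ?_))
            simpa using hω
        _ = ∫ ω in s, (p * μ[(f ⁻¹' t).indicator (fun _ => (1:ℝ)) | m]) ω ∂μ := by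
            refine integral_congr_ae (Filter.Eventually.of_forall fun ω => ?_)
            simp [mul_comm]
        _ = ∫ ω in s, (μ[p * (f ⁻¹' t).indicator (fun _ => (1:ℝ)) | m]) ω ∂μ :=
            (integral_congr_ae (ae_restrict_of_ae hpull)).symm
        _ = ∫ ω in s, (p * (f ⁻¹' t).indicator (fun _ => (1:ℝ))) ω ∂μ :=
            setIntegral_condExp hm hmul_int' hs
        _ = ∫ ω in s, ((f ⁻¹' t).indicator p) ω ∂μ := by
            refine integral_congr_ae (Filter.Eventually.of_forall fun ω => ?_)
            by_cases h : ω ∈ f ⁻¹' t <;> simp [h]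
        _ = ∫ ω in s ∩ f ⁻¹' t, p ω ∂μ := setIntegral_indicator (hfM ht)
    calc μ (f ⁻¹' t ∩ (s ∩ B))
        = ENNReal.ofReal ((μ (f ⁻¹' t ∩ (s ∩ B))).toReal) :=
          (ENNReal.ofReal_toReal (measure_ne_top μ _)).symm
      _ = ENNReal.ofReal (∫ ω in s ∩ f ⁻¹' t, p ω ∂μ) := by rw [hreal]
      _ = ∫⁻ ω in s ∩ f ⁻¹' t, ENNReal.ofReal (p ω) ∂μ :=
          ofReal_integral_eq_lintegral_ofReal integrable_condExp.integrableOn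
            (ae_restrict_of_ae hp_nonneg)
      _ = ∫⁻ ω in f ⁻¹' t ∩ s, ENNReal.ofReal (p ω) ∂μ := by rw [Set.inter_comm]
  -- equality of pushforward measures
  have hmeq : (μ.restrict (s ∩ B)).map f
      = ((μ.restrict s).withDensity (fun ω => ENNReal.ofReal (p ω))).map f := by
    ext t ht
    rw [Measure.map_apply hfM ht, Measure.map_apply hfM ht,
      Measure.restrict_apply (hfM ht), withDensity_apply _ (hfM ht),
      Measure.restrict_restrict (hfM ht)]
    exact key t ht
  -- conclude via the pushforward measures
  calc ∫ ω in s ∩ B, f ω ∂μ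
      = ∫ x, x ∂((μ.restrict (s ∩ B)).map f) := by
        exact (integral_map hfM.aemeasurable aestronglyMeasurable_id).symm
    _ = ∫ x, x ∂(((μ.restrict s).withDensity (fun ω => ENNReal.ofReal (p ω))).map f) := by
        rw [hmeq]
    _ = ∫ ω, f ω ∂((μ.restrict s).withDensity (fun ω => ENNReal.ofReal (p ω))) := by
        exact integral_map hfM.aemeasurable aestronglyMeasurable_id
    _ = ∫ ω in s, (p ω).toNNReal • f ω ∂μ := by
        have hd : (fun ω => ENNReal.ofReal (p ω)) = fun ω => ((p ω).toNNReal : ℝ≥0∞) := rfl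
        rw [hd, integral_withDensity_eq_integral_smul hp_meas.real_toNNReal f]
    _ = ∫ ω in s, f ω * p ω ∂μ := by
        refine integral_congr_ae ?_
        filter_upwards [ae_restrict_of_ae hp_nonneg] with ω hω
        simp [NNReal.smul_def, Real.coe_toNNReal _ hω, mul_comm]

/-- Conditional independence implies that `μ[f|m]` is a version of the conditional
expectation of `f` given `m` under the conditional measure `μ[|{g = b}]`. -/
private lemma aux_cond (hm : m ≤ mΩ) {f : Ω → ℝ} {g : Ω → Bool}
    (hfM : Measurable f) (hgM : Measurable g) (hf : Integrable f μ)
    (hind : CondIndepFun m hm f g μ) (b : Bool) (hb : μ (g ⁻¹' {b}) ≠ 0) :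
    (μ[f | m]) =ᵐ[μ[|g ⁻¹' {b}]] ((μ[|g ⁻¹' {b}])[f | m]) := by
  set B : Set Ω := g ⁻¹' {b} with hBdef
  have hB : MeasurableSet B := hgM (measurableSet_singleton b)
  have hBinv : (μ B)⁻¹ ≠ ⊤ := ENNReal.inv_ne_top.mpr hb
  haveI : IsProbabilityMeasure (μ[|B]) := cond_isProbabilityMeasure hb
  have hint_cond : ∀ {ψ : Ω → ℝ}, Integrable ψ μ → Integrable ψ (μ[|B]) := by
    intro ψ hψ
    rw [ProbabilityTheory.cond]
    exact (hψ.restrict).smul_measure hBinv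
  set p : Ω → ℝ := μ[B.indicator (fun _ => (1:ℝ)) | m] with hpdef
  have hp_sm : StronglyMeasurable[m] p := stronglyMeasurable_condExp
  have hind_int : Integrable (B.indicator (fun _ => (1:ℝ))) μ :=
    (integrable_const (1:ℝ)).indicator hB
  have hp_nonneg : 0 ≤ᵐ[μ] p :=
    condExp_nonneg (Filter.Eventually.of_forall fun ω =>
      Set.indicator_nonneg (fun _ _ => zero_le_one) ω)
  have hp_le_one : p ≤ᵐ[μ] fun _ => (1:ℝ) := by
    have h1 : p ≤ᵐ[μ] μ[(fun _ => (1:ℝ)) | m] :=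
      condExp_mono hind_int (integrable_const (1:ℝ))
        (Filter.Eventually.of_forall fun ω => by by_cases h : ω ∈ B <;> simp [h])
    calc p ≤ᵐ[μ] μ[(fun _ => (1:ℝ)) | m] := h1
      _ =ᵐ[μ] fun _ => (1:ℝ) := by rw [condExp_const hm (1:ℝ)]
  have hp01 : ∀ᵐ ω ∂μ, ‖p ω‖ ≤ 1 := by
    filter_upwards [hp_nonneg, hp_le_one] with ω h0 h1
    rw [Real.norm_eq_abs, abs_le]
    have h0' : (0:ℝ) ≤ p ω := h0
    have h1' : p ω ≤ 1 := h1
    exact ⟨by linarith, h1'⟩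
  have hfp_int : Integrable (p * f) μ :=
    Integrable.bdd_mul (c := 1) hf (hp_sm.mono hm).aestronglyMeasurable hp01
  have hpull := condExp_mul_of_stronglyMeasurable_left (m := m) (μ := μ) hp_sm hfp_int hf
  refine ae_eq_condExp_of_forall_setIntegral_eq hm (hint_cond hf)
    (fun u hu _ => (hint_cond integrable_condExp).integrableOn)
    (fun u hu _ => ?_) stronglyMeasurable_condExp.aestronglyMeasurable
  -- goal : ∫ x in u, (μ[f|m]) x ∂μ[|B] = ∫ x in u, f x ∂μ[|B]
  have expand : ∀ (ψ : Ω → ℝ),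
      ∫ x in u, ψ x ∂(μ[|B]) = ((μ B)⁻¹).toReal • ∫ x in u ∩ B, ψ x ∂μ := by
    intro ψ
    rw [ProbabilityTheory.cond, Measure.restrict_smul, integral_smul_measure,
      Measure.restrict_restrict (hm u hu)]
  rw [expand, expand]
  congr 1
  rw [aux_pullout hm hB stronglyMeasurable_condExp integrable_condExp hu,
    aux_indep hm hfM hgM hf hind b hu]
  calc ∫ ω in u, (μ[f|m]) ω * p ω ∂μ
      = ∫ ω in u, (p * μ[f|m]) ω ∂μ := by
        refine integral_congr_ae (Filter.Eventually.of_forall fun ω => ?_)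
        simp [mul_comm]
    _ = ∫ ω in u, (μ[p * f|m]) ω ∂μ :=
        (integral_congr_ae (ae_restrict_of_ae hpull)).symm
    _ = ∫ ω in u, (p * f) ω ∂μ := setIntegral_condExp hm hfp_int hu
    _ = ∫ ω in u, f ω * p ω ∂μ := by
        refine integral_congr_ae (Filter.Eventually.of_forall fun ω => ?_)
        simp [mul_comm]

/-- Conditioning on a.e.-equal sets gives the same conditional measure. -/
private lemma cond_congr_ae' {P : Measure Ω} {s t : Set Ω} (h : s =ᵐ[P] t) :
    P[|s] = P[|t] := by
  rw [ProbabilityTheory.cond, ProbabilityTheory.cond, measure_congr h,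
    Measure.restrict_congr_set h]

private lemma integrable_cond {P : Measure Ω} {f : Ω → ℝ} (hf : Integrable f P)
    {s : Set Ω} (hs : P s ≠ 0) : Integrable f (P[|s]) := by
  rw [ProbabilityTheory.cond]
  exact (hf.restrict).smul_measure (ENNReal.inv_ne_top.mpr hs)

end Aux

/-- Under consistency (A1), strong ignorability of sample assignment for treated (A3) and
one-sided noncompliance (A6), the mean treated potential outcome of treated population members
is identified from the RCT: `E[Y₀₁ | S=0, D=1] = E[g₁(W) | S=0, D=1]` where `g₁` is a version
of `E[Y₁₁ | S=1, D=1, W]`. -/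
theorem pattc_first_term_identification
    {Ω 𝒲 : Type*} [MeasurableSpace Ω] [StandardBorelSpace Ω]
    [MeasurableSpace 𝒲] [StandardBorelSpace 𝒲]
    (P : Measure Ω) [IsProbabilityMeasure P]
    (S T C D : Ω → Bool) (hS : Measurable S) (hT : Measurable T)
    (hC : Measurable C) (hD : Measurable D)
    (W : Ω → 𝒲) (hW : Measurable W)
    (Y : Bool → Bool → Ω → ℝ)
    (hYmeas : ∀ s d, Measurable (Y s d)) (hYint : ∀ s d, Integrable (Y s d) P)
    -- (A1) consistency under parallel studies
    (hA1 : ∀ d, Y false d =ᵐ[P] Y true d)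
    -- (A3) strong ignorability of sample assignment for treated
    (hA3 : CondIndepFun (MeasurableSpace.comap W inferInstance) hW.comap_le (Y true true) S
      (P[|{ω | T ω = true ∧ C ω = true}]))
    (hA3pos : ∀ᵐ ω ∂(P[|{ω | T ω = true ∧ C ω = true}]),
      0 < ((P[|{ω | T ω = true ∧ C ω = true}])[({ω | S ω = true}).indicator
            (fun _ => (1 : ℝ)) | MeasurableSpace.comap W inferInstance]) ω ∧
      ((P[|{ω | T ω = true ∧ C ω = true}])[({ω | S ω = true}).indicator
            (fun _ => (1 : ℝ)) | MeasurableSpace.comap W inferInstance]) ω < 1)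
    -- (A6) one-sided noncompliance: {D=1} = {T=1} ∩ {C=1} up to null sets
    (hA6 : ({ω | D ω = true} : Set Ω) =ᵐ[P] ({ω | T ω = true} ∩ {ω | C ω = true} : Set Ω))
    -- positivity of the conditioning events
    (hpos0 : 0 < P {ω | S ω = false ∧ D ω = true})
    (hpos1 : 0 < P {ω | S ω = true ∧ T ω = true ∧ C ω = true})
    -- absolute continuity of the covariate laws
    (hac1 : (P[|{ω | S ω = false ∧ D ω = true}]).map W ≪
      (P[|{ω | S ω = true ∧ T ω = true ∧ C ω = true}]).map W)
    -- g₁ : version of E[Y₁₁ | S=1, D=1, W]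
    (g₁ : 𝒲 → ℝ) (hg₁m : Measurable g₁)
    (hg₁ : (fun ω => g₁ (W ω)) =ᵐ[P[|{ω | S ω = true ∧ D ω = true}]]
      (P[|{ω | S ω = true ∧ D ω = true}])[Y true true | MeasurableSpace.comap W inferInstance]) :
    ∫ ω, Y false true ω ∂(P[|{ω | S ω = false ∧ D ω = true}]) =
      ∫ ω, g₁ (W ω) ∂(P[|{ω | S ω = false ∧ D ω = true}]) := by
  classical
  have hm : MeasurableSpace.comap W inferInstance ≤ ‹MeasurableSpace Ω› := hW.comap_le
  set A : Set Ω := {ω | T ω = true ∧ C ω = true} with hAdef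
  have hAeq : A = T ⁻¹' {true} ∩ C ⁻¹' {true} := by ext ω; simp [hAdef]
  have hA : MeasurableSet A := by
    rw [hAeq]
    exact (hT (measurableSet_singleton true)).inter (hC (measurableSet_singleton true))
  set Bt : Set Ω := S ⁻¹' {true} with hBtdef
  set Bf : Set Ω := S ⁻¹' {false} with hBfdef
  have hBt : MeasurableSet Bt := hS (measurableSet_singleton true)
  have hBf : MeasurableSet Bf := hS (measurableSet_singleton false)
  -- set identities
  have hset1 : {ω | S ω = true ∧ T ω = true ∧ C ω = true} = A ∩ Bt := by
    ext ω; simp only [hAdef, hBtdef, Set.mem_setOf_eq, Set.mem_inter_iff, Set.mem_preimage,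
      Set.mem_singleton_iff]; tauto
  have hinter1 : (Bt : Set Ω) ∩ ({ω | T ω = true} ∩ {ω | C ω = true}) = A ∩ Bt := by
    ext ω; simp only [hAdef, hBtdef, Set.mem_setOf_eq, Set.mem_inter_iff, Set.mem_preimage,
      Set.mem_singleton_iff]; tauto
  have hinter0 : (Bf : Set Ω) ∩ ({ω | T ω = true} ∩ {ω | C ω = true}) = A ∩ Bf := by
    ext ω; simp only [hAdef, hBfdef, Set.mem_setOf_eq, Set.mem_inter_iff, Set.mem_preimage,
      Set.mem_singleton_iff]; tauto
  have hsetE1 : {ω | S ω = true ∧ D ω = true} =ᵐ[P] (A ∩ Bt : Set Ω) := by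
    have h1 : {ω | S ω = true ∧ D ω = true} = Bt ∩ {ω | D ω = true} := by
      ext ω; simp [hBtdef]
    rw [h1, ← hinter1]
    exact (Filter.EventuallyEq.refl _ _).inter hA6
  have hsetE0 : {ω | S ω = false ∧ D ω = true} =ᵐ[P] (A ∩ Bf : Set Ω) := by
    have h1 : {ω | S ω = false ∧ D ω = true} = Bf ∩ {ω | D ω = true} := by
      ext ω; simp [hBfdef]
    rw [h1, ← hinter0]
    exact (Filter.EventuallyEq.refl _ _).inter hA6
  set Q : Measure Ω := P[|A] with hQdef
  -- conditional measure identifications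
  have hQ1 : P[|{ω | S ω = true ∧ D ω = true}] = Q[|Bt] := by
    rw [cond_congr_ae' hsetE1, hQdef, cond_cond_eq_cond_inter hA hBt]
  have hQ0 : P[|{ω | S ω = false ∧ D ω = true}] = Q[|Bf] := by
    rw [cond_congr_ae' hsetE0, hQdef, cond_cond_eq_cond_inter hA hBf]
  have hQ1' : P[|{ω | S ω = true ∧ T ω = true ∧ C ω = true}] = Q[|Bt] := by
    rw [hset1, hQdef, cond_cond_eq_cond_inter hA hBt]
  -- positivity
  have hPA : P A ≠ 0 := by
    refine fun h => absurd hpos1 (not_lt.mpr ?_)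
    rw [hset1]
    exact le_trans (measure_mono Set.inter_subset_left) h.le
  haveI hQprob : IsProbabilityMeasure Q := cond_isProbabilityMeasure hPA
  have hQBt : Q Bt ≠ 0 := by
    rw [hQdef, cond_apply hA]
    refine mul_ne_zero (ENNReal.inv_ne_zero.mpr (measure_ne_top P A)) ?_
    rw [← hset1]
    exact hpos1.ne'
  have hQBf : Q Bf ≠ 0 := by
    rw [hQdef, cond_apply hA]
    refine mul_ne_zero (ENNReal.inv_ne_zero.mpr (measure_ne_top P A)) ?_
    rw [← measure_congr hsetE0]
    exact hpos0.ne'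
  haveI : IsProbabilityMeasure (Q[|Bt]) := cond_isProbabilityMeasure hQBt
  haveI : IsProbabilityMeasure (Q[|Bf]) := cond_isProbabilityMeasure hQBf
  -- integrability
  have hfQ : Integrable (Y true true) Q := integrable_cond (hYint true true) hPA
  -- conditional independence consequences
  have hx1 := aux_cond hm (hYmeas true true) hS hfQ hA3 true hQBt
  have hx0 := aux_cond hm (hYmeas true true) hS hfQ hA3 false hQBf
  rw [hQ1] at hg₁
  have hgh : (fun ω => g₁ (W ω)) =ᵐ[Q[|Bt]]
      (Q[Y true true | MeasurableSpace.comap W inferInstance]) := hg₁.trans hx1.symm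
  -- transfer the a.e. equality along absolute continuity of the covariate laws
  set h : Ω → ℝ := Q[Y true true | MeasurableSpace.comap W inferInstance] with hhdef
  have hgWm : Measurable[MeasurableSpace.comap W inferInstance] fun ω => g₁ (W ω) :=
    hg₁m.comp (Measurable.of_comap_le le_rfl)
  have hhm : Measurable[MeasurableSpace.comap W inferInstance] h :=
    stronglyMeasurable_condExp.measurable
  have hNm : MeasurableSet[MeasurableSpace.comap W inferInstance]
      {ω | g₁ (W ω) = h ω}ᶜ :=
    (measurableSet_eq_fun hgWm hhm).compl
  obtain ⟨N', hN', hNexact⟩ := hNm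
  have hnull1 : (Q[|Bt]).map W N' = 0 := by
    rw [Measure.map_apply hW hN', hNexact]
    exact ae_iff.mp hgh
  have hac : (Q[|Bf]).map W ≪ (Q[|Bt]).map W := by
    rw [← hQ0, ← hQ1']; exact hac1
  have hnull0 : (Q[|Bf]) (W ⁻¹' N') = 0 := by
    rw [← Measure.map_apply hW hN']
    exact hac hnull1
  have hgh0 : (fun ω => g₁ (W ω)) =ᵐ[Q[|Bf]] h := by
    refine ae_iff.mpr ?_
    have hss : {ω | ¬ g₁ (W ω) = h ω} = W ⁻¹' N' := by
      rw [hNexact]; rfl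
    rw [hss]
    exact hnull0
  -- conclude
  rw [hQ0]
  have hacP : Q[|Bf] ≪ P :=
    (cond_absolutelyContinuous (s := Bf)).trans (cond_absolutelyContinuous (s := A))
  have hY01 : Y false true =ᵐ[Q[|Bf]] Y true true := hacP.ae_eq (hA1 true)
  calc ∫ ω, Y false true ω ∂(Q[|Bf])
      = ∫ ω, Y true true ω ∂(Q[|Bf]) := integral_congr_ae hY01
    _ = ∫ ω, ((Q[|Bf])[Y true true | MeasurableSpace.comap W inferInstance]) ω ∂(Q[|Bf]) :=
        (integral_condExp hm).symm
    _ = ∫ ω, h ω ∂(Q[|Bf]) := integral_congr_ae hx0.symm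
    _ = ∫ ω, g₁ (W ω) ∂(Q[|Bf]) := integral_congr_ae hgh0.symm
end

section
/- Under assumptions (A1), (A2), (A4), (A6) and (R), suppose P(S=0, D=1) > 0 and P(S=1, T=0, C=1) > 0, and suppose the law of W under P(·|{S=0, D=1}) is absolutely continuous with respect to its law under P(·|{S=1, T=0, C=1}). Let g₀ : 𝒲 → ℝ be a version of E[Y₍10₎ | {S=1, T=0, C=1}, W]. Then E[Y₍00₎ | S=0, D=1] = E[g₀(W) | S=0, D=1]; that is, the mean control potential outcome of treated population members is identified from the RCT controls who would have complied had they been assigned to treatment. -/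
open MeasureTheory ProbabilityTheory Set Filter
open scoped ENNReal Topology

namespace PATTCAux

section Basic
variable {Ω : Type*} {mΩ : MeasurableSpace Ω}

lemma cond_congr_ae (P : Measure Ω) {s t : Set Ω} (h : s =ᵐ[P] t) : P[|s] = P[|t] := by
  unfold ProbabilityTheory.cond
  rw [measure_congr h, Measure.restrict_congr_set h]

lemma integral_cond (P : Measure Ω) (s : Set Ω) (f : Ω → ℝ) :
    ∫ ω, f ω ∂(P[|s]) = (P s)⁻¹.toReal * ∫ ω in s, f ω ∂P := by
  rw [ProbabilityTheory.cond, integral_smul_measure, smul_eq_mul]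

lemma setIntegral_cond (P : Measure Ω) (s : Set Ω) {t : Set Ω} (ht : MeasurableSet t)
    (f : Ω → ℝ) :
    ∫ ω in t, f ω ∂(P[|s]) = (P s)⁻¹.toReal * ∫ ω in t ∩ s, f ω ∂P := by
  rw [ProbabilityTheory.cond, Measure.restrict_smul, integral_smul_measure, smul_eq_mul,
    Measure.restrict_restrict ht]

lemma integrable_cond {P : Measure Ω} {s : Set Ω} (hs : P s ≠ 0) {f : Ω → ℝ}
    (hf : Integrable f P) : Integrable f (P[|s]) := by
  rw [ProbabilityTheory.cond]
  exact hf.restrict.smul_measure (by simp [hs])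

lemma indicator_eq_indicator_one_mul (A : Set Ω) (f : Ω → ℝ) (ω : Ω) :
    A.indicator f ω = A.indicator (fun _ => (1:ℝ)) ω * f ω := by
  by_cases h : ω ∈ A <;> simp [h]
end Basic

section Main
variable {Ω : Type*} {m : MeasurableSpace Ω} [mΩ : MeasurableSpace Ω]

set_option maxHeartbeats 1000000 in
set_option synthInstance.maxHeartbeats 400000 in
lemma condexp_indicator_mul (hm : m ≤ mΩ) (Q : Measure Ω) [IsProbabilityMeasure Q]
    {Y : Ω → ℝ} (hY : Measurable Y) (hYint : Integrable Y Q)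
    {A : Set Ω} (hA : MeasurableSet A)
    (hprod : ∀ E : Set ℝ, MeasurableSet E →
      (Q[((Y ⁻¹' E) ∩ A).indicator (fun _ => (1:ℝ)) | m]) =ᵐ[Q]
        fun ω => (Q[(Y ⁻¹' E).indicator (fun _ => (1:ℝ)) | m]) ω *
          (Q[A.indicator (fun _ => (1:ℝ)) | m]) ω) :
    Q[A.indicator Y | m] =ᵐ[Q]
      fun ω => (Q[A.indicator (fun _ => (1:ℝ)) | m]) ω * (Q[Y | m]) ω := by
  haveI : SigmaFinite (Q.trim hm) := inferInstance
  set J := Q[A.indicator (fun _ => (1:ℝ)) | m] with hJdef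
  have hIndInt : Integrable (A.indicator (fun _ => (1:ℝ))) Q :=
    (integrable_const (1:ℝ)).indicator hA
  have hJ0 : 0 ≤ᵐ[Q] J := condExp_nonneg (Filter.Eventually.of_forall (Set.indicator_nonneg (fun _ _ => zero_le_one)))
  have hJ1 : J ≤ᵐ[Q] fun _ => (1:ℝ) := by
    have h := condExp_mono (μ := Q) (m := m) hIndInt (integrable_const (1:ℝ))
      (Filter.Eventually.of_forall (fun ω => Set.indicator_le_self' (fun _ _ => zero_le_one) ω))
    rw [condExp_const hm (1:ℝ)] at h
    exact h
  have hJbdd : ∀ᵐ ω ∂Q, ‖J ω‖ ≤ 1 := by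
    filter_upwards [hJ0, hJ1] with ω h0 h1
    rw [Real.norm_eq_abs, abs_of_nonneg h0]; exact h1
  set ν := Q.map Y with hν
  haveI : IsProbabilityMeasure ν := Measure.isProbabilityMeasure_map hY.aemeasurable
  have main : ∀ ⦃φ : ℝ → ℝ⦄, Integrable φ ν →
      (Q[A.indicator (fun ω => φ (Y ω)) | m] =ᵐ[Q]
        fun ω => J ω * (Q[fun ω => φ (Y ω) | m]) ω) := by
    refine Integrable.induction (μ := ν)
      (P := fun φ => Q[A.indicator (fun ω => φ (Y ω)) | m] =ᵐ[Q]
        fun ω => J ω * (Q[fun ω => φ (Y ω) | m]) ω) ?_ ?_ ?_ ?_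
    · -- indicator case
      intro c E hE _
      have e1 : (fun ω => (E.indicator fun _ => c) (Y ω))
          = fun ω => c * (Y ⁻¹' E).indicator (fun _ => (1:ℝ)) ω := by
        funext ω; by_cases h : Y ω ∈ E <;> simp [h]
      have e2 : A.indicator (fun ω => (E.indicator fun _ => c) (Y ω))
          = fun ω => c * ((Y ⁻¹' E) ∩ A).indicator (fun _ => (1:ℝ)) ω := by
        funext ω
        by_cases ha : ω ∈ A <;> by_cases h : Y ω ∈ E <;>
          simp [Set.indicator_apply, ha, h]
      have h1 : Q[fun ω => c * ((Y ⁻¹' E) ∩ A).indicator (fun _ => (1:ℝ)) ω | m] =ᵐ[Q]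
          fun ω => c * (Q[((Y ⁻¹' E) ∩ A).indicator (fun _ => (1:ℝ)) | m]) ω := by
        simpa [Pi.smul_def, smul_eq_mul] using
          condExp_smul (μ := Q) (m := m) c (((Y ⁻¹' E) ∩ A).indicator (fun _ => (1:ℝ)))
      have h2 : Q[fun ω => c * (Y ⁻¹' E).indicator (fun _ => (1:ℝ)) ω | m] =ᵐ[Q]
          fun ω => c * (Q[(Y ⁻¹' E).indicator (fun _ => (1:ℝ)) | m]) ω := by
        simpa [Pi.smul_def, smul_eq_mul] using
          condExp_smul (μ := Q) (m := m) c ((Y ⁻¹' E).indicator (fun _ => (1:ℝ)))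
      rw [e2, e1]
      refine h1.trans ?_
      filter_upwards [hprod E hE, h2] with ω hp h2ω
      rw [hp, h2ω]; ring
    · -- additivity
      intro f g _ hfi hgi hPf hPg
      have hfY : Integrable (fun ω => f (Y ω)) Q :=
        (integrable_map_measure hfi.1 hY.aemeasurable).mp hfi
      have hgY : Integrable (fun ω => g (Y ω)) Q :=
        (integrable_map_measure hgi.1 hY.aemeasurable).mp hgi
      have key : A.indicator (fun ω => (f + g) (Y ω))
          = A.indicator (fun ω => f (Y ω)) + A.indicator (fun ω => g (Y ω)) := by
        funext ω; by_cases h : ω ∈ A <;> simp [h]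
      have keyc : (fun ω => (f + g) (Y ω))
          = (fun ω => f (Y ω)) + fun ω => g (Y ω) := rfl
      rw [key, keyc]
      refine (condExp_add (hfY.indicator hA) (hgY.indicator hA) m).trans ?_
      have hsum := condExp_add (μ := Q) (m := m) hfY hgY
      filter_upwards [hPf, hPg, hsum] with ω h1 h2 h3
      simp only [Pi.add_apply] at *
      rw [h1, h2, h3]; ring
    · -- closedness
      refine IsSeqClosed.isClosed ?_
      intro F Flim hFn hlim
      set flim : Ω → ℝ := fun ω => (Flim : ℝ → ℝ) (Y ω) with hflim
      have hintn : ∀ n, Integrable (fun ω => (F n : ℝ → ℝ) (Y ω)) Q := fun n =>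
        (integrable_map_measure (Lp.aestronglyMeasurable (F n)) hY.aemeasurable).mp
          (L1.integrable_coeFn (F n))
      have hintlim : Integrable flim Q :=
        (integrable_map_measure (Lp.aestronglyMeasurable Flim) hY.aemeasurable).mp
          (L1.integrable_coeFn Flim)
      -- convergence of eLpNorms
      have hconv : Tendsto (fun n =>
          eLpNorm (fun ω => (F n : ℝ → ℝ) (Y ω) - flim ω) 1 Q) atTop (𝓝 0) := by
        have h1 : ∀ n, eLpNorm (fun ω => (F n : ℝ → ℝ) (Y ω) - flim ω) 1 Q
            = ENNReal.ofReal ‖F n - Flim‖ := by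
          intro n
          have hg : AEStronglyMeasurable ((F n : ℝ → ℝ) - (Flim : ℝ → ℝ)) ν :=
            (Lp.aestronglyMeasurable (F n)).sub (Lp.aestronglyMeasurable Flim)
          have hmap := eLpNorm_map_measure (p := 1) (f := Y) (μ := Q) hg hY.aemeasurable
          have : eLpNorm (((F n : ℝ → ℝ) - (Flim : ℝ → ℝ)) ∘ Y) 1 Q
              = eLpNorm (fun ω => (F n : ℝ → ℝ) (Y ω) - flim ω) 1 Q := rfl
          rw [this] at hmap
          rw [← hmap, eLpNorm_congr_ae (Lp.coeFn_sub (F n) Flim).symm, Lp.norm_def,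
            ENNReal.ofReal_toReal (Lp.eLpNorm_ne_top _)]
        simp only [h1]
        have h2 : Tendsto (fun n => ‖F n - Flim‖) atTop (𝓝 0) :=
          tendsto_iff_norm_sub_tendsto_zero.mp hlim
        have := (ENNReal.continuous_ofReal.tendsto 0).comp h2
        simpa [Function.comp_def] using this
      -- per-n bound
      have measa : AEStronglyMeasurable (Q[A.indicator flim | m]) Q :=
        (stronglyMeasurable_condExp.mono hm).aestronglyMeasurable
      have measb : AEStronglyMeasurable (fun ω => J ω * (Q[flim | m]) ω) Q :=
        ((stronglyMeasurable_condExp.mono hm).aestronglyMeasurable).mul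
          ((stronglyMeasurable_condExp.mono hm).aestronglyMeasurable)
      have bound : ∀ n,
          eLpNorm (fun ω => (Q[A.indicator flim | m]) ω - J ω * (Q[flim | m]) ω) 1 Q
            ≤ 2 * eLpNorm (fun ω => (F n : ℝ → ℝ) (Y ω) - flim ω) 1 Q := by
        intro n
        set fn : Ω → ℝ := fun ω => (F n : ℝ → ℝ) (Y ω) with hfn
        have hd1 : eLpNorm (fun ω => (Q[A.indicator flim | m]) ω - (Q[A.indicator fn | m]) ω) 1 Q
            ≤ eLpNorm (fun ω => fn ω - flim ω) 1 Q := by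
          have hsub := condExp_sub (μ := Q) (m := m) (hintlim.indicator hA) ((hintn n).indicator hA)
          have e : (fun ω => (Q[A.indicator flim | m]) ω - (Q[A.indicator fn | m]) ω)
              =ᵐ[Q] Q[A.indicator flim - A.indicator fn | m] := by
            filter_upwards [hsub] with ω h; simpa using h.symm
          rw [eLpNorm_congr_ae e]
          refine (eLpNorm_one_condExp_le_eLpNorm _).trans ?_
          refine eLpNorm_mono_ae (Filter.Eventually.of_forall fun ω => ?_)
          simp only [Pi.sub_apply]
          by_cases h : ω ∈ A
          · simp [Set.indicator_apply, h, Real.norm_eq_abs, abs_sub_comm]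
          · simp [Set.indicator_apply, h, Real.norm_eq_abs]
        have hd2 : eLpNorm (fun ω => J ω * (Q[fn | m]) ω - J ω * (Q[flim | m]) ω) 1 Q
            ≤ eLpNorm (fun ω => fn ω - flim ω) 1 Q := by
          have step1 : eLpNorm (fun ω => J ω * (Q[fn | m]) ω - J ω * (Q[flim | m]) ω) 1 Q
              ≤ eLpNorm (fun ω => (Q[fn | m]) ω - (Q[flim | m]) ω) 1 Q := by
            refine eLpNorm_mono_ae ?_
            filter_upwards [hJbdd] with ω hJω
            rw [← mul_sub, Real.norm_eq_abs, abs_mul]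
            calc |J ω| * |(Q[fn | m]) ω - (Q[flim | m]) ω|
                ≤ 1 * |(Q[fn | m]) ω - (Q[flim | m]) ω| := by
                  apply mul_le_mul_of_nonneg_right _ (abs_nonneg _)
                  simpa [Real.norm_eq_abs] using hJω
              _ = ‖(Q[fn | m]) ω - (Q[flim | m]) ω‖ := by simp [Real.norm_eq_abs]
          refine step1.trans ?_
          have hsub := condExp_sub (μ := Q) (m := m) (hintn n) hintlim
          have e : (fun ω => (Q[fn | m]) ω - (Q[flim | m]) ω) =ᵐ[Q] Q[fn - flim | m] := by
            filter_upwards [hsub] with ω h; simpa using h.symm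
          rw [eLpNorm_congr_ae e]
          exact (eLpNorm_one_condExp_le_eLpNorm _).trans (le_of_eq rfl)
        have hae : (fun ω => (Q[A.indicator flim | m]) ω - J ω * (Q[flim | m]) ω)
            =ᵐ[Q] fun ω => ((Q[A.indicator flim | m]) ω - (Q[A.indicator fn | m]) ω)
              + (J ω * (Q[fn | m]) ω - J ω * (Q[flim | m]) ω) := by
          filter_upwards [hFn n] with ω h
          rw [show (Q[A.indicator fn | m]) ω = J ω * (Q[fn | m]) ω from h]
          ring
        rw [eLpNorm_congr_ae hae]
        have m1 : AEStronglyMeasurable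
            (fun ω => (Q[A.indicator flim | m]) ω - (Q[A.indicator fn | m]) ω) Q :=
          measa.sub (stronglyMeasurable_condExp.mono hm).aestronglyMeasurable
        have m2 : AEStronglyMeasurable
            (fun ω => J ω * (Q[fn | m]) ω - J ω * (Q[flim | m]) ω) Q := by
          refine AEStronglyMeasurable.sub ?_ ?_ <;>
            exact ((stronglyMeasurable_condExp.mono hm).aestronglyMeasurable).mul
              ((stronglyMeasurable_condExp.mono hm).aestronglyMeasurable)
        refine (eLpNorm_add_le m1 m2 le_rfl).trans ?_
        rw [two_mul]
        exact add_le_add hd1 hd2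
      -- conclude
      have hzero : eLpNorm (fun ω => (Q[A.indicator flim | m]) ω - J ω * (Q[flim | m]) ω) 1 Q = 0 := by
        have htend : Tendsto (fun n => 2 * eLpNorm (fun ω => (F n : ℝ → ℝ) (Y ω) - flim ω) 1 Q)
            atTop (𝓝 0) := by
          have := ENNReal.Tendsto.const_mul hconv (Or.inr (by norm_num : (2:ℝ≥0∞) ≠ ⊤))
          simpa using this
        have hle := ge_of_tendsto htend (Filter.Eventually.of_forall bound)
        exact le_antisymm hle (by simp)
      have := (eLpNorm_eq_zero_iff (measa.sub measb) one_ne_zero).mp hzero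
      filter_upwards [this] with ω h
      have h' : (Q[A.indicator flim | m]) ω - J ω * (Q[flim | m]) ω = 0 := h
      linarith [h']
    · -- a.e. congruence
      intro f g hfg hfi hPf
      have hYae : (fun ω => f (Y ω)) =ᵐ[Q] fun ω => g (Y ω) :=
        ae_of_ae_map hY.aemeasurable hfg
      have hind : A.indicator (fun ω => f (Y ω)) =ᵐ[Q] A.indicator (fun ω => g (Y ω)) := by
        filter_upwards [hYae] with ω h
        by_cases hA' : ω ∈ A <;> simp [Set.indicator_apply, hA', h]
      refine ((condExp_congr_ae hind).symm.trans hPf).trans ?_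
      filter_upwards [condExp_congr_ae hYae] with ω h
      rw [h]
  have hid : Integrable (id : ℝ → ℝ) ν :=
    (integrable_map_measure aestronglyMeasurable_id hY.aemeasurable).mpr hYint
  have := main hid
  simpa using this
end Main

section Factor
variable {Ω 𝒲 : Type*} [mΩ : MeasurableSpace Ω] [m𝒲 : MeasurableSpace 𝒲]

lemma exists_condexp_factor (Q : Measure Ω) [IsProbabilityMeasure Q]
    {W : Ω → 𝒲} (hW : Measurable W)
    {Y : Ω → ℝ} (hY : Measurable Y) (hYint : Integrable Y Q) :
    ∃ h : 𝒲 → ℝ, Measurable h ∧ Integrable (fun ω => h (W ω)) Q ∧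
      (fun ω => h (W ω)) =ᵐ[Q] Q[Y | MeasurableSpace.comap W m𝒲] := by
  have hm : MeasurableSpace.comap W m𝒲 ≤ mΩ := hW.comap_le
  haveI : SigmaFinite (Q.trim hm) := inferInstance
  set μW := Q.map W with hμW
  haveI : IsProbabilityMeasure μW := Measure.isProbabilityMeasure_map hW.aemeasurable
  have hfin : ∀ g : Ω → ℝ, Integrable g Q → ∫⁻ ω, ENNReal.ofReal (g ω) ∂Q ≠ ∞ := by
    intro g hg
    refine ne_of_lt (lt_of_le_of_lt ?_ hg.2)
    refine lintegral_mono fun ω => ?_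
    rw [← ofReal_norm_eq_enorm, Real.norm_eq_abs]
    exact ENNReal.ofReal_le_ofReal (le_abs_self _)
  set ρp := (Q.withDensity (fun ω => ENNReal.ofReal (Y ω))).map W with hρp
  set ρm := (Q.withDensity (fun ω => ENNReal.ofReal (- Y ω))).map W with hρm
  haveI : IsFiniteMeasure (Q.withDensity (fun ω => ENNReal.ofReal (Y ω))) :=
    isFiniteMeasure_withDensity (hfin Y hYint)
  haveI : IsFiniteMeasure (Q.withDensity (fun ω => ENNReal.ofReal (- Y ω))) :=
    isFiniteMeasure_withDensity (hfin _ hYint.neg)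
  haveI : IsFiniteMeasure ρp := by rw [hρp]; infer_instance
  haveI : IsFiniteMeasure ρm := by rw [hρm]; infer_instance
  have hap : ∀ (g : Ω → ℝ), (B : Set 𝒲) → MeasurableSet B →
      ((Q.withDensity (fun ω => ENNReal.ofReal (g ω))).map W) B
        = ∫⁻ ω in W ⁻¹' B, ENNReal.ofReal (g ω) ∂Q := by
    intro g B hB
    rw [Measure.map_apply hW hB, withDensity_apply _ (hW hB)]
  have hacp : ρp ≪ μW := by
    refine Measure.AbsolutelyContinuous.mk fun B hB h0 => ?_
    rw [hμW, Measure.map_apply hW hB] at h0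
    rw [hρp, hap Y B hB, setLIntegral_measure_zero _ _ h0]
  have hacm : ρm ≪ μW := by
    refine Measure.AbsolutelyContinuous.mk fun B hB h0 => ?_
    rw [hμW, Measure.map_apply hW hB] at h0
    rw [hρm, hap _ B hB, setLIntegral_measure_zero _ _ h0]
  set h : 𝒲 → ℝ := fun w => (ρp.rnDeriv μW w).toReal - (ρm.rnDeriv μW w).toReal with hh_def
  have hhm : Measurable h :=
    (Measure.measurable_rnDeriv ρp μW).ennreal_toReal.sub
      (Measure.measurable_rnDeriv ρm μW).ennreal_toReal
  have hint_h : Integrable h μW :=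
    (Measure.integrable_toReal_rnDeriv (μ := ρp) (ν := μW)).sub
      (Measure.integrable_toReal_rnDeriv (μ := ρm) (ν := μW))
  have hint_hW : Integrable (fun ω => h (W ω)) Q := by
    have := (integrable_map_measure hhm.aestronglyMeasurable hW.aemeasurable).mp
      (by rw [← hμW] at *; exact hint_h)
    exact this
  have hseteq : ∀ B : Set 𝒲, MeasurableSet B →
      ∫ ω in W ⁻¹' B, h (W ω) ∂Q = ∫ ω in W ⁻¹' B, Y ω ∂Q := by
    intro B hB
    have e1 : ∫ ω in W ⁻¹' B, h (W ω) ∂Q = ∫ w in B, h w ∂μW :=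
      (setIntegral_map hB hhm.aestronglyMeasurable hW.aemeasurable).symm
    have e2 : ∫ w in B, h w ∂μW = (ρp B).toReal - (ρm B).toReal := by
      rw [hh_def]
      rw [integral_sub (Measure.integrable_toReal_rnDeriv.integrableOn)
        (Measure.integrable_toReal_rnDeriv.integrableOn),
        Measure.setIntegral_toReal_rnDeriv hacp B, Measure.setIntegral_toReal_rnDeriv hacm B]
      rfl
    have e3 : ∫ ω in W ⁻¹' B, Y ω ∂Q = (ρp B).toReal - (ρm B).toReal := by
      rw [hρp, hρm, hap Y B hB, hap _ B hB]
      have := integral_eq_lintegral_pos_part_sub_lintegral_neg_part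
        (hYint.restrict (s := W ⁻¹' B))
      simpa using this
    rw [e1, e2, e3]
  have hae : (fun ω => h (W ω)) =ᵐ[Q] Q[Y | MeasurableSpace.comap W m𝒲] := by
    refine ae_eq_condExp_of_forall_setIntegral_eq hm hYint ?_ ?_ ?_
    · rintro s ⟨B, hB, rfl⟩ _
      exact hint_hW.integrableOn
    · rintro s ⟨B, hB, rfl⟩ _
      exact hseteq B hB
    · exact ⟨fun ω => h (W ω), (hhm.comp (measurable_iff_comap_le.mpr le_rfl)).stronglyMeasurable,
        ae_eq_refl _⟩
  exact ⟨h, hhm, hint_hW, hae⟩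
variable {Ω 𝒲 : Type*} [mΩ : MeasurableSpace Ω] [m𝒲 : MeasurableSpace 𝒲]

-- assume the product rule (from cond. indep.) and a factored version h of E[Y|W];
-- conclude the set-integral identity on W-cylinders against the indicator of A.
lemma star (Q : Measure Ω) [IsProbabilityMeasure Q]
    {W : Ω → 𝒲} (hW : Measurable W)
    {Y : Ω → ℝ} (hY : Measurable Y) (hYint : Integrable Y Q)
    {A : Set Ω} (hA : MeasurableSet A)
    (hprod : ∀ E : Set ℝ, MeasurableSet E →
      (Q[((Y ⁻¹' E) ∩ A).indicator (fun _ => (1:ℝ)) | MeasurableSpace.comap W m𝒲]) =ᵐ[Q]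
        fun ω => (Q[(Y ⁻¹' E).indicator (fun _ => (1:ℝ)) | MeasurableSpace.comap W m𝒲]) ω *
          (Q[A.indicator (fun _ => (1:ℝ)) | MeasurableSpace.comap W m𝒲]) ω)
    {h : 𝒲 → ℝ} (hhm : Measurable h)
    (hh : (fun ω => h (W ω)) =ᵐ[Q] Q[Y | MeasurableSpace.comap W m𝒲])
    {B : Set 𝒲} (hB : MeasurableSet B) :
    ∫ ω in W ⁻¹' B, A.indicator Y ω ∂Q
      = ∫ ω in W ⁻¹' B, A.indicator (fun ω => h (W ω)) ω ∂Q := by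
  have hm : MeasurableSpace.comap W m𝒲 ≤ mΩ := hW.comap_le
  haveI : SigmaFinite (Q.trim hm) := inferInstance
  have hintAY : Integrable (A.indicator Y) Q := hYint.indicator hA
  have hinthW : Integrable (fun ω => h (W ω)) Q := integrable_condExp.congr hh.symm
  have hintAh : Integrable (A.indicator fun ω => h (W ω)) Q := hinthW.indicator hA
  have hmB : MeasurableSet[MeasurableSpace.comap W m𝒲] (W ⁻¹' B) := ⟨B, hB, rfl⟩
  have L6 := PATTCAux.condexp_indicator_mul hm Q hY hYint hA hprod
  have hmul_eq : A.indicator (fun ω => h (W ω))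
      = (fun ω => h (W ω)) * A.indicator (fun _ => (1:ℝ)) := by
    funext ω; by_cases hω : ω ∈ A <;> simp [Set.indicator_apply, hω]
  have hfg_int : Integrable ((fun ω => h (W ω)) * A.indicator (fun _ => (1:ℝ))) Q := by
    rw [← hmul_eq]; exact hintAh
  have pullout : Q[A.indicator (fun ω => h (W ω)) | MeasurableSpace.comap W m𝒲] =ᵐ[Q]
      fun ω => h (W ω) * (Q[A.indicator (fun _ => (1:ℝ)) | MeasurableSpace.comap W m𝒲]) ω := by
    rw [hmul_eq]
    exact condExp_mul_of_stronglyMeasurable_left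
      ((hhm.comp (measurable_iff_comap_le.mpr le_rfl)).stronglyMeasurable)
      hfg_int ((integrable_const (1:ℝ)).indicator hA)
  have key : Q[A.indicator Y | MeasurableSpace.comap W m𝒲] =ᵐ[Q]
      Q[A.indicator (fun ω => h (W ω)) | MeasurableSpace.comap W m𝒲] := by
    refine L6.trans (EventuallyEq.trans ?_ pullout.symm)
    filter_upwards [hh] with ω hω
    rw [← hω]; ring
  rw [← setIntegral_condExp hm hintAY hmB, ← setIntegral_condExp hm hintAh hmB]
  exact integral_congr_ae (ae_restrict_of_ae key)
end Factor

lemma enn_cancel {a b x : ℝ≥0∞} (ha0 : a ≠ 0) (ha : a ≠ ∞) : (a * b)⁻¹ * (a * x) = b⁻¹ * x := by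
  rw [ENNReal.mul_inv (Or.inl ha0) (Or.inl ha), mul_mul_mul_comm,
    ENNReal.inv_mul_cancel ha0 ha, one_mul]


end PATTCAux


/-- Under consistency (A1), conditional independence of compliance and sample/treatment
assignment (A2), strong ignorability of sample assignment for controls (A4), one-sided
noncompliance (A6) and RCT randomization (R), the mean control potential outcome of treated
population members is identified from the RCT controls who would have complied had they been
assigned to treatment: `E[Y₀₀ | S=0, D=1] = E[g₀(W) | S=0, D=1]` where `g₀` is a version of
`E[Y₁₀ | S=1, T=0, C=1, W]`. -/
theorem pattc_second_term_identification
    {Ω 𝒲 : Type*} [MeasurableSpace Ω] [StandardBorelSpace Ω]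
    [MeasurableSpace 𝒲] [StandardBorelSpace 𝒲]
    (P : Measure Ω) [IsProbabilityMeasure P]
    (S T C D : Ω → Bool) (hS : Measurable S) (hT : Measurable T)
    (hC : Measurable C) (hD : Measurable D)
    (W : Ω → 𝒲) (hW : Measurable W)
    (Y : Bool → Bool → Ω → ℝ)
    (hYmeas : ∀ s d, Measurable (Y s d)) (hYint : ∀ s d, Integrable (Y s d) P)
    -- (A1) consistency under parallel studies
    (hA1 : ∀ d, Y false d =ᵐ[P] Y true d)
    -- (A2) conditional independence of compliance and sample/treatment assignment given W
    (hA2 : CondIndepFun (MeasurableSpace.comap W inferInstance) hW.comap_le C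
      (fun ω => (S ω, T ω)) P)
    -- (A4) strong ignorability of sample assignment for controls
    (hA4 : CondIndepFun (MeasurableSpace.comap W inferInstance) hW.comap_le (Y true false) S
      (P[|{ω | T ω = true ∧ C ω = true}]))
    (hA4pos : ∀ᵐ ω ∂(P[|{ω | T ω = true ∧ C ω = true}]),
      0 < ((P[|{ω | T ω = true ∧ C ω = true}])[({ω | S ω = true}).indicator
            (fun _ => (1 : ℝ)) | MeasurableSpace.comap W inferInstance]) ω ∧
      ((P[|{ω | T ω = true ∧ C ω = true}])[({ω | S ω = true}).indicator
            (fun _ => (1 : ℝ)) | MeasurableSpace.comap W inferInstance]) ω < 1)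
    -- (A6) one-sided noncompliance: {D=1} = {T=1} ∩ {C=1} up to null sets
    (hA6 : ({ω | D ω = true} : Set Ω) =ᵐ[P] ({ω | T ω = true} ∩ {ω | C ω = true} : Set Ω))
    -- (R) randomization in the RCT
    (hR : IndepFun T (fun ω => (W ω, C ω, (Y true false ω, Y true true ω)))
      (P[|{ω | S ω = true}]))
    -- positivity of the conditioning events
    (hpos0 : 0 < P {ω | S ω = false ∧ D ω = true})
    (hpos2 : 0 < P {ω | S ω = true ∧ T ω = false ∧ C ω = true})
    -- absolute continuity of the covariate laws
    (hac0 : (P[|{ω | S ω = false ∧ D ω = true}]).map W ≪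
      (P[|{ω | S ω = true ∧ T ω = false ∧ C ω = true}]).map W)
    -- g₀ : version of E[Y₁₀ | S=1, T=0, C=1, W]
    (g₀ : 𝒲 → ℝ) (hg₀m : Measurable g₀)
    (hg₀ : (fun ω => g₀ (W ω)) =ᵐ[P[|{ω | S ω = true ∧ T ω = false ∧ C ω = true}]]
      (P[|{ω | S ω = true ∧ T ω = false ∧ C ω = true}])[Y true false |
        MeasurableSpace.comap W inferInstance]) :
    ∫ ω, Y false false ω ∂(P[|{ω | S ω = false ∧ D ω = true}]) =
      ∫ ω, g₀ (W ω) ∂(P[|{ω | S ω = false ∧ D ω = true}]) := by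
  classical
  have hY : Measurable (Y true false) := hYmeas true false
  set Ec : Set Ω := {ω | T ω = true ∧ C ω = true} with hEc_def
  set Q : Measure Ω := P[|Ec] with hQ_def
  set S₁ : Set Ω := {ω | S ω = true} with hS1_def
  set S₀ : Set Ω := {ω | S ω = false} with hS0_def
  set Aset : Set Ω := {ω | S ω = false ∧ D ω = true} with hAset_def
  set E₀ : Set Ω := {ω | S ω = true ∧ T ω = false ∧ C ω = true} with hE0_def
  set E₁ : Set Ω := {ω | S ω = true ∧ T ω = true ∧ C ω = true} with hE1_def
  have hm : MeasurableSpace.comap W inferInstance ≤ (inferInstance : MeasurableSpace Ω) :=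
    hW.comap_le
  -- measurability of the sets
  have hmEc : MeasurableSet Ec := by
    have he : Ec = T ⁻¹' {true} ∩ C ⁻¹' {true} := by ext ω; simp [hEc_def]
    rw [he]; exact (hT (measurableSet_singleton _)).inter (hC (measurableSet_singleton _))
  have hmS1 : MeasurableSet S₁ := by
    have he : S₁ = S ⁻¹' {true} := by ext ω; simp [hS1_def]
    rw [he]; exact hS (measurableSet_singleton _)
  have hmS0 : MeasurableSet S₀ := by
    have he : S₀ = S ⁻¹' {false} := by ext ω; simp [hS0_def]
    rw [he]; exact hS (measurableSet_singleton _)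
  have hmA : MeasurableSet Aset := by
    have he : Aset = S ⁻¹' {false} ∩ D ⁻¹' {true} := by ext ω; simp [hAset_def]
    rw [he]; exact (hS (measurableSet_singleton _)).inter (hD (measurableSet_singleton _))
  -- positivity of Ec
  have hPA0 : P Aset ≠ 0 := hpos0.ne'
  have hinterEc : ({ω | T ω = true} ∩ {ω | C ω = true} : Set Ω) = Ec := by
    ext ω; simp [hEc_def]
  have hA6'' : ({ω | D ω = true} : Set Ω) =ᵐ[P] Ec := hinterEc ▸ hA6
  have hPEc0 : P Ec ≠ 0 := by
    intro h0
    apply hPA0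
    have h1 : P {ω | D ω = true} = 0 := by rw [measure_congr hA6'', h0]
    exact measure_mono_null (fun ω hω => hω.2) h1
  haveI hQprob : IsProbabilityMeasure Q := by
    rw [hQ_def]; exact cond_isProbabilityMeasure hPEc0
  -- Aset ~ S₀ ∩ Ec
  have hA6' : Aset =ᵐ[P] ((S₀ ∩ Ec : Set Ω)) := by
    have h1 : Aset = S₀ ∩ {ω | D ω = true} := by ext ω; simp [hAset_def, hS0_def]
    rw [h1]
    exact ae_eq_set_inter (ae_eq_refl _) hA6''
  have hPAQ : P[|Aset] = Q[|S₀] := by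
    rw [hQ_def, cond_cond_eq_cond_inter' hmEc hmS0 (measure_ne_top P Ec), Set.inter_comm]
    exact PATTCAux.cond_congr_ae P hA6'
  -- Q S₁ ≠ 0
  haveI : SigmaFinite (Q.trim hm) := inferInstance
  have hQS1 : Q S₁ ≠ 0 := by
    intro h0
    have hint : Integrable (Q[S₁.indicator (fun _ => (1:ℝ)) |
        MeasurableSpace.comap W inferInstance]) Q := integrable_condExp
    have hnn : 0 ≤ᵐ[Q] (Q[S₁.indicator (fun _ => (1:ℝ)) |
        MeasurableSpace.comap W inferInstance]) := by
      filter_upwards [hA4pos] with ω hω; exact le_of_lt hω.1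
    have hzero : ∫ ω, (Q[S₁.indicator (fun _ => (1:ℝ)) |
        MeasurableSpace.comap W inferInstance]) ω ∂Q = 0 := by
      rw [integral_condExp hm, integral_indicator hmS1, setIntegral_const]
      simp [h0, Measure.real]
    have hae0 := (integral_eq_zero_iff_of_nonneg_ae hnn hint).mp hzero
    have hfalse : ∀ᵐ ω ∂Q, False := by
      filter_upwards [hA4pos, hae0] with ω h1 h2
      have : (0:ℝ) < 0 := by
        have := h1.1
        rw [h2] at this
        simpa using this
      exact lt_irrefl _ this
    rw [ae_iff] at hfalse
    simp [measure_univ] at hfalse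
  -- Q S₀ ≠ 0
  have hPS0Ec : P (S₀ ∩ Ec) ≠ 0 := by
    rw [← measure_congr hA6']; exact hPA0
  have hQS0 : Q S₀ ≠ 0 := by
    rw [hQ_def, cond_apply hmEc]
    refine mul_ne_zero (ENNReal.inv_ne_zero.mpr (measure_ne_top P Ec)) ?_
    rw [Set.inter_comm]; exact hPS0Ec
  -- positivity in the RCT
  have hPE0 : P E₀ ≠ 0 := hpos2.ne'
  have hPS1 : P S₁ ≠ 0 := by
    intro h0
    exact hPE0 (measure_mono_null (fun ω hω => hω.1) h0)
  set P₁ : Measure Ω := P[|S₁] with hP1_def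
  haveI : IsProbabilityMeasure P₁ := by rw [hP1_def]; exact cond_isProbabilityMeasure hPS1
  have hSint : ∀ F : Set Ω, P (S₁ ∩ F) = P S₁ * P₁ F := by
    intro F
    rw [hP1_def, cond_apply hmS1, ← mul_assoc,
      ENNReal.mul_inv_cancel hPS1 (measure_ne_top P S₁), one_mul]
  -- the independence machinery
  set V : Ω → 𝒲 × (Bool × (ℝ × ℝ)) :=
    fun ω => (W ω, C ω, (Y true false ω, Y true true ω)) with hV_def
  have hVmeas : Measurable V :=
    hW.prodMk (hC.prodMk ((hYmeas true false).prodMk (hYmeas true true)))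
  set Z : Ω → 𝒲 × ℝ := fun ω => (W ω, Y true false ω) with hZ_def
  have hZmeas : Measurable Z := hW.prodMk (hYmeas true false)
  set Ct : Set (𝒲 × (Bool × (ℝ × ℝ))) := {v | v.2.1 = true} with hCt_def
  have hmCt : MeasurableSet Ct := by
    have he : Ct = (fun v : 𝒲 × (Bool × (ℝ × ℝ)) => v.2.1) ⁻¹' {true} := by
      ext v; simp [hCt_def]
    rw [he]; exact (measurable_fst.comp measurable_snd) (measurableSet_singleton _)
  set π : 𝒲 × (Bool × (ℝ × ℝ)) → 𝒲 × ℝ := fun v => (v.1, v.2.2.1) with hπ_def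
  have hπmeas : Measurable π :=
    measurable_fst.prodMk (measurable_fst.comp (measurable_snd.comp measurable_snd))
  have hkey : ∀ (t : Bool), P₁ (T ⁻¹' {t}) ≠ 0 →
      ∀ Ee : Set Ω, Ee = {ω | S ω = true ∧ T ω = t ∧ C ω = true} →
      ∀ A' : Set (𝒲 × ℝ), MeasurableSet A' →
      (P[|Ee]) (Z ⁻¹' A') = (P₁ (V ⁻¹' Ct))⁻¹ * P₁ (V ⁻¹' (Ct ∩ π ⁻¹' A')) := by
    intro t ht0 Ee hEe A' hA'
    have hEe2 : Ee = S₁ ∩ (T ⁻¹' {t} ∩ V ⁻¹' Ct) := by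
      rw [hEe]; ext ω; simp [hS1_def, hV_def, hCt_def]
    have hEeZ : Ee ∩ Z ⁻¹' A' = S₁ ∩ (T ⁻¹' {t} ∩ V ⁻¹' (Ct ∩ π ⁻¹' A')) := by
      rw [hEe]; ext ω
      simp [hS1_def, hV_def, hCt_def, hZ_def, hπ_def]
      tauto
    have hmEe : MeasurableSet Ee := by
      rw [hEe2]
      exact hmS1.inter ((hT (measurableSet_singleton _)).inter (hVmeas hmCt))
    rw [cond_apply hmEe P, hEeZ]
    nth_rewrite 1 [hEe2]
    rw [hSint, hSint,
      hR.measure_inter_preimage_eq_mul _ _ (measurableSet_singleton t) hmCt,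
      hR.measure_inter_preimage_eq_mul _ _ (measurableSet_singleton t)
        (hmCt.inter (hπmeas hA')),
      PATTCAux.enn_cancel hPS1 (measure_ne_top P S₁),
      PATTCAux.enn_cancel ht0 (measure_ne_top P₁ _)]
  -- positivity of the remaining pieces
  have hEcS1 : Ec ∩ S₁ = E₁ := by
    ext ω; simp [hEc_def, hE1_def, hS1_def]; tauto
  have hPE1 : P E₁ ≠ 0 := by
    intro h0
    apply hQS1
    rw [hQ_def, cond_apply hmEc, hEcS1, h0, mul_zero]
  have hE12 : E₁ = S₁ ∩ (T ⁻¹' {true} ∩ V ⁻¹' Ct) := by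
    rw [hE1_def]; ext ω; simp [hS1_def, hV_def, hCt_def]
  have hE02 : E₀ = S₁ ∩ (T ⁻¹' {false} ∩ V ⁻¹' Ct) := by
    rw [hE0_def]; ext ω; simp [hS1_def, hV_def, hCt_def]
  have hP₁T1 : P₁ (T ⁻¹' {true}) ≠ 0 := by
    intro h0
    apply hPE1
    rw [hE12, hSint]
    exact mul_eq_zero.mpr (Or.inr (measure_mono_null Set.inter_subset_left h0))
  have hP₁T0 : P₁ (T ⁻¹' {false}) ≠ 0 := by
    intro h0
    apply hPE0
    rw [hE02, hSint]
    exact mul_eq_zero.mpr (Or.inr (measure_mono_null Set.inter_subset_left h0))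
  -- equality of laws of Z under P[|E₀] and P[|E₁]
  have hmapZ : (P[|E₀]).map Z = (P[|E₁]).map Z := by
    refine Measure.ext fun A' hA' => ?_
    rw [Measure.map_apply hZmeas hA', Measure.map_apply hZmeas hA',
      hkey false hP₁T0 E₀ hE0_def A' hA', hkey true hP₁T1 E₁ hE1_def A' hA']
  have hQ1M1 : Q[|S₁] = P[|E₁] := by
    rw [hQ_def, cond_cond_eq_cond_inter' hmEc hmS1 (measure_ne_top P Ec), hEcS1]
  -- integrability under Q and the factored conditional expectation
  have hYQ : Integrable (Y true false) Q := by
    rw [hQ_def]; exact PATTCAux.integrable_cond hPEc0 (hYint true false)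
  obtain ⟨h, hhm, hinthW, hh⟩ := PATTCAux.exists_condexp_factor Q hW hY hYQ
  -- the conditional independence product rule
  have hCIF := (condIndepFun_iff_condExp_inter_preimage_eq_mul
    (μ := Q) hY hS).mp hA4
  have hS1pre : S ⁻¹' {true} = S₁ := by ext ω; simp [hS1_def]
  have hS0pre : S ⁻¹' {false} = S₀ := by ext ω; simp [hS0_def]
  have hprod1 : ∀ E : Set ℝ, MeasurableSet E →
      (Q[((Y true false ⁻¹' E) ∩ S₁).indicator (fun _ => (1:ℝ)) |
        MeasurableSpace.comap W inferInstance]) =ᵐ[Q]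
      fun ω => (Q[(Y true false ⁻¹' E).indicator (fun _ => (1:ℝ)) |
          MeasurableSpace.comap W inferInstance]) ω *
        (Q[S₁.indicator (fun _ => (1:ℝ)) | MeasurableSpace.comap W inferInstance]) ω := by
    intro E hE
    have := hCIF E {true} hE (measurableSet_singleton _)
    rw [hS1pre] at this
    exact this
  have hprod0 : ∀ E : Set ℝ, MeasurableSet E →
      (Q[((Y true false ⁻¹' E) ∩ S₀).indicator (fun _ => (1:ℝ)) |
        MeasurableSpace.comap W inferInstance]) =ᵐ[Q]
      fun ω => (Q[(Y true false ⁻¹' E).indicator (fun _ => (1:ℝ)) |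
          MeasurableSpace.comap W inferInstance]) ω *
        (Q[S₀.indicator (fun _ => (1:ℝ)) | MeasurableSpace.comap W inferInstance]) ω := by
    intro E hE
    have := hCIF E {false} hE (measurableSet_singleton _)
    rw [hS0pre] at this
    exact this
  -- star identities
  have hstar1 : ∀ B : Set 𝒲, MeasurableSet B →
      ∫ ω in W ⁻¹' B, S₁.indicator (Y true false) ω ∂Q
        = ∫ ω in W ⁻¹' B, S₁.indicator (fun ω => h (W ω)) ω ∂Q :=
    fun B hB => PATTCAux.star Q hW hY hYQ hmS1 hprod1 hhm hh hB
  have hstar0 : ∫ ω in W ⁻¹' (Set.univ : Set 𝒲), S₀.indicator (Y true false) ω ∂Q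
      = ∫ ω in W ⁻¹' (Set.univ : Set 𝒲), S₀.indicator (fun ω => h (W ω)) ω ∂Q :=
    PATTCAux.star Q hW hY hYQ hmS0 hprod0 hhm hh MeasurableSet.univ
  -- conversion to conditional measures
  have hconv : ∀ (f : Ω → ℝ) (B : Set 𝒲), MeasurableSet B →
      ∫ ω in W ⁻¹' B, f ω ∂(Q[|S₁])
        = (Q S₁)⁻¹.toReal * ∫ ω in W ⁻¹' B, S₁.indicator f ω ∂Q := by
    intro f B hB
    rw [PATTCAux.setIntegral_cond Q S₁ (hW hB) f, setIntegral_indicator hmS1]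
  have hsetQ1 : ∀ B : Set 𝒲, MeasurableSet B →
      ∫ ω in W ⁻¹' B, h (W ω) ∂(Q[|S₁]) = ∫ ω in W ⁻¹' B, Y true false ω ∂(Q[|S₁]) := by
    intro B hB
    rw [hconv _ B hB, hconv _ B hB, hstar1 B hB]
  -- h ∘ W is a version of the conditional expectation under Q[|S₁]
  haveI : IsProbabilityMeasure (Q[|S₁]) := cond_isProbabilityMeasure hQS1
  have hYQ1 : Integrable (Y true false) (Q[|S₁]) := PATTCAux.integrable_cond hQS1 hYQ
  have hhQ1 : Integrable (fun ω => h (W ω)) (Q[|S₁]) := PATTCAux.integrable_cond hQS1 hinthW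
  have hhver : (fun ω => h (W ω)) =ᵐ[Q[|S₁]]
      (Q[|S₁])[Y true false | MeasurableSpace.comap W inferInstance] := by
    refine ae_eq_condExp_of_forall_setIntegral_eq hm hYQ1 ?_ ?_ ?_
    · rintro s ⟨B, hB, rfl⟩ _; exact hhQ1.integrableOn
    · rintro s ⟨B, hB, rfl⟩ _; exact hsetQ1 B hB
    · exact ⟨_, (hhm.comp (measurable_iff_comap_le.mpr le_rfl)).stronglyMeasurable,
        ae_eq_refl _⟩
  -- g₀ ∘ W is a version of the conditional expectation under P[|E₀], transferred to P[|E₁]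
  haveI : IsProbabilityMeasure (P[|E₀]) := cond_isProbabilityMeasure hPE0
  haveI : IsProbabilityMeasure (P[|E₁]) := cond_isProbabilityMeasure hPE1
  have hYM0 : Integrable (Y true false) (P[|E₀]) := PATTCAux.integrable_cond hPE0 (hYint true false)
  have hYM1 : Integrable (Y true false) (P[|E₁]) := PATTCAux.integrable_cond hPE1 (hYint true false)
  have hg0M0 : Integrable (fun ω => g₀ (W ω)) (P[|E₀]) := integrable_condExp.congr hg₀.symm
  have hsetM0 : ∀ B : Set 𝒲, MeasurableSet B →
      ∫ ω in W ⁻¹' B, g₀ (W ω) ∂(P[|E₀]) = ∫ ω in W ⁻¹' B, Y true false ω ∂(P[|E₀]) := by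
    intro B hB
    have hmB : MeasurableSet[MeasurableSpace.comap W inferInstance] (W ⁻¹' B) := ⟨B, hB, rfl⟩
    rw [← setIntegral_condExp hm hYM0 hmB]
    exact integral_congr_ae (ae_restrict_of_ae hg₀)
  -- transfer across the law equality
  have htransfer : ∀ (μ1 μ2 : Measure Ω), μ1.map Z = μ2.map Z →
      ∀ (f : 𝒲 × ℝ → ℝ), Measurable f →
      ∫ ω, f (Z ω) ∂μ1 = ∫ ω, f (Z ω) ∂μ2 := by
    intro μ1 μ2 heq f hf
    rw [← integral_map hZmeas.aemeasurable hf.aestronglyMeasurable, heq,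
      integral_map hZmeas.aemeasurable hf.aestronglyMeasurable]
  have hindY : ∀ B : Set 𝒲, (W ⁻¹' B).indicator (Y true false)
      = fun ω => (fun p : 𝒲 × ℝ => B.indicator (fun _ => (1:ℝ)) p.1 * p.2) (Z ω) := by
    intro B; funext ω
    by_cases hω : W ω ∈ B <;> simp [Set.indicator_apply, hω, hZ_def]
  have hindg : ∀ B : Set 𝒲, (W ⁻¹' B).indicator (fun ω => g₀ (W ω))
      = fun ω => (fun p : 𝒲 × ℝ => B.indicator (fun _ => (1:ℝ)) p.1 * g₀ p.1) (Z ω) := by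
    intro B; funext ω
    by_cases hω : W ω ∈ B <;> simp [Set.indicator_apply, hω, hZ_def]
  have hmeasFB : ∀ B : Set 𝒲, MeasurableSet B →
      Measurable (fun p : 𝒲 × ℝ => B.indicator (fun _ => (1:ℝ)) p.1 * p.2) :=
    fun B hB => ((measurable_const.indicator hB).comp measurable_fst).mul measurable_snd
  have hmeasGB : ∀ B : Set 𝒲, MeasurableSet B →
      Measurable (fun p : 𝒲 × ℝ => B.indicator (fun _ => (1:ℝ)) p.1 * g₀ p.1) :=
    fun B hB => ((measurable_const.indicator hB).comp measurable_fst).mul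
      (hg₀m.comp measurable_fst)
  have hYtrans : ∀ B : Set 𝒲, MeasurableSet B →
      ∫ ω in W ⁻¹' B, Y true false ω ∂(P[|E₁]) = ∫ ω in W ⁻¹' B, Y true false ω ∂(P[|E₀]) := by
    intro B hB
    rw [← integral_indicator (hW hB), ← integral_indicator (hW hB), hindY B,
      htransfer _ _ hmapZ.symm _ (hmeasFB B hB)]
  have hgtrans : ∀ B : Set 𝒲, MeasurableSet B →
      ∫ ω in W ⁻¹' B, g₀ (W ω) ∂(P[|E₁]) = ∫ ω in W ⁻¹' B, g₀ (W ω) ∂(P[|E₀]) := by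
    intro B hB
    rw [← integral_indicator (hW hB), ← integral_indicator (hW hB), hindg B,
      htransfer _ _ hmapZ.symm _ (hmeasGB B hB)]
  have hsetM1 : ∀ B : Set 𝒲, MeasurableSet B →
      ∫ ω in W ⁻¹' B, g₀ (W ω) ∂(P[|E₁]) = ∫ ω in W ⁻¹' B, Y true false ω ∂(P[|E₁]) := by
    intro B hB
    rw [hgtrans B hB, hYtrans B hB, hsetM0 B hB]
  have hg0M1 : Integrable (fun ω => g₀ (W ω)) (P[|E₁]) := by
    have h1 : Integrable (fun p : 𝒲 × ℝ => g₀ p.1) ((P[|E₀]).map Z) :=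
      (integrable_map_measure (hg₀m.comp measurable_fst).aestronglyMeasurable
        hZmeas.aemeasurable).mpr hg0M0
    rw [hmapZ] at h1
    exact (integrable_map_measure (hg₀m.comp measurable_fst).aestronglyMeasurable
      hZmeas.aemeasurable).mp h1
  have hg₀ver : (fun ω => g₀ (W ω)) =ᵐ[Q[|S₁]]
      (Q[|S₁])[Y true false | MeasurableSpace.comap W inferInstance] := by
    rw [hQ1M1]
    refine ae_eq_condExp_of_forall_setIntegral_eq hm hYM1 ?_ ?_ ?_
    · rintro s ⟨B, hB, rfl⟩ _; exact hg0M1.integrableOn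
    · rintro s ⟨B, hB, rfl⟩ _; exact hsetM1 B hB
    · exact ⟨_, (hg₀m.comp (measurable_iff_comap_le.mpr le_rfl)).stronglyMeasurable,
        ae_eq_refl _⟩
  have hhg : (fun ω => h (W ω)) =ᵐ[Q[|S₁]] fun ω => g₀ (W ω) := hhver.trans hg₀ver.symm
  -- push to the covariate space and pull back along the absolute continuity
  have hDmeas : MeasurableSet {w : 𝒲 | h w ≠ g₀ w} := by
    have he : {w : 𝒲 | h w ≠ g₀ w} = {w : 𝒲 | h w = g₀ w}ᶜ := rfl
    rw [he]
    exact (measurableSet_eq_fun hhm hg₀m).compl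
  have hmapQ1 : ((Q[|S₁]).map W) {w : 𝒲 | h w ≠ g₀ w} = 0 := by
    rw [Measure.map_apply hW hDmeas]
    have := ae_iff.mp hhg
    simpa [Set.preimage, Set.mem_setOf_eq] using this
  have hmarg : ∀ (μ : Measure Ω), μ.map W = (μ.map Z).map Prod.fst := by
    intro μ
    rw [Measure.map_map measurable_fst hZmeas]
    rfl
  have hmapM0 : ((P[|E₀]).map W) {w : 𝒲 | h w ≠ g₀ w} = 0 := by
    rw [hmarg, hmapZ, ← hmarg, ← hQ1M1]
    exact hmapQ1
  have hmapA : ((P[|Aset]).map W) {w : 𝒲 | h w ≠ g₀ w} = 0 := hac0 hmapM0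
  have hhgQ0 : (fun ω => h (W ω)) =ᵐ[P[|Aset]] fun ω => g₀ (W ω) := by
    rw [Measure.map_apply hW hDmeas] at hmapA
    refine ae_iff.mpr ?_
    simpa [Set.preimage, Set.mem_setOf_eq] using hmapA
  -- final computation
  have hint0 : ∀ f : Ω → ℝ,
      ∫ ω, f ω ∂(Q[|S₀]) = (Q S₀)⁻¹.toReal * ∫ ω, S₀.indicator f ω ∂Q := by
    intro f
    rw [PATTCAux.integral_cond Q S₀ f, ← integral_indicator hmS0]
  have hYeq : ∫ ω, Y true false ω ∂(Q[|S₀]) = ∫ ω, h (W ω) ∂(Q[|S₀]) := by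
    rw [hint0, hint0]
    congr 1
    have h0 := hstar0
    simpa [Set.preimage_univ, Measure.restrict_univ] using h0
  calc ∫ ω, Y false false ω ∂(P[|Aset])
      = ∫ ω, Y true false ω ∂(P[|Aset]) :=
        integral_congr_ae ((hA1 false).filter_mono cond_absolutelyContinuous.ae_le)
    _ = ∫ ω, Y true false ω ∂(Q[|S₀]) := by rw [hPAQ]
    _ = ∫ ω, h (W ω) ∂(Q[|S₀]) := hYeq
    _ = ∫ ω, g₀ (W ω) ∂(Q[|S₀]) := by
        rw [← hPAQ]; exact integral_congr_ae hhgQ0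
    _ = ∫ ω, g₀ (W ω) ∂(P[|Aset]) := by rw [hPAQ]
end

section
/- Let X : Ω → ℝ be integrable and Z : Ω → 𝒵 measurable into a standard Borel space, and let 𝓖 be a sub-σ-algebra of 𝓕. If X is conditionally independent of Z given 𝓖 under P, then the conditional expectation of X given the σ-algebra 𝓖 ⊔ σ(Z) generated by 𝓖 and Z equals the conditional expectation of X given 𝓖, P-almost surely: E[X | 𝓖 ⊔ σ(Z)] = E[X | 𝓖] a.s. -/
open MeasureTheory ProbabilityTheory

/-- If an integrable `X : Ω → ℝ` is conditionally independent of `Z : Ω → 𝒵` given a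
sub-σ-algebra `𝓖`, then `E[X | 𝓖 ⊔ σ(Z)] = E[X | 𝓖]` almost surely. -/
theorem condexp_join_of_condIndepFun
    {Ω 𝒵 : Type*} {m0 : MeasurableSpace Ω} [StandardBorelSpace Ω]
    [MeasurableSpace 𝒵] [StandardBorelSpace 𝒵]
    (P : Measure Ω) [IsProbabilityMeasure P]
    (X : Ω → ℝ) (hXint : Integrable X P)
    (Z : Ω → 𝒵) (hZ : Measurable Z)
    (𝒢 : MeasurableSpace Ω) (h𝒢 : 𝒢 ≤ m0)
    (hCI : CondIndepFun 𝒢 h𝒢 X Z P) :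
    P[X | 𝒢 ⊔ MeasurableSpace.comap Z inferInstance] =ᵐ[P] P[X | 𝒢] := by
  classical
  letI _instShadow : MeasurableSpace Ω := m0
  -- a measurable modification of `X`
  have hXsm := hXint.1
  set X' : Ω → ℝ := hXsm.mk X with hX'def
  have hX'sm : StronglyMeasurable[m0] X' := hXsm.stronglyMeasurable_mk
  have hXX' : X =ᵐ[P] X' := hXsm.ae_eq_mk
  have hX'meas : Measurable[m0] X' := hX'sm.measurable
  have hX'int : Integrable X' P := hXint.congr hXX'
  -- a measurable null set containing `{X ≠ X'}`
  obtain ⟨N, hsub, hNmeas, hNnull⟩ :=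
    @exists_measurable_superset_of_null Ω m0 P _ (ae_iff.mp hXX')
  -- the conditional kernel kills `N` almost everywhere
  have hkerN : ∀ᵐ ω ∂P, condExpKernel (mΩ := m0) P 𝒢 ω N = 0 := by
    have h1 := condExpKernel_ae_eq_condExp (mΩ := m0) (μ := P) h𝒢 hNmeas
    have h2 : (P[N.indicator (fun _ => (1:ℝ)) | 𝒢]) =ᵐ[P] (0 : Ω → ℝ) := by
      have h3 : (N.indicator (fun _ => (1 : ℝ))) =ᵐ[P] 0 := by
        have hae : ∀ᵐ ω ∂P, ω ∉ N := by
          rw [ae_iff]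
          exact measure_mono_null (fun ω h => by simpa using h) hNnull
        exact hae.mono fun ω hω => by simp [Set.indicator_of_notMem hω]
      exact (condExp_congr_ae h3).trans (by rw [condExp_zero])
    filter_upwards [h1, h2] with ω hω1 hω2
    have htoReal : (condExpKernel (mΩ := m0) P 𝒢 ω N).toReal = 0 := by
      rw [← measureReal_def, hω1, hω2]; rfl
    exact ((ENNReal.toReal_eq_zero_iff _).mp htoReal).resolve_right (measure_ne_top _ _)
  -- upgrade to the trimmed measure
  have hkerN' : ∀ᵐ ω ∂(P.trim h𝒢), condExpKernel (mΩ := m0) P 𝒢 ω N = 0 := by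
    rw [ae_iff] at hkerN ⊢
    have hGmeas : MeasurableSet[𝒢] {ω | ¬ condExpKernel (mΩ := m0) P 𝒢 ω N = 0} := by
      have h := measurable_condExpKernel (mΩ := m0) (μ := P) (m := 𝒢) hNmeas
      exact (h (measurableSet_singleton 0)).compl
    rw [trim_measurableSet_eq h𝒢 hGmeas]
    exact hkerN
  -- transfer conditional independence to the measurable modification
  have hCI' : CondIndepFun 𝒢 h𝒢 X' Z P := by
    refine Kernel.IndepFun.congr' hCI ?_ ?_
    · filter_upwards [hkerN'] with ω hω
      exact ae_iff.mpr (measure_mono_null hsub (by rw [hω]))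
    · exact Filter.Eventually.of_forall fun ω => Filter.EventuallyEq.rfl
  -- the conditional independence property in terms of conditional expectations
  have key : ∀ t1 t2, MeasurableSet[MeasurableSpace.comap X' inferInstance] t1 →
      MeasurableSet[MeasurableSpace.comap Z inferInstance] t2 →
      (P⟦t1 ∩ t2 | 𝒢⟧) =ᵐ[P] (P⟦t1 | 𝒢⟧) * (P⟦t2 | 𝒢⟧) :=
    (condIndepFun_iff 𝒢 h𝒢 X' Z hX'meas hZ P).mp hCI'
  -- core computation for indicators
  have hcore : ∀ B, MeasurableSet B → ∀ A, MeasurableSet[𝒢] A → ∀ t,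
      MeasurableSet[MeasurableSpace.comap X' inferInstance] t →
      ∫ ω in A ∩ Z ⁻¹' B, (P⟦t | 𝒢⟧) ω ∂P = (P ((A ∩ Z ⁻¹' B) ∩ t)).toReal := by
    intro B hB A hA t ht
    have htm : MeasurableSet[m0] t := by
      obtain ⟨s, hs, rfl⟩ := ht; exact hX'meas hs
    have hZB : MeasurableSet[m0] (Z ⁻¹' B) := hZ hB
    set g : Ω → ℝ := (Z ⁻¹' B).indicator (fun _ => (1 : ℝ)) with hgdef
    have hgint : Integrable g P := (integrable_const (1 : ℝ)).indicator hZB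
    have hfg : Integrable ((P⟦t | 𝒢⟧) * g) P := by
      have : Integrable (fun ω => g ω * (P⟦t | 𝒢⟧) ω) P := by
        refine Integrable.bdd_mul (c := 1) integrable_condExp hgint.1 (Filter.Eventually.of_forall fun x => ?_)
        rw [hgdef]
        by_cases hx : x ∈ Z ⁻¹' B <;> simp [Set.indicator_of_mem, Set.indicator_of_notMem, hx]
      refine this.congr (Filter.Eventually.of_forall fun ω => ?_)
      simp [mul_comm]
    have h1 : ∫ ω in A ∩ Z ⁻¹' B, (P⟦t | 𝒢⟧) ω ∂P
        = ∫ ω in A, ((P⟦t | 𝒢⟧) * g) ω ∂P := by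
      rw [show ∫ ω in A, ((P⟦t | 𝒢⟧) * g) ω ∂P
          = ∫ ω in A, (Z ⁻¹' B).indicator (P⟦t | 𝒢⟧) ω ∂P from
        setIntegral_congr_ae (h𝒢 _ hA) (Filter.Eventually.of_forall fun ω _ => by
          by_cases hω : ω ∈ Z ⁻¹' B <;>
            simp [hgdef, Set.indicator_of_mem, Set.indicator_of_notMem, hω])]
      rw [setIntegral_indicator hZB]
    have h2 : ∫ ω in A, ((P⟦t | 𝒢⟧) * g) ω ∂P
        = ∫ ω in A, (P[(P⟦t | 𝒢⟧) * g | 𝒢]) ω ∂P :=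
      (setIntegral_condExp h𝒢 hfg hA).symm
    have h3 : (P[(P⟦t | 𝒢⟧) * g | 𝒢]) =ᵐ[P] (P⟦t | 𝒢⟧) * (P⟦Z ⁻¹' B | 𝒢⟧) :=
      condExp_mul_of_stronglyMeasurable_left stronglyMeasurable_condExp hfg hgint
    have h4 : (P⟦t | 𝒢⟧) * (P⟦Z ⁻¹' B | 𝒢⟧) =ᵐ[P] P⟦t ∩ Z ⁻¹' B | 𝒢⟧ :=
      (key t (Z ⁻¹' B) ht ⟨B, hB, rfl⟩).symm
    have h5 : ∫ ω in A, (P⟦t ∩ Z ⁻¹' B | 𝒢⟧) ω ∂P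
        = ∫ ω in A, (t ∩ Z ⁻¹' B).indicator (fun _ => (1 : ℝ)) ω ∂P :=
      setIntegral_condExp h𝒢 ((integrable_const (1 : ℝ)).indicator (htm.inter hZB)) hA
    have h6 : ∫ ω in A, (t ∩ Z ⁻¹' B).indicator (fun _ => (1 : ℝ)) ω ∂P
        = (P ((A ∩ Z ⁻¹' B) ∩ t)).toReal := by
      rw [setIntegral_indicator (htm.inter hZB), setIntegral_const, smul_eq_mul, mul_one]
      rw [show A ∩ (t ∩ Z ⁻¹' B) = (A ∩ Z ⁻¹' B) ∩ t from by
        ext ω; simp only [Set.mem_inter_iff]; tauto]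
      rfl
    calc ∫ ω in A ∩ Z ⁻¹' B, (P⟦t | 𝒢⟧) ω ∂P
        = ∫ ω in A, (P[(P⟦t | 𝒢⟧) * g | 𝒢]) ω ∂P := h1.trans h2
      _ = ∫ ω in A, (P⟦t ∩ Z ⁻¹' B | 𝒢⟧) ω ∂P :=
          setIntegral_congr_ae (h𝒢 _ hA)
            ((h3.trans h4).mono fun ω hω _ => hω)
      _ = (P ((A ∩ Z ⁻¹' B) ∩ t)).toReal := h5.trans h6
  -- the integral identity on the π-system, for `X'`, by L¹ induction
  have hmain : ∀ B, MeasurableSet B → ∀ A, MeasurableSet[𝒢] A →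
      ∫ ω in A ∩ Z ⁻¹' B, X' ω ∂P = ∫ ω in A ∩ Z ⁻¹' B, (P[X' | 𝒢]) ω ∂P := by
    intro B hB A hA
    have hZB : MeasurableSet[m0] (Z ⁻¹' B) := hZ hB
    have hS : MeasurableSet[m0] (A ∩ Z ⁻¹' B) := (h𝒢 _ hA).inter hZB
    have hle : MeasurableSpace.comap X' inferInstance ≤ m0 := hX'meas.comap_le
    have hXmem : MemLp X' 1 P := memLp_one_iff_integrable.mpr hX'int
    have hXaesm : AEStronglyMeasurable[MeasurableSpace.comap X' inferInstance] X' P := by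
      refine StronglyMeasurable.aestronglyMeasurable ?_
      exact Measurable.stronglyMeasurable (measurable_iff_comap_le.mpr le_rfl)
    refine MemLp.induction_stronglyMeasurable hle ENNReal.one_ne_top
      (fun f => ∫ ω in A ∩ Z ⁻¹' B, f ω ∂P = ∫ ω in A ∩ Z ⁻¹' B, (P[f | 𝒢]) ω ∂P)
      ?_ ?_ ?_ ?_ hXmem hXaesm
    · -- indicators
      intro c t ht _
      have htm : MeasurableSet[m0] t := by
        obtain ⟨s, hs, rfl⟩ := ht; exact hX'meas hs
      have hrw : (t.indicator fun _ => c) = c • t.indicator (fun _ => (1 : ℝ)) := by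
        funext ω
        by_cases hω : ω ∈ t <;>
          simp [Set.indicator_of_mem, Set.indicator_of_notMem, hω]
      have hlhs : ∫ ω in A ∩ Z ⁻¹' B, (t.indicator fun _ => c) ω ∂P
          = (P ((A ∩ Z ⁻¹' B) ∩ t)).toReal * c := by
        rw [setIntegral_indicator htm, setIntegral_const, smul_eq_mul]
        rfl
      have hrhs : ∫ ω in A ∩ Z ⁻¹' B, (P[t.indicator fun _ => c | 𝒢]) ω ∂P
          = (P ((A ∩ Z ⁻¹' B) ∩ t)).toReal * c := by
        have hcsmul : (P[t.indicator fun _ => c | 𝒢]) =ᵐ[P] c • (P⟦t | 𝒢⟧) := by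
          rw [hrw]; exact condExp_smul c _ _
        rw [setIntegral_congr_ae hS (hcsmul.mono fun ω hω _ => hω)]
        simp only [Pi.smul_apply, smul_eq_mul]
        rw [integral_const_mul, hcore B hB A hA t ht, mul_comm]
      rw [hlhs, hrhs]
    · -- addition
      intro u v _ hu hv _ _ hQu hQv
      have huint : Integrable u P := memLp_one_iff_integrable.mp hu
      have hvint : Integrable v P := memLp_one_iff_integrable.mp hv
      have hadd : (P[u + v | 𝒢]) =ᵐ[P] (P[u | 𝒢]) + (P[v | 𝒢]) := condExp_add huint hvint _
      have hlhs : ∫ ω in A ∩ Z ⁻¹' B, (u + v) ω ∂P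
          = ∫ ω in A ∩ Z ⁻¹' B, u ω ∂P + ∫ ω in A ∩ Z ⁻¹' B, v ω ∂P := by
        simp only [Pi.add_apply]
        exact integral_add huint.integrableOn hvint.integrableOn
      have hrhs : ∫ ω in A ∩ Z ⁻¹' B, (P[u + v | 𝒢]) ω ∂P
          = ∫ ω in A ∩ Z ⁻¹' B, (P[u | 𝒢]) ω ∂P + ∫ ω in A ∩ Z ⁻¹' B, (P[v | 𝒢]) ω ∂P := by
        rw [setIntegral_congr_ae hS (hadd.mono fun ω hω _ => hω)]
        simp only [Pi.add_apply]
        exact integral_add integrable_condExp.integrableOn integrable_condExp.integrableOn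
      rw [hlhs, hrhs, hQu, hQv]
    · -- closedness in L¹
      have heq₁ : (fun f : lpMeas ℝ ℝ (MeasurableSpace.comap X' inferInstance) 1 P =>
            ∫ ω in A ∩ Z ⁻¹' B, (f : Ω → ℝ) ω ∂P)
          = (fun f : Lp ℝ 1 P => ∫ ω in A ∩ Z ⁻¹' B, f ω ∂P) ∘ Submodule.subtypeL _ := by
        refine funext fun f => integral_congr_ae (ae_restrict_of_ae ?_)
        simp_rw [Submodule.coe_subtypeL', Submodule.coe_subtype]
        exact Filter.Eventually.of_forall fun _ => by trivial
      have heq₂ : (fun f : lpMeas ℝ ℝ (MeasurableSpace.comap X' inferInstance) 1 P =>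
            ∫ ω in A ∩ Z ⁻¹' B, (P[(f : Ω → ℝ) | 𝒢]) ω ∂P)
          = (fun f : Lp ℝ 1 P => ∫ ω in A ∩ Z ⁻¹' B, (condExpL1CLM ℝ h𝒢 P f : Ω → ℝ) ω ∂P)
              ∘ Submodule.subtypeL _ := by
        refine funext fun f => ?_
        simp only [Function.comp_apply, Submodule.coe_subtypeL', Submodule.coe_subtype]
        refine integral_congr_ae (ae_restrict_of_ae ?_)
        have hint : Integrable ((f : Lp ℝ 1 P) : Ω → ℝ) P := L1.integrable_coeFn _
        have h := condExp_ae_eq_condExpL1CLM h𝒢 hint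
        rw [Integrable.toL1_coeFn _ hint] at h
        exact h
      refine isClosed_eq ?_ ?_
      · rw [heq₁]
        exact (continuous_setIntegral _).comp (ContinuousLinearMap.continuous _)
      · rw [heq₂]
        exact ((continuous_setIntegral _).comp (condExpL1CLM ℝ h𝒢 P).continuous).comp
          (ContinuousLinearMap.continuous _)
    · -- a.e. congruence
      intro u v huv _ hQu
      have h1 : ∫ ω in A ∩ Z ⁻¹' B, u ω ∂P = ∫ ω in A ∩ Z ⁻¹' B, v ω ∂P :=
        setIntegral_congr_ae hS (huv.mono fun ω hω _ => hω)
      have h2 : ∫ ω in A ∩ Z ⁻¹' B, (P[u | 𝒢]) ω ∂P = ∫ ω in A ∩ Z ⁻¹' B, (P[v | 𝒢]) ω ∂P :=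
        setIntegral_congr_ae hS ((condExp_congr_ae huv).mono fun ω hω _ => hω)
      rw [← h1, ← h2]; exact hQu
  -- extend to the whole σ-algebra `𝒢 ⊔ σ(Z)` by a π-system argument
  have hm : 𝒢 ⊔ MeasurableSpace.comap Z inferInstance ≤ m0 := sup_le h𝒢 hZ.comap_le
  set C : Set (Set Ω) :=
    {s | ∃ A B, MeasurableSet[𝒢] A ∧ MeasurableSet B ∧ s = A ∩ Z ⁻¹' B} with hCdef
  have hgen : 𝒢 ⊔ MeasurableSpace.comap Z inferInstance = MeasurableSpace.generateFrom C := by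
    refine le_antisymm (sup_le ?_ ?_) (MeasurableSpace.generateFrom_le ?_)
    · intro s hs
      exact MeasurableSpace.measurableSet_generateFrom
        ⟨s, Set.univ, hs, MeasurableSet.univ, by simp⟩
    · intro s hs
      obtain ⟨B, hB, rfl⟩ := hs
      exact MeasurableSpace.measurableSet_generateFrom
        ⟨Set.univ, B, MeasurableSet.univ, hB, by simp⟩
    · rintro s ⟨A, B, hA, hB, rfl⟩
      exact MeasurableSet.inter ((le_sup_left : 𝒢 ≤ _) _ hA)
        ((le_sup_right : MeasurableSpace.comap Z inferInstance ≤ _) _ ⟨B, hB, rfl⟩)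
  have hpi : IsPiSystem C := by
    rintro s ⟨A1, B1, hA1, hB1, rfl⟩ t ⟨A2, B2, hA2, hB2, rfl⟩ -
    refine ⟨A1 ∩ A2, B1 ∩ B2, hA1.inter hA2, hB1.inter hB2, ?_⟩
    ext ω
    simp only [Set.mem_inter_iff, Set.mem_preimage]
    tauto
  have hall : ∀ s, MeasurableSet[𝒢 ⊔ MeasurableSpace.comap Z inferInstance] s →
      ∫ ω in s, X' ω ∂P = ∫ ω in s, (P[X' | 𝒢]) ω ∂P := by
    intro s hs
    refine MeasurableSpace.induction_on_inter
      (C := fun s _ => ∫ ω in s, X' ω ∂P = ∫ ω in s, (P[X' | 𝒢]) ω ∂P) (s := C)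
      (m := 𝒢 ⊔ MeasurableSpace.comap Z inferInstance) hgen hpi ?_ ?_ ?_ ?_ s hs
    · simp
    · rintro t ⟨A, B, hA, hB, rfl⟩
      exact hmain B hB A hA
    · intro t htm ht
      have ht0 : MeasurableSet[m0] t := hm _ htm
      have e1 := integral_add_compl ht0 hX'int
      have e2 := integral_add_compl ht0 (integrable_condExp (f := X') (m := 𝒢) (μ := P))
      have e3 : ∫ ω, (P[X' | 𝒢]) ω ∂P = ∫ ω, X' ω ∂P := integral_condExp h𝒢 (f := X')
      linarith
    · intro f hdisj hfm hind
      rw [integral_iUnion (fun i => hm _ (hfm i)) hdisj hX'int.integrableOn,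
        integral_iUnion (fun i => hm _ (hfm i)) hdisj integrable_condExp.integrableOn]
      exact tsum_congr hind
  have hfinal : (P[X' | 𝒢]) =ᵐ[P] P[X' | 𝒢 ⊔ MeasurableSpace.comap Z inferInstance] := by
    refine ae_eq_condExp_of_forall_setIntegral_eq hm hX'int
      (fun s hs _ => integrable_condExp.integrableOn)
      (fun s hs _ => (hall s hs).symm) ?_
    exact StronglyMeasurable.aestronglyMeasurable
      (stronglyMeasurable_condExp.mono le_sup_left)
  calc P[X | 𝒢 ⊔ MeasurableSpace.comap Z inferInstance]
      =ᵐ[P] P[X' | 𝒢 ⊔ MeasurableSpace.comap Z inferInstance] := condExp_congr_ae hXX'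
    _ =ᵐ[P] P[X' | 𝒢] := hfinal.symm
    _ =ᵐ[P] P[X | 𝒢] := condExp_congr_ae hXX'.symm
end

section
/- Let Y : Ω → ℝ be integrable. Suppose that under the conditional measure ν := P(·|{T=1, C=1}), Y is conditionally independent of S given σ(W) and 0 < ν(S=1 | W) < 1 ν-a.s. Assume P(S=1, T=1, C=1) > 0 and P(S=0, T=1, C=1) > 0, and that the law of W under P(·|{S=0, T=1, C=1}) is absolutely continuous with respect to its law under P(·|{S=1, T=1, C=1}). Let g : 𝒲 → ℝ be a version of E[Y | {S=1, T=1, C=1}, W]. Then E[Y | S=0, T=1, C=1] = E[g(W) | S=0, T=1, C=1]; that is, strong ignorability of sample assignment transfers the covariate-conditional response surface from the RCT (S=1) to the population (S=0). -/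
open MeasureTheory ProbabilityTheory

section Aux

variable {Ω : Type*} {m' mΩ : MeasurableSpace Ω}

/-- Conditional independence is stable under a.e. modification of the first function. -/
lemma aux_condIndepFun_congr [StandardBorelSpace Ω] {β γ : Type*}
    [mβ : MeasurableSpace β] [mγ : MeasurableSpace γ]
    (hm' : m' ≤ mΩ) {μ : Measure Ω} [IsFiniteMeasure μ]
    {f f' : Ω → β} {g : Ω → γ} (hff' : f =ᵐ[μ] f')
    (h : CondIndepFun m' hm' f g μ) : CondIndepFun m' hm' f' g μ := by
  obtain ⟨N, hsub, hNm, hNμ⟩ :=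
    exists_measurable_superset_of_null (ae_iff.mp hff')
  have hN0 : ∀ᵐ ω ∂(μ.trim hm'), condExpKernel μ m' ω N = 0 := by
    have h1 : (fun ω => (condExpKernel μ m' ω N).toReal) =ᵐ[μ] μ⟦N | m'⟧ :=
      condExpKernel_ae_eq_condExp hm' hNm
    have h2 : (μ⟦N | m'⟧) =ᵐ[μ] 0 := by
      have hind : (N.indicator (fun _ => (1 : ℝ))) =ᵐ[μ] 0 := by
        filter_upwards [measure_eq_zero_iff_ae_notMem.mp hNμ] with x hx
        simp [Set.indicator_of_notMem hx]
      calc μ⟦N | m'⟧ =ᵐ[μ] μ[(0 : Ω → ℝ)|m'] := condExp_congr_ae hind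
        _ = 0 := condExp_zero
    have h3 : (fun ω => condExpKernel μ m' ω N) =ᵐ[μ] (fun _ => (0 : ENNReal)) := by
      filter_upwards [h1.trans h2] with ω hω
      have hfin : condExpKernel μ m' ω N ≠ ⊤ := measure_ne_top _ _
      simp only [Pi.zero_apply] at hω
      simpa [ENNReal.toReal_eq_zero_iff, hfin] using hω
    exact (StronglyMeasurable.ae_eq_trim_iff hm' (stronglyMeasurable_condExpKernel hNm)
      stronglyMeasurable_const).mpr h3
  intro t1 t2 ht1 ht2
  obtain ⟨s, hs, rfl⟩ := ht1
  have h' := h (f ⁻¹' s) t2 ⟨s, hs, rfl⟩ ht2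
  filter_upwards [h', hN0] with ω hω hωN
  have hae : ∀ᵐ x ∂(condExpKernel μ m' ω), x ∉ N := measure_eq_zero_iff_ae_notMem.mp hωN
  have hxy : ∀ᵐ x ∂(condExpKernel μ m' ω), f x = f' x := by
    filter_upwards [hae] with x hx
    by_contra hc
    exact hx (hsub hc)
  have e1 : (f' ⁻¹' s ∩ t2 : Set Ω) =ᵐ[condExpKernel μ m' ω] (f ⁻¹' s ∩ t2 : Set Ω) := by
    filter_upwards [hxy] with x hx
    change (f' x ∈ s ∧ x ∈ t2) = (f x ∈ s ∧ x ∈ t2)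
    rw [hx]
  have e2 : (f' ⁻¹' s : Set Ω) =ᵐ[condExpKernel μ m' ω] (f ⁻¹' s : Set Ω) := by
    filter_upwards [hxy] with x hx
    change (f' x ∈ s) = (f x ∈ s)
    rw [hx]
  rw [measure_congr e1, measure_congr e2, hω]

/-- Pull-out property: integrating `A.indicator f` for an `m'`-measurable `f` over an
`m'`-measurable set equals integrating `f` times the conditional probability of `A`. -/
lemma aux_pullout_s6 (hm' : m' ≤ mΩ) (μ : Measure Ω) [IsProbabilityMeasure μ]
    {A : Set Ω} (hA : MeasurableSet[mΩ] A)
    {f : Ω → ℝ} (hfm : StronglyMeasurable[m'] f) (hf : Integrable f μ)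
    {B : Set Ω} (hB : MeasurableSet[m'] B) :
    ∫ ω in B, A.indicator f ω ∂μ =
      ∫ ω in B, f ω * (μ[A.indicator (fun _ => (1 : ℝ))|m']) ω ∂μ := by
  have heq : (f * A.indicator (fun _ => (1 : ℝ))) = A.indicator f := by
    funext ω; by_cases h : ω ∈ A <;> simp [Set.indicator_apply, h]
  have hint : Integrable (f * A.indicator (fun _ => (1 : ℝ))) μ := by
    rw [heq]; exact hf.indicator hA
  have hmul := condExp_mul_of_stronglyMeasurable_left hfm hint
    ((integrable_const (1 : ℝ)).indicator hA)
  calc ∫ ω in B, A.indicator f ω ∂μ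
      = ∫ ω in B, (f * A.indicator (fun _ => (1 : ℝ))) ω ∂μ := by rw [heq]
    _ = ∫ ω in B, (μ[(f * A.indicator (fun _ => (1 : ℝ)))|m']) ω ∂μ :=
        (setIntegral_condExp hm' hint hB).symm
    _ = ∫ ω in B, f ω * (μ[A.indicator (fun _ => (1 : ℝ))|m']) ω ∂μ := by
        refine setIntegral_congr_ae (hm' B hB) ?_
        filter_upwards [hmul] with ω hω _
        simpa using hω

/-- Key lemma: if the product rule for conditional expectations of indicators holds for
all preimage sets of `Y` against `A`, then the conditional-expectation identity
`∫_B 1_A Y = ∫_B E[Y|m'] P(A|m')` holds for integrable measurable `Y`. -/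
lemma aux_setIntegral_indicator_eq (hm' : m' ≤ mΩ) (μ : Measure Ω) [IsProbabilityMeasure μ]
    {Y : Ω → ℝ} (hYm : Measurable[mΩ] Y) (hYint : Integrable Y μ)
    {A : Set Ω} (hA : MeasurableSet[mΩ] A)
    (hprod : ∀ s : Set ℝ, MeasurableSet s →
      (μ[(Y ⁻¹' s ∩ A).indicator (fun _ => (1 : ℝ))|m']) =ᵐ[μ]
        fun ω => (μ[(Y ⁻¹' s).indicator (fun _ => (1 : ℝ))|m']) ω *
          (μ[A.indicator (fun _ => (1 : ℝ))|m']) ω)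
    {B : Set Ω} (hB : MeasurableSet[m'] B) :
    ∫ ω in B, A.indicator Y ω ∂μ =
      ∫ ω in B, (μ[Y|m']) ω * (μ[A.indicator (fun _ => (1 : ℝ))|m']) ω ∂μ := by
  set q : Ω → ℝ := μ[A.indicator (fun _ => (1 : ℝ))|m'] with hq_def
  have hA1int : Integrable (A.indicator (fun _ => (1 : ℝ))) μ :=
    (integrable_const (1 : ℝ)).indicator hA
  have hq_nonneg : 0 ≤ᵐ[μ] q :=
    condExp_nonneg (Filter.Eventually.of_forall fun ω =>
      Set.indicator_nonneg (fun _ _ => zero_le_one) ω)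
  have hq_le_one : q ≤ᵐ[μ] fun _ => (1 : ℝ) := by
    have h := condExp_mono (m := m') hA1int (integrable_const (1 : ℝ))
      (Filter.Eventually.of_forall fun ω => by
        by_cases h : ω ∈ A <;> simp [Set.indicator_apply, h])
    rwa [condExp_const hm' (1 : ℝ)] at h
  have hq_bound : ∀ᵐ ω ∂μ, ‖q ω‖ ≤ 1 := by
    filter_upwards [hq_nonneg, hq_le_one] with ω h1 h2
    rw [Real.norm_eq_abs, abs_of_nonneg h1]
    exact h2
  have hq_aesm : AEStronglyMeasurable q μ :=
    (stronglyMeasurable_condExp.mono hm').aestronglyMeasurable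
  have hmul : ∀ {r : Ω → ℝ}, Integrable r μ → Integrable (fun ω => r ω * q ω) μ := by
    intro r hr
    refine (hr.bdd_mul hq_aesm hq_bound).congr ?_
    exact Filter.Eventually.of_forall fun ω => mul_comm _ _
  have hmY : MeasurableSpace.comap Y inferInstance ≤ mΩ := hYm.comap_le
  -- the four obligations of the induction principle
  have h_ind : ∀ (c : ℝ) ⦃s : Set Ω⦄,
      MeasurableSet[MeasurableSpace.comap Y inferInstance] s → μ s < ⊤ →
      (∫ ω in B, A.indicator (s.indicator fun _ => c) ω ∂μ =
        ∫ ω in B, (μ[s.indicator fun _ => c|m']) ω * q ω ∂μ) := by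
    intro c s hs _
    obtain ⟨t, ht, rfl⟩ := hs
    have ht'm : MeasurableSet[mΩ] (Y ⁻¹' t) := hYm ht
    have e1 : A.indicator ((Y ⁻¹' t).indicator fun _ => c) =
        ((Y ⁻¹' t) ∩ A).indicator fun _ => c := by
      funext ω
      by_cases h1 : ω ∈ Y ⁻¹' t <;> by_cases h2 : ω ∈ A <;>
        simp [Set.indicator_apply, Set.mem_inter_iff, h1, h2]
    have hsmul : ∀ u : Set Ω, (u.indicator fun _ => c : Ω → ℝ) =
        c • u.indicator fun _ => (1 : ℝ) := by
      intro u; funext ω; by_cases h : ω ∈ u <;> simp [Set.indicator_apply, h]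
    have hci : ∀ u : Set Ω, (μ[u.indicator fun _ => c|m']) =ᵐ[μ]
        fun ω => c * (μ[u.indicator fun _ => (1 : ℝ)|m']) ω := by
      intro u
      have h1 : (μ[u.indicator fun _ => c|m']) =
          μ[c • u.indicator fun _ => (1 : ℝ)|m'] := by rw [← hsmul]
      rw [h1]
      filter_upwards [condExp_smul (μ := μ) (m := m') c
        (u.indicator fun _ => (1 : ℝ))] with ω hω
      simpa using hω
    have hint1 : Integrable (((Y ⁻¹' t) ∩ A).indicator fun _ => c) μ :=
      (integrable_const c).indicator (ht'm.inter hA)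
    calc ∫ ω in B, A.indicator ((Y ⁻¹' t).indicator fun _ => c) ω ∂μ
        = ∫ ω in B, (((Y ⁻¹' t) ∩ A).indicator fun _ => c) ω ∂μ := by rw [e1]
      _ = ∫ ω in B, (μ[((Y ⁻¹' t) ∩ A).indicator fun _ => c|m']) ω ∂μ :=
          (setIntegral_condExp hm' hint1 hB).symm
      _ = ∫ ω in B, (μ[(Y ⁻¹' t).indicator fun _ => c|m']) ω * q ω ∂μ := by
          refine setIntegral_congr_ae (hm' B hB) ?_
          filter_upwards [hci ((Y ⁻¹' t) ∩ A), hci (Y ⁻¹' t), hprod t ht]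
            with ω h1 h2 h3 _
          simp only [h1, h2, h3]
          ring
  have h_add : ∀ ⦃f1 f2 : Ω → ℝ⦄,
      Disjoint (Function.support f1) (Function.support f2) →
      MemLp f1 1 μ → MemLp f2 1 μ →
      StronglyMeasurable[MeasurableSpace.comap Y inferInstance] f1 →
      StronglyMeasurable[MeasurableSpace.comap Y inferInstance] f2 →
      (∫ ω in B, A.indicator f1 ω ∂μ = ∫ ω in B, (μ[f1|m']) ω * q ω ∂μ) →
      (∫ ω in B, A.indicator f2 ω ∂μ = ∫ ω in B, (μ[f2|m']) ω * q ω ∂μ) →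
      (∫ ω in B, A.indicator (f1 + f2) ω ∂μ =
        ∫ ω in B, (μ[f1 + f2|m']) ω * q ω ∂μ) := by
    intro f1 f2 _hdisj hf1 hf2 _hm1 _hm2 hP1 hP2
    rw [memLp_one_iff_integrable] at hf1 hf2
    have e1 : A.indicator (f1 + f2) = A.indicator f1 + A.indicator f2 := by
      funext ω; by_cases h : ω ∈ A <;> simp [Set.indicator_apply, h]
    have hc12 := condExp_add (μ := μ) (m := m') hf1 hf2
    calc ∫ ω in B, A.indicator (f1 + f2) ω ∂μ
        = ∫ ω in B, (A.indicator f1 ω + A.indicator f2 ω) ∂μ := by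
          rw [e1]; simp only [Pi.add_apply]
      _ = (∫ ω in B, A.indicator f1 ω ∂μ) + ∫ ω in B, A.indicator f2 ω ∂μ :=
          integral_add (hf1.indicator hA).integrableOn (hf2.indicator hA).integrableOn
      _ = (∫ ω in B, (μ[f1|m']) ω * q ω ∂μ) + ∫ ω in B, (μ[f2|m']) ω * q ω ∂μ := by
          rw [hP1, hP2]
      _ = ∫ ω in B, ((μ[f1|m']) ω * q ω + (μ[f2|m']) ω * q ω) ∂μ :=
          (integral_add (hmul integrable_condExp).integrableOn
            (hmul integrable_condExp).integrableOn).symm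
      _ = ∫ ω in B, (μ[f1 + f2|m']) ω * q ω ∂μ := by
          refine setIntegral_congr_ae (hm' B hB) ?_
          filter_upwards [hc12] with ω hω _
          simp only [hω, Pi.add_apply]
          ring
  have h_closed : IsClosed {f : lpMeas ℝ ℝ (MeasurableSpace.comap Y inferInstance) 1 μ |
      ∫ ω in B, A.indicator ((f : Lp ℝ 1 μ) : Ω → ℝ) ω ∂μ =
        ∫ ω in B, (μ[((f : Lp ℝ 1 μ) : Ω → ℝ)|m']) ω * q ω ∂μ} := by
    refine isClosed_eq ?_ ?_
    · have heq : (fun f : lpMeas ℝ ℝ (MeasurableSpace.comap Y inferInstance) 1 μ =>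
          ∫ ω in B, A.indicator ((f : Lp ℝ 1 μ) : Ω → ℝ) ω ∂μ)
          = fun f : lpMeas ℝ ℝ (MeasurableSpace.comap Y inferInstance) 1 μ =>
            ∫ ω in B ∩ A, ((f : Lp ℝ 1 μ) : Ω → ℝ) ω ∂μ := by
        funext f; exact setIntegral_indicator hA
      rw [heq]
      exact (continuous_setIntegral (B ∩ A)).comp continuous_subtype_val
    · have hG : LipschitzWith 1
          (fun h : Lp ℝ 1 μ => ∫ ω in B, (μ[(h : Ω → ℝ)|m']) ω * q ω ∂μ) := by
        refine LipschitzWith.of_dist_le_mul fun u v => ?_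
        have hu : Integrable (u : Ω → ℝ) μ := L1.integrable_coeFn u
        have hv : Integrable (v : Ω → ℝ) μ := L1.integrable_coeFn v
        have hint_u : Integrable (fun ω => (μ[(u : Ω → ℝ)|m']) ω * q ω) μ :=
          hmul integrable_condExp
        have hint_v : Integrable (fun ω => (μ[(v : Ω → ℝ)|m']) ω * q ω) μ :=
          hmul integrable_condExp
        have hsub := condExp_sub (μ := μ) (m := m') hu hv
        have key : ∀ᵐ ω ∂μ,
            ‖(μ[(u : Ω → ℝ)|m']) ω * q ω - (μ[(v : Ω → ℝ)|m']) ω * q ω‖ ≤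
              |(μ[((u : Ω → ℝ) - (v : Ω → ℝ))|m']) ω| := by
          filter_upwards [hsub, hq_bound] with ω h1 h2
          have h3 : (μ[((u : Ω → ℝ) - (v : Ω → ℝ))|m']) ω =
              (μ[(u : Ω → ℝ)|m']) ω - (μ[(v : Ω → ℝ)|m']) ω := by
            simpa using h1
          rw [Real.norm_eq_abs, h3,
            show (μ[(u : Ω → ℝ)|m']) ω * q ω - (μ[(v : Ω → ℝ)|m']) ω * q ω =
              ((μ[(u : Ω → ℝ)|m']) ω - (μ[(v : Ω → ℝ)|m']) ω) * q ω from by ring,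
            abs_mul]
          have h4 : |q ω| ≤ 1 := by rwa [Real.norm_eq_abs] at h2
          calc |(μ[(u : Ω → ℝ)|m']) ω - (μ[(v : Ω → ℝ)|m']) ω| * |q ω|
              ≤ |(μ[(u : Ω → ℝ)|m']) ω - (μ[(v : Ω → ℝ)|m']) ω| * 1 :=
                mul_le_mul_of_nonneg_left h4 (abs_nonneg _)
            _ = |(μ[(u : Ω → ℝ)|m']) ω - (μ[(v : Ω → ℝ)|m']) ω| := mul_one _
        rw [Real.dist_eq]
        have step1 : (∫ ω in B, (μ[(u : Ω → ℝ)|m']) ω * q ω ∂μ) -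
            (∫ ω in B, (μ[(v : Ω → ℝ)|m']) ω * q ω ∂μ) =
            ∫ ω in B, ((μ[(u : Ω → ℝ)|m']) ω * q ω - (μ[(v : Ω → ℝ)|m']) ω * q ω) ∂μ :=
          (integral_sub hint_u.integrableOn hint_v.integrableOn).symm
        rw [step1]
        have step2 := norm_integral_le_integral_norm (μ := μ.restrict B)
          (fun ω => (μ[(u : Ω → ℝ)|m']) ω * q ω - (μ[(v : Ω → ℝ)|m']) ω * q ω)
        rw [Real.norm_eq_abs] at step2
        refine le_trans step2 ?_
        have step3 : (∫ ω in B,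
            ‖(μ[(u : Ω → ℝ)|m']) ω * q ω - (μ[(v : Ω → ℝ)|m']) ω * q ω‖ ∂μ) ≤
            ∫ ω in B, |(μ[((u : Ω → ℝ) - (v : Ω → ℝ))|m']) ω| ∂μ :=
          integral_mono_ae ((hint_u.sub hint_v).norm).integrableOn
            integrable_condExp.abs.integrableOn (ae_restrict_of_ae key)
        refine le_trans step3 ?_
        have step4 : (∫ ω in B, |(μ[((u : Ω → ℝ) - (v : Ω → ℝ))|m']) ω| ∂μ) ≤
            ∫ ω, |(μ[((u : Ω → ℝ) - (v : Ω → ℝ))|m']) ω| ∂μ :=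
          setIntegral_le_integral integrable_condExp.abs
            (Filter.Eventually.of_forall fun ω => abs_nonneg _)
        refine le_trans step4 ?_
        refine le_trans (integral_abs_condExp_le _) ?_
        have step5 : (∫ ω, |((u : Ω → ℝ) - (v : Ω → ℝ)) ω| ∂μ) = ‖u - v‖ := by
          rw [L1.norm_eq_integral_norm]
          refine integral_congr_ae ?_
          filter_upwards [Lp.coeFn_sub u v] with ω hω
          rw [Real.norm_eq_abs, hω]
        rw [step5, NNReal.coe_one, one_mul, dist_eq_norm]
      exact hG.continuous.comp continuous_subtype_val
  have h_ae : ∀ ⦃f1 f2 : Ω → ℝ⦄, f1 =ᵐ[μ] f2 → MemLp f1 1 μ →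
      (∫ ω in B, A.indicator f1 ω ∂μ = ∫ ω in B, (μ[f1|m']) ω * q ω ∂μ) →
      (∫ ω in B, A.indicator f2 ω ∂μ = ∫ ω in B, (μ[f2|m']) ω * q ω ∂μ) := by
    intro f1 f2 hff2 _hf1 hP1
    have e1 : ∫ ω in B, A.indicator f2 ω ∂μ = ∫ ω in B, A.indicator f1 ω ∂μ := by
      refine setIntegral_congr_ae (hm' B hB) ?_
      filter_upwards [hff2] with ω hω _
      by_cases h : ω ∈ A <;> simp [Set.indicator_of_mem, Set.indicator_of_notMem, h, hω]
    have e2 : ∫ ω in B, (μ[f2|m']) ω * q ω ∂μ = ∫ ω in B, (μ[f1|m']) ω * q ω ∂μ := by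
      refine setIntegral_congr_ae (hm' B hB) ?_
      filter_upwards [condExp_congr_ae (m := m') hff2] with ω hω _
      rw [hω]
    rw [e1, e2]
    exact hP1
  exact MemLp.induction_stronglyMeasurable hmY ENNReal.one_ne_top
    (P := fun f => ∫ ω in B, A.indicator f ω ∂μ = ∫ ω in B, (μ[f|m']) ω * q ω ∂μ)
    h_ind h_add h_closed h_ae (memLp_one_iff_integrable.mpr hYint)
    ((Measurable.stronglyMeasurable
      (Measurable.of_comap_le le_rfl)).aestronglyMeasurable)

/-- Abstract form of the transfer theorem. -/
theorem aux_transfer {Ω 𝒲 : Type*} {m' mΩ : MeasurableSpace Ω} [StandardBorelSpace Ω]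
    [m𝒲 : MeasurableSpace 𝒲]
    (hm' : m' ≤ mΩ)
    (P : Measure Ω) [IsProbabilityMeasure P]
    (S : Ω → Bool) (hS : Measurable[mΩ] S)
    {TC A1 A0 : Set Ω} (hTCm : MeasurableSet[mΩ] TC)
    (hTCS1 : TC ∩ S ⁻¹' {true} = A1) (hTCS0 : TC ∩ S ⁻¹' {false} = A0)
    (W : Ω → 𝒲) (hW : Measurable[mΩ] W) (hm'_eq : m' = MeasurableSpace.comap W m𝒲)
    (Y : Ω → ℝ) (hYint : Integrable Y P)
    (hCI : CondIndepFun m' hm' Y S (P[|TC]))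
    (hPA1 : P A1 ≠ 0) (hPA0 : P A0 ≠ 0)
    (hac : (P[|A0]).map W ≪ (P[|A1]).map W)
    (g : 𝒲 → ℝ) (hgm : Measurable g)
    (hg : (fun ω => g (W ω)) =ᵐ[P[|A1]] (P[|A1])[Y | m']) :
    ∫ ω, Y ω ∂(P[|A0]) = ∫ ω, g (W ω) ∂(P[|A0]) := by
  set S1 : Set Ω := S ⁻¹' {true} with hS1_def
  set S0 : Set Ω := S ⁻¹' {false} with hS0_def
  have hS1m : MeasurableSet[mΩ] S1 := hS (measurableSet_singleton true)
  have hS0m : MeasurableSet[mΩ] S0 := hS (measurableSet_singleton false)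
  have hA1sub : A1 ⊆ TC := by rw [← hTCS1]; exact Set.inter_subset_left
  have hPTC : P TC ≠ 0 := fun h => hPA1 (measure_mono_null hA1sub h)
  set ν : Measure Ω := P[|TC] with hν_def
  haveI : IsProbabilityMeasure ν := cond_isProbabilityMeasure hPTC
  have hcondint : ∀ (μ : Measure Ω) (f : Ω → ℝ) (u : Set Ω), μ u ≠ 0 →
      Integrable f μ → Integrable f (μ[|u]) := by
    intro μ f u hu hf
    rw [show μ[|u] = (μ u)⁻¹ • μ.restrict u from rfl]
    exact (hf.restrict).smul_measure (ENNReal.inv_ne_top.mpr hu)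
  have hcond1 : P[|A1] = ν[|S1] := by
    rw [hν_def, cond_cond_eq_cond_inter hTCm hS1m, hTCS1]
  have hcond0 : P[|A0] = ν[|S0] := by
    rw [hν_def, cond_cond_eq_cond_inter hTCm hS0m, hTCS0]
  have hνS1 : ν S1 ≠ 0 := by
    rw [hν_def, cond_apply hTCm P S1, hTCS1]
    exact mul_ne_zero (ENNReal.inv_ne_zero.mpr (measure_ne_top P TC)) hPA1
  have hνS0 : ν S0 ≠ 0 := by
    rw [hν_def, cond_apply hTCm P S0, hTCS0]
    exact mul_ne_zero (ENNReal.inv_ne_zero.mpr (measure_ne_top P TC)) hPA0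
  have hν_ac : ν ≪ P := cond_absolutelyContinuous
  -- a measurable version of Y
  obtain ⟨Y', hY'sm, hYY'⟩ : ∃ Y' : Ω → ℝ, StronglyMeasurable[mΩ] Y' ∧ Y =ᵐ[P] Y' :=
    ⟨hYint.1.mk Y, hYint.1.stronglyMeasurable_mk, hYint.1.ae_eq_mk⟩
  have hY'm : Measurable[mΩ] Y' := hY'sm.measurable
  have hY'int : Integrable Y' P := hYint.congr hYY'
  have hYY'ν : Y =ᵐ[ν] Y' := hYY'.filter_mono hν_ac.ae_le
  have hCI' : CondIndepFun m' hm' Y' S ν := aux_condIndepFun_congr hm' hYY'ν hCI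
  have hprodfull := (condIndepFun_iff_condExp_inter_preimage_eq_mul
    (m' := m') (hm' := hm') hY'm hS).mp hCI'
  have hprod1 : ∀ s : Set ℝ, MeasurableSet s →
      (ν[(Y' ⁻¹' s ∩ S1).indicator (fun _ => (1 : ℝ))|m']) =ᵐ[ν]
        fun ω => (ν[(Y' ⁻¹' s).indicator (fun _ => (1 : ℝ))|m']) ω *
          (ν[S1.indicator (fun _ => (1 : ℝ))|m']) ω :=
    fun s hs => hprodfull s {true} hs (measurableSet_singleton true)
  have hprod0 : ∀ s : Set ℝ, MeasurableSet s →
      (ν[(Y' ⁻¹' s ∩ S0).indicator (fun _ => (1 : ℝ))|m']) =ᵐ[ν]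
        fun ω => (ν[(Y' ⁻¹' s).indicator (fun _ => (1 : ℝ))|m']) ω *
          (ν[S0.indicator (fun _ => (1 : ℝ))|m']) ω :=
    fun s hs => hprodfull s {false} hs (measurableSet_singleton false)
  have hY'ν : Integrable Y' ν := hcondint P Y' TC hPTC hY'int
  have K1 : ∀ B : Set Ω, MeasurableSet[m'] B →
      ∫ ω in B, S1.indicator Y' ω ∂ν =
        ∫ ω in B, (ν[Y'|m']) ω * (ν[S1.indicator (fun _ => (1 : ℝ))|m']) ω ∂ν :=
    fun B hB => aux_setIntegral_indicator_eq hm' ν hY'm hY'ν hS1m hprod1 hB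
  have K0 : ∀ B : Set Ω, MeasurableSet[m'] B →
      ∫ ω in B, S0.indicator Y' ω ∂ν =
        ∫ ω in B, (ν[Y'|m']) ω * (ν[S0.indicator (fun _ => (1 : ℝ))|m']) ω ∂ν :=
    fun B hB => aux_setIntegral_indicator_eq hm' ν hY'm hY'ν hS0m hprod0 hB
  have K1' : ∀ B : Set Ω, MeasurableSet[m'] B →
      ∫ ω in B, S1.indicator (ν[Y'|m']) ω ∂ν =
        ∫ ω in B, (ν[Y'|m']) ω * (ν[S1.indicator (fun _ => (1 : ℝ))|m']) ω ∂ν :=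
    fun B hB => aux_pullout_s6 hm' ν hS1m stronglyMeasurable_condExp integrable_condExp hB
  have K0' : ∀ B : Set Ω, MeasurableSet[m'] B →
      ∫ ω in B, S0.indicator (ν[Y'|m']) ω ∂ν =
        ∫ ω in B, (ν[Y'|m']) ω * (ν[S0.indicator (fun _ => (1 : ℝ))|m']) ω ∂ν :=
    fun B hB => aux_pullout_s6 hm' ν hS0m stronglyMeasurable_condExp integrable_condExp hB
  -- unfolding of conditional measures for set integrals
  have hsetint : ∀ (u : Set Ω), MeasurableSet[mΩ] u → ∀ (f : Ω → ℝ) (B : Set Ω),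
      MeasurableSet[m'] B →
      ∫ ω in B, f ω ∂(ν[|u]) = (ν u)⁻¹.toReal • ∫ ω in B, u.indicator f ω ∂ν := by
    intro u hu f B hB
    rw [show ν[|u] = (ν u)⁻¹ • ν.restrict u from rfl]
    rw [Measure.restrict_smul, integral_smul_measure, setIntegral_indicator hu,
      Measure.restrict_restrict (hm' B hB)]
  haveI : IsProbabilityMeasure (ν[|S1]) := cond_isProbabilityMeasure hνS1
  -- Claim 1: ν[Y'|m'] is a version of the conditional expectation under P[|A1]
  have claim1 : (fun ω => g (W ω)) =ᵐ[P[|A1]] ν[Y'|m'] := by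
    have e1 : (ν[Y'|m']) =ᵐ[P[|A1]] (P[|A1])[Y'|m'] := by
      rw [hcond1]
      refine ae_eq_condExp_of_forall_setIntegral_eq hm'
        (hcondint ν Y' S1 hνS1 hY'ν) (fun s hs _ => ?_) (fun s hs _ => ?_) ?_
      · exact (hcondint ν (ν[Y'|m']) S1 hνS1 integrable_condExp).integrableOn
      · rw [hsetint S1 hS1m (ν[Y'|m']) s hs, hsetint S1 hS1m Y' s hs,
          K1' s hs, K1 s hs]
      · exact stronglyMeasurable_condExp.aestronglyMeasurable
    have e2 : (P[|A1])[Y|m'] =ᵐ[P[|A1]] (P[|A1])[Y'|m'] :=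
      condExp_congr_ae (hYY'.filter_mono cond_absolutelyContinuous.ae_le)
    exact hg.trans (e2.trans e1.symm)
  -- transfer to P[|A0] via absolute continuity of the laws of W
  have hEm : MeasurableSet[m'] {ω | g (W ω) = (ν[Y'|m']) ω} := by
    refine measurableSet_eq_fun ?_ stronglyMeasurable_condExp.measurable
    rw [hm'_eq]
    exact hgm.comp (Measurable.of_comap_le le_rfl)
  have hEmc : MeasurableSet[MeasurableSpace.comap W m𝒲]
      ({ω | g (W ω) = (ν[Y'|m']) ω}ᶜ) := by
    rw [← hm'_eq]
    exact hEm.compl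
  obtain ⟨u, hu, huW⟩ := hEmc
  have hnull1 : P[|A1] (W ⁻¹' u) = 0 := by
    rw [huW]
    exact ae_iff.mp claim1
  have hnull0 : P[|A0] (W ⁻¹' u) = 0 := by
    rw [← Measure.map_apply hW hu]
    exact hac (by rw [Measure.map_apply hW hu]; exact hnull1)
  have claim0 : (fun ω => g (W ω)) =ᵐ[P[|A0]] ν[Y'|m'] := by
    rw [huW] at hnull0
    exact ae_iff.mpr hnull0
  -- final computation
  have hYA0 : Y =ᵐ[P[|A0]] Y' := hYY'.filter_mono cond_absolutelyContinuous.ae_le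
  calc ∫ ω, Y ω ∂(P[|A0])
      = ∫ ω, Y' ω ∂(P[|A0]) := integral_congr_ae hYA0
    _ = ∫ ω, (ν[Y'|m']) ω ∂(P[|A0]) := by
        rw [hcond0]
        have h1 := hsetint S0 hS0m Y' Set.univ MeasurableSet.univ
        have h2 := hsetint S0 hS0m (ν[Y'|m']) Set.univ MeasurableSet.univ
        simp only [Measure.restrict_univ] at h1 h2
        rw [h1, h2]
        have k0 := K0 Set.univ MeasurableSet.univ
        have k0' := K0' Set.univ MeasurableSet.univ
        simp only [Measure.restrict_univ] at k0 k0'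
        rw [k0, k0']
    _ = ∫ ω, g (W ω) ∂(P[|A0]) := (integral_congr_ae claim0).symm

end Aux

/-- Strong ignorability of sample assignment transfers the covariate-conditional response
surface from the RCT (`S=1`) to the population (`S=0`): if under `ν := P[·|T=1, C=1]` the
integrable outcome `Y` is conditionally independent of `S` given `σ(W)` with the positivity
condition `0 < ν(S=1|W) < 1` a.s., and the law of `W` given `{S=0, T=1, C=1}` is absolutely
continuous w.r.t. its law given `{S=1, T=1, C=1}`, then for any version `g` of
`E[Y | S=1, T=1, C=1, W]` we have `E[Y | S=0, T=1, C=1] = E[g(W) | S=0, T=1, C=1]`. -/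
theorem strong_ignorability_transfer
    {Ω 𝒲 : Type*} [MeasurableSpace Ω] [StandardBorelSpace Ω]
    [MeasurableSpace 𝒲] [StandardBorelSpace 𝒲]
    (P : Measure Ω) [IsProbabilityMeasure P]
    (S T C : Ω → Bool) (hS : Measurable S) (hT : Measurable T) (hC : Measurable C)
    (W : Ω → 𝒲) (hW : Measurable W)
    (Y : Ω → ℝ) (hYint : Integrable Y P)
    (hCI : CondIndepFun (MeasurableSpace.comap W inferInstance) hW.comap_le Y S
      (P[|{ω | T ω = true ∧ C ω = true}]))
    (hpos : ∀ᵐ ω ∂(P[|{ω | T ω = true ∧ C ω = true}]),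
      0 < ((P[|{ω | T ω = true ∧ C ω = true}])[({ω | S ω = true}).indicator
            (fun _ => (1 : ℝ)) | MeasurableSpace.comap W inferInstance]) ω ∧
      ((P[|{ω | T ω = true ∧ C ω = true}])[({ω | S ω = true}).indicator
            (fun _ => (1 : ℝ)) | MeasurableSpace.comap W inferInstance]) ω < 1)
    (hpos1 : 0 < P {ω | S ω = true ∧ T ω = true ∧ C ω = true})
    (hpos0 : 0 < P {ω | S ω = false ∧ T ω = true ∧ C ω = true})
    (hac : (P[|{ω | S ω = false ∧ T ω = true ∧ C ω = true}]).map W ≪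
      (P[|{ω | S ω = true ∧ T ω = true ∧ C ω = true}]).map W)
    (g : 𝒲 → ℝ) (hgm : Measurable g)
    (hg : (fun ω => g (W ω)) =ᵐ[P[|{ω | S ω = true ∧ T ω = true ∧ C ω = true}]]
      (P[|{ω | S ω = true ∧ T ω = true ∧ C ω = true}])[Y |
        MeasurableSpace.comap W inferInstance]) :
    ∫ ω, Y ω ∂(P[|{ω | S ω = false ∧ T ω = true ∧ C ω = true}]) =
      ∫ ω, g (W ω) ∂(P[|{ω | S ω = false ∧ T ω = true ∧ C ω = true}]) := by
  clear hpos
  have hTCm : MeasurableSet {ω | T ω = true ∧ C ω = true} :=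
    (hT (measurableSet_singleton true)).inter (hC (measurableSet_singleton true))
  have hTCS1 : {ω | T ω = true ∧ C ω = true} ∩ S ⁻¹' {true} =
      {ω | S ω = true ∧ T ω = true ∧ C ω = true} := by
    ext ω
    simp only [Set.mem_inter_iff, Set.mem_setOf_eq, Set.mem_preimage,
      Set.mem_singleton_iff]
    tauto
  have hTCS0 : {ω | T ω = true ∧ C ω = true} ∩ S ⁻¹' {false} =
      {ω | S ω = false ∧ T ω = true ∧ C ω = true} := by
    ext ω
    simp only [Set.mem_inter_iff, Set.mem_setOf_eq, Set.mem_preimage,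
      Set.mem_singleton_iff]
    tauto
  exact aux_transfer hW.comap_le P S hS hTCm hTCS1 hTCS0 W hW rfl Y hYint hCI
    hpos1.ne' hpos0.ne' hac g hgm hg
end

section
/- Let Y : Ω → ℝ be integrable and suppose that under ν := P(·|{S=1}), T is independent of the triple (W, C, Y), with P(S=1, T=1, C=1) > 0 and P(S=1, T=0, C=1) > 0. Then under the conditional measure ν(·|{C=1}) = P(·|{S=1, C=1}), the conditional expectation of Y given the σ-algebra generated by W and T equals the conditional expectation of Y given σ(W), almost surely. Consequently, any version of E[Y | {S=1, T=1, C=1}, W] and any version of E[Y | {S=1, T=0, C=1}, W] agree almost everywhere with respect to the law of W under P(·|{S=1, C=1}): randomized assignment allows the treatment-arm conditioning T=1 to be replaced by T=0 for compliers. -/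
open MeasureTheory ProbabilityTheory

section Aux
variable {Ω 𝒲 : Type*} [m0 : MeasurableSpace Ω] [MeasurableSpace 𝒲]

omit m0 in
lemma comap_fst_le (W : Ω → 𝒲) (Y : Ω → ℝ) :
    MeasurableSpace.comap W inferInstance ≤
      MeasurableSpace.comap (fun ω => (W ω, Y ω)) inferInstance := by
  rintro s ⟨A, hA, rfl⟩
  exact ⟨A ×ˢ Set.univ, hA.prod MeasurableSet.univ, by ext ω; simp⟩

omit m0 in
/-- If `T ⟂ (W, Y)` and `k` is `σ(W)`-measurable then `φ ∘ T ⟂ k`. -/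
lemma indep_of_sm
    {m : MeasurableSpace Ω} {μ : Measure Ω} {T : Ω → Bool} {W : Ω → 𝒲} {Y : Ω → ℝ}
    (h : IndepFun T (fun ω => (W ω, Y ω)) μ)
    {φ : Bool → ℝ} (hφ : Measurable φ) {k : Ω → ℝ}
    (hk : Measurable[MeasurableSpace.comap W inferInstance] k) :
    IndepFun (fun ω => φ (T ω)) k μ := by
  have h1 : MeasurableSpace.comap (fun ω => φ (T ω)) inferInstance ≤
      MeasurableSpace.comap T inferInstance := by
    rintro s ⟨A, hA, rfl⟩
    exact ⟨φ ⁻¹' A, hφ hA, rfl⟩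
  have h2 : MeasurableSpace.comap k inferInstance ≤
      MeasurableSpace.comap (fun ω => (W ω, Y ω)) inferInstance :=
    le_trans hk.comap_le (comap_fst_le W Y)
  exact indep_of_indep_of_le_right (indep_of_indep_of_le_left h h1) h2

/-- Integral over a rectangle `W⁻¹A ∩ T⁻¹B` factorizes under independence. -/
lemma setIntegral_rect (μ : Measure Ω)
    (T : Ω → Bool) (hT : Measurable T) (W : Ω → 𝒲) (hW : Measurable W)
    {A : Set 𝒲} {B : Set Bool} (hA : MeasurableSet A) (hB : MeasurableSet B)
    (k : Ω → ℝ) (hkm : AEStronglyMeasurable k μ)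
    (hki : IndepFun (fun ω => Set.indicator B (fun _ => (1:ℝ)) (T ω))
      (Set.indicator (W ⁻¹' A) k) μ) :
    ∫ x in W ⁻¹' A ∩ T ⁻¹' B, k x ∂μ
      = (μ (T ⁻¹' B)).toReal * ∫ x in W ⁻¹' A, k x ∂μ := by
  have hWA : MeasurableSet (W ⁻¹' A) := hW hA
  have hTB : MeasurableSet (T ⁻¹' B) := hT hB
  have h1 : ∀ x : Ω, Set.indicator (W ⁻¹' A ∩ T ⁻¹' B) k x
      = ((fun ω => Set.indicator B (fun _ => (1:ℝ)) (T ω)) * Set.indicator (W ⁻¹' A) k) x := by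
    intro x
    by_cases h1 : T x ∈ B <;> by_cases h2 : W x ∈ A <;>
      simp [Set.indicator, h1, h2]
  have h2 : ∀ x : Ω, Set.indicator B (fun _ => (1:ℝ)) (T x)
      = Set.indicator (T ⁻¹' B) (fun _ => (1:ℝ)) x := by
    intro x
    by_cases h1 : T x ∈ B <;> simp [Set.indicator, h1]
  rw [← integral_indicator (hWA.inter hTB), integral_congr_ae (Filter.Eventually.of_forall h1),
    hki.integral_mul_eq_mul_integral (((measurable_const.indicator hB).comp hT).aestronglyMeasurable)
      (hkm.indicator hWA), integral_indicator hWA,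
    integral_congr_ae (Filter.Eventually.of_forall h2), integral_indicator_const (1:ℝ) hTB,
    smul_eq_mul, mul_one, measureReal_def]

/-- Core: if `T ⟂ (W, Y)` then `E[Y | σ(W) ⊔ σ(T)] = E[Y | σ(W)]`. -/
lemma condexp_sup_of_indepFun
    (μ : Measure Ω) [IsProbabilityMeasure μ]
    (T : Ω → Bool) (hT : Measurable T) (W : Ω → 𝒲) (hW : Measurable W)
    (Y : Ω → ℝ) (hY : Integrable Y μ)
    (h : IndepFun T (fun ω => (W ω, Y ω)) μ) :
    μ[Y | MeasurableSpace.comap W inferInstance ⊔ MeasurableSpace.comap T inferInstance]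
      =ᵐ[μ] μ[Y | MeasurableSpace.comap W inferInstance] := by
  have hmW : MeasurableSpace.comap W inferInstance ≤ m0 := hW.comap_le
  have hmT : MeasurableSpace.comap T inferInstance ≤ m0 := hT.comap_le
  have hm : MeasurableSpace.comap W inferInstance ⊔ MeasurableSpace.comap T inferInstance ≤ m0 :=
    sup_le hmW hmT
  set g : Ω → ℝ := μ[Y | MeasurableSpace.comap W inferInstance] with hgdef
  have hgint : Integrable g μ := integrable_condExp
  have hgsm : StronglyMeasurable[MeasurableSpace.comap W inferInstance] g :=
    stronglyMeasurable_condExp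
  -- the key computation on rectangles
  have hrect : ∀ (A : Set 𝒲) (B : Set Bool), MeasurableSet A → MeasurableSet B →
      ∫ x in W ⁻¹' A ∩ T ⁻¹' B, g x ∂μ = ∫ x in W ⁻¹' A ∩ T ⁻¹' B, Y x ∂μ := by
    intro A B hA hB
    have hYind : IndepFun (fun ω => Set.indicator B (fun _ => (1:ℝ)) (T ω))
        (Set.indicator (W ⁻¹' A) Y) μ := by
      have : Set.indicator (W ⁻¹' A) Y
          = (fun p : 𝒲 × ℝ => Set.indicator A (fun _ => (1:ℝ)) p.1 * p.2)
            ∘ (fun ω => (W ω, Y ω)) := by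
        funext x
        by_cases h2 : W x ∈ A <;> simp [Set.indicator, h2]
      rw [this]
      exact h.comp (measurable_const.indicator hB) ((measurable_const.indicator hA).comp
        measurable_fst |>.mul measurable_snd)
    have hgind : IndepFun (fun ω => Set.indicator B (fun _ => (1:ℝ)) (T ω))
        (Set.indicator (W ⁻¹' A) g) μ := by
      refine indep_of_sm h (measurable_const.indicator hB) ?_
      exact (hgsm.measurable.indicator ⟨A, hA, rfl⟩)
    rw [setIntegral_rect μ T hT W hW hA hB Y hY.1 hYind,
      setIntegral_rect μ T hT W hW hA hB g hgint.1 hgind,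
      setIntegral_condExp hmW hY (show MeasurableSet[MeasurableSpace.comap W inferInstance]
        (W ⁻¹' A) from ⟨A, hA, rfl⟩)]
  -- generating π-system
  have hgen : (MeasurableSpace.comap W inferInstance ⊔ MeasurableSpace.comap T inferInstance
        : MeasurableSpace Ω)
      = MeasurableSpace.generateFrom {s | ∃ A B, MeasurableSet A ∧ MeasurableSet B ∧
          s = W ⁻¹' A ∩ T ⁻¹' B} := by
    refine le_antisymm (sup_le ?_ ?_) (MeasurableSpace.generateFrom_le ?_)
    · rintro s ⟨A, hA, rfl⟩
      refine MeasurableSpace.measurableSet_generateFrom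
        ⟨A, Set.univ, hA, MeasurableSet.univ, by rw [Set.preimage_univ, Set.inter_univ]⟩
    · rintro s ⟨B, hB, rfl⟩
      refine MeasurableSpace.measurableSet_generateFrom
        ⟨Set.univ, B, MeasurableSet.univ, hB, by rw [Set.preimage_univ, Set.univ_inter]⟩
    · rintro s ⟨A, B, hA, hB, rfl⟩
      exact MeasurableSet.inter (le_sup_left (α := MeasurableSpace Ω) _ ⟨A, hA, rfl⟩)
        (le_sup_right (α := MeasurableSpace Ω) _ ⟨B, hB, rfl⟩)
  have hpi : IsPiSystem {s : Set Ω | ∃ A B, MeasurableSet A ∧ MeasurableSet B ∧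
      s = W ⁻¹' A ∩ T ⁻¹' B} := by
    rintro s ⟨A, B, hA, hB, rfl⟩ t ⟨A', B', hA', hB', rfl⟩ -
    exact ⟨A ∩ A', B ∩ B', hA.inter hA', hB.inter hB', by ext x; simp; tauto⟩
  -- extend to the whole σ-algebra
  have hall : ∀ s, MeasurableSet[MeasurableSpace.comap W inferInstance ⊔
      MeasurableSpace.comap T inferInstance] s →
      ∫ x in s, g x ∂μ = ∫ x in s, Y x ∂μ := by
    intro s hs
    refine @MeasurableSpace.induction_on_inter Ω
      (MeasurableSpace.comap W inferInstance ⊔ MeasurableSpace.comap T inferInstance)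
      (fun s _ => ∫ x in s, g x ∂μ = ∫ x in s, Y x ∂μ) _
      hgen hpi ?_ ?_ ?_ ?_ s hs
    · simp
    · rintro t ⟨A, B, hA, hB, rfl⟩
      exact hrect A B hA hB
    · intro t htm ht
      have htm0 : MeasurableSet t := hm _ htm
      rw [setIntegral_compl htm0 hgint, setIntegral_compl htm0 hY, ht, integral_condExp hmW]
    · intro f hdisj hfm hf
      have hfm0 : ∀ i, MeasurableSet (f i) := fun i => hm _ (hfm i)
      rw [integral_iUnion hfm0 hdisj hgint.integrableOn,
        integral_iUnion hfm0 hdisj hY.integrableOn]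
      exact tsum_congr hf
  refine (ae_eq_condExp_of_forall_setIntegral_eq hm hY
    (fun s _ _ => hgint.integrableOn) (fun s hsm _ => hall s hsm) ?_).symm
  exact StronglyMeasurable.aestronglyMeasurable (hgsm.mono le_sup_left)

/-- Under independence, set-integrals over `σ(W)`-sets are unchanged by conditioning on `T`. -/
lemma setIntegral_cond_eq (μ : Measure Ω) [IsProbabilityMeasure μ]
    (T : Ω → Bool) (hT : Measurable T) (W : Ω → 𝒲) (hW : Measurable W)
    (b : Bool) (hb : μ (T ⁻¹' {b}) ≠ 0)
    (k : Ω → ℝ) (hkm : AEStronglyMeasurable k μ)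
    {A : Set 𝒲} (hA : MeasurableSet A)
    (hki : IndepFun (fun ω => Set.indicator ({b} : Set Bool) (fun _ => (1:ℝ)) (T ω))
      (Set.indicator (W ⁻¹' A) k) μ) :
    ∫ x in W ⁻¹' A, k x ∂(μ[|T ⁻¹' {b}]) = ∫ x in W ⁻¹' A, k x ∂μ := by
  have hWA : MeasurableSet (W ⁻¹' A) := hW hA
  rw [ProbabilityTheory.cond, Measure.restrict_smul, integral_smul_measure,
    Measure.restrict_restrict hWA,
    setIntegral_rect μ T hT W hW hA (measurableSet_singleton b) k hkm hki,
    ENNReal.toReal_inv, smul_eq_mul, ← mul_assoc,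
    inv_mul_cancel₀ (ENNReal.toReal_ne_zero.2 ⟨hb, measure_ne_top _ _⟩), one_mul]

/-- Independence survives conditioning on an event of the second coordinate. -/
lemma indep_cond (ν : Measure Ω) [IsProbabilityMeasure ν]
    (T C : Ω → Bool) (hC : Measurable C) (W : Ω → 𝒲) (Y : Ω → ℝ)
    (hR : IndepFun T (fun ω => (W ω, C ω, Y ω)) ν)
    (hCpos : ν (C ⁻¹' {true}) ≠ 0) :
    IndepFun T (fun ω => (W ω, Y ω)) (ν[|C ⁻¹' {true}]) := by
  have hcset : MeasurableSet (C ⁻¹' {true}) := hC (measurableSet_singleton true)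
  rw [indepFun_iff_measure_inter_preimage_eq_mul]
  intro s t hs ht
  have hR' := hR.measure_inter_preimage_eq_mul
  -- the lifted set
  set E' : Set (𝒲 × Bool × ℝ) :=
    {p | (p.1, p.2.2) ∈ t ∧ p.2.1 = true} with hE'def
  have hE' : MeasurableSet E' := by
    have h1 : E' = (fun p : 𝒲 × Bool × ℝ => (p.1, p.2.2)) ⁻¹' t
        ∩ (fun p : 𝒲 × Bool × ℝ => p.2.1) ⁻¹' {true} := by
      ext p; simp [hE'def]
    rw [h1]
    exact (((measurable_fst.prodMk measurable_snd.snd) ht)).inter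
      (measurable_snd.fst (measurableSet_singleton true))
  have hsetE : (fun ω => (W ω, C ω, Y ω)) ⁻¹' E'
      = (fun ω => (W ω, Y ω)) ⁻¹' t ∩ C ⁻¹' {true} := by
    ext ω; simp [hE'def]
  have hCasE : C ⁻¹' {true}
      = (fun ω => (W ω, C ω, Y ω)) ⁻¹' (Set.univ ×ˢ ({true} ×ˢ Set.univ)) := by
    ext ω; simp
  have hinter : ν (T ⁻¹' s ∩ C ⁻¹' {true}) = ν (T ⁻¹' s) * ν (C ⁻¹' {true}) := by
    rw [hCasE]
    exact hR' s _ hs ((MeasurableSet.univ.prod ((measurableSet_singleton true).prod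
      MeasurableSet.univ)))
  have hmain : ν (T ⁻¹' s ∩ (fun ω => (W ω, Y ω)) ⁻¹' t ∩ C ⁻¹' {true})
      = ν (T ⁻¹' s) * ν ((fun ω => (W ω, Y ω)) ⁻¹' t ∩ C ⁻¹' {true}) := by
    rw [← hsetE, Set.inter_assoc, ← hsetE]
    exact hR' s E' hs hE'
  rw [cond_apply hcset, cond_apply hcset, cond_apply hcset,
    show C ⁻¹' {true} ∩ (T ⁻¹' s ∩ (fun ω => (W ω, Y ω)) ⁻¹' t)
      = T ⁻¹' s ∩ (fun ω => (W ω, Y ω)) ⁻¹' t ∩ C ⁻¹' {true} by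
        rw [Set.inter_comm], hmain,
    show C ⁻¹' {true} ∩ T ⁻¹' s = T ⁻¹' s ∩ C ⁻¹' {true} from Set.inter_comm _ _, hinter,
    show C ⁻¹' {true} ∩ (fun ω => (W ω, Y ω)) ⁻¹' t
      = (fun ω => (W ω, Y ω)) ⁻¹' t ∩ C ⁻¹' {true} from Set.inter_comm _ _]
  have hcancel : (ν (C ⁻¹' {true}))⁻¹ * (ν (T ⁻¹' s) * ν (C ⁻¹' {true})) = ν (T ⁻¹' s) := by
    rw [mul_comm (ν (T ⁻¹' s)), ← mul_assoc, ENNReal.inv_mul_cancel hCpos (measure_ne_top _ _),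
      one_mul]
  rw [hcancel]
  ring

end Aux

/-- Randomized assignment lets the treatment-arm conditioning `T=1` be replaced by `T=0` for
compliers: if under `ν := P[·|S=1]` the assignment `T` is independent of `(W, C, Y)`, then
under `P[·|S=1, C=1]` we have `E[Y | σ(W) ⊔ σ(T)] = E[Y | σ(W)]` a.s., and any versions of
`E[Y | S=1, T=1, C=1, W]` and `E[Y | S=1, T=0, C=1, W]` agree a.e. with respect to the law of
`W` under `P[·|S=1, C=1]`. -/
theorem randomization_swaps_arms
    {Ω 𝒲 : Type*} [MeasurableSpace Ω] [StandardBorelSpace Ω]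
    [MeasurableSpace 𝒲] [StandardBorelSpace 𝒲]
    (P : Measure Ω) [IsProbabilityMeasure P]
    (S T C : Ω → Bool) (hS : Measurable S) (hT : Measurable T) (hC : Measurable C)
    (W : Ω → 𝒲) (hW : Measurable W)
    (Y : Ω → ℝ) (hYint : Integrable Y P)
    (hR : IndepFun T (fun ω => (W ω, C ω, Y ω)) (P[|{ω | S ω = true}]))
    (hpos1 : 0 < P {ω | S ω = true ∧ T ω = true ∧ C ω = true})
    (hpos0 : 0 < P {ω | S ω = true ∧ T ω = false ∧ C ω = true}) :
    ((P[|{ω | S ω = true ∧ C ω = true}])[Y |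
        MeasurableSpace.comap W inferInstance ⊔ MeasurableSpace.comap T inferInstance]
      =ᵐ[P[|{ω | S ω = true ∧ C ω = true}]]
      (P[|{ω | S ω = true ∧ C ω = true}])[Y | MeasurableSpace.comap W inferInstance]) ∧
    ∀ g₁ g₀ : 𝒲 → ℝ, Measurable g₁ → Measurable g₀ →
      ((fun ω => g₁ (W ω)) =ᵐ[P[|{ω | S ω = true ∧ T ω = true ∧ C ω = true}]]
        (P[|{ω | S ω = true ∧ T ω = true ∧ C ω = true}])[Y |
          MeasurableSpace.comap W inferInstance]) →
      ((fun ω => g₀ (W ω)) =ᵐ[P[|{ω | S ω = true ∧ T ω = false ∧ C ω = true}]]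
        (P[|{ω | S ω = true ∧ T ω = false ∧ C ω = true}])[Y |
          MeasurableSpace.comap W inferInstance]) →
      g₁ =ᵐ[(P[|{ω | S ω = true ∧ C ω = true}]).map W] g₀ := by
  classical
  have htrue : MeasurableSet ({true} : Set Bool) := measurableSet_singleton true
  have hsA : MeasurableSet {ω | S ω = true} := hS htrue
  have hcset : MeasurableSet (C ⁻¹' {true}) := hC htrue
  have hPSTC1 : P {ω | S ω = true ∧ T ω = true ∧ C ω = true} ≠ 0 := hpos1.ne'
  have hPSTC0 : P {ω | S ω = true ∧ T ω = false ∧ C ω = true} ≠ 0 := hpos0.ne'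
  have hPSC : P {ω | S ω = true ∧ C ω = true} ≠ 0 := fun h =>
    hPSTC1 (measure_mono_null (Set.setOf_subset_setOf.2 (fun ω hω => ⟨hω.1, hω.2.2⟩)) h)
  have hPS : P {ω | S ω = true} ≠ 0 := fun h =>
    hPSTC1 (measure_mono_null (Set.setOf_subset_setOf.2 (fun ω hω => hω.1)) h)
  haveI : IsProbabilityMeasure (P[|{ω | S ω = true}]) := cond_isProbabilityMeasure hPS
  have hSCset : {ω | S ω = true ∧ C ω = true} = {ω | S ω = true} ∩ C ⁻¹' {true} := by
    ext ω; simp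
  set μ := P[|{ω | S ω = true ∧ C ω = true}] with hμdef
  have hmSC : MeasurableSet {ω | S ω = true ∧ C ω = true} := hSCset ▸ hsA.inter hcset
  haveI : IsProbabilityMeasure μ := cond_isProbabilityMeasure hPSC
  have hμν : μ = (P[|{ω | S ω = true}])[|C ⁻¹' {true}] := by
    rw [cond_cond_eq_cond_inter hsA hcset, hμdef, hSCset]
  have hνC : (P[|{ω | S ω = true}]) (C ⁻¹' {true}) ≠ 0 := by
    rw [cond_apply hsA]
    refine mul_ne_zero (ENNReal.inv_ne_zero.2 (measure_ne_top _ _)) ?_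
    rw [← hSCset]
    exact hPSC
  have hindμ : IndepFun T (fun ω => (W ω, Y ω)) μ := by
    rw [hμν]
    exact indep_cond (P[|{ω | S ω = true}]) T C hC W Y hR hνC
  have hYμ : Integrable Y μ := by
    rw [hμdef, ProbabilityTheory.cond]
    exact (hYint.restrict).smul_measure (ENNReal.inv_ne_top.2 hPSC)
  refine ⟨condexp_sup_of_indepFun μ T hT W hW Y hYμ hindμ, ?_⟩
  -- Part 2
  have main : ∀ (b : Bool) (g : 𝒲 → ℝ), Measurable g →
      P {ω | S ω = true ∧ T ω = b ∧ C ω = true} ≠ 0 →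
      ((fun ω => g (W ω)) =ᵐ[P[|{ω | S ω = true ∧ T ω = b ∧ C ω = true}]]
        (P[|{ω | S ω = true ∧ T ω = b ∧ C ω = true}])[Y |
          MeasurableSpace.comap W inferInstance]) →
      Integrable (fun ω => g (W ω)) μ ∧
      ∀ A : Set 𝒲, MeasurableSet A →
        ∫ x in W ⁻¹' A, g (W x) ∂μ = ∫ x in W ⁻¹' A, Y x ∂μ := by
    intro b g hgm hb0 hg
    have hmb : MeasurableSet (T ⁻¹' {b}) := hT (measurableSet_singleton b)
    have hsbeq : {ω | S ω = true ∧ T ω = b ∧ C ω = true}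
        = {ω | S ω = true ∧ C ω = true} ∩ T ⁻¹' {b} := by
      ext ω; simp; tauto
    have hμb : P[|{ω | S ω = true ∧ T ω = b ∧ C ω = true}] = μ[|T ⁻¹' {b}] := by
      rw [hμdef, cond_cond_eq_cond_inter hmSC hmb, hsbeq]
    have hμTb : μ (T ⁻¹' {b}) ≠ 0 := by
      rw [hμdef, cond_apply hmSC]
      refine mul_ne_zero (ENNReal.inv_ne_zero.2 (measure_ne_top _ _)) ?_
      rw [← hsbeq]
      exact hb0
    haveI : IsProbabilityMeasure (μ[|T ⁻¹' {b}]) := cond_isProbabilityMeasure hμTb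
    have hYb : Integrable Y (μ[|T ⁻¹' {b}]) := by
      rw [ProbabilityTheory.cond]
      exact (hYμ.restrict).smul_measure (ENNReal.inv_ne_top.2 hμTb)
    rw [hμb] at hg
    have hgWc : Measurable[MeasurableSpace.comap W inferInstance] (fun ω => g (W ω)) :=
      fun s hs => ⟨g ⁻¹' s, hgm hs, rfl⟩
    have hgint_b : Integrable (fun ω => g (W ω)) (μ[|T ⁻¹' {b}]) :=
      integrable_condExp.congr hg.symm
    have hgOn : IntegrableOn (fun ω => g (W ω)) (T ⁻¹' {b}) μ := by
      rw [ProbabilityTheory.cond] at hgint_b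
      exact (integrable_smul_measure (ENNReal.inv_ne_zero.2 (measure_ne_top _ _))
        (ENNReal.inv_ne_top.2 hμTb)).1 hgint_b
    have hXind : IndepFun (fun ω => Set.indicator ({b} : Set Bool) (fun _ => (1:ℝ)) (T ω))
        (fun ω => g (W ω)) μ :=
      indep_of_sm hindμ (measurable_const.indicator (measurableSet_singleton b)) hgWc
    have hgintμ : Integrable (fun ω => g (W ω)) μ := by
      refine hXind.integrable_right_of_integrable_op (· * ·) 1 one_ne_zero
          (fun x y => by simp [enorm_mul])
          (?_ : Integrable ((fun ω => Set.indicator ({b} : Set Bool) (fun _ => (1:ℝ)) (T ω))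
            * (fun ω => g (W ω))) μ)
        ((measurable_const.indicator (measurableSet_singleton b)).comp
          hT).aestronglyMeasurable
        (hgm.comp hW).aestronglyMeasurable ?_
      · have heq : (fun ω => Set.indicator ({b} : Set Bool) (fun _ => (1:ℝ)) (T ω))
            * (fun ω => g (W ω)) = Set.indicator (T ⁻¹' {b}) (fun ω => g (W ω)) := by
          funext x
          by_cases hx : T x = b <;> simp [Set.indicator, hx]
        rw [heq, integrable_indicator_iff hmb]
        exact hgOn
      · intro hcontra
        apply hμTb
        refine measure_mono_null ?_ (ae_iff.1 hcontra)
        intro ω hω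
        have hb' : T ω = b := hω
        simp only [Set.mem_setOf_eq]
        simp [Set.indicator, hb']
    have hindk : ∀ A : Set 𝒲, MeasurableSet A →
        IndepFun (fun ω => Set.indicator ({b} : Set Bool) (fun _ => (1:ℝ)) (T ω))
          (Set.indicator (W ⁻¹' A) (fun ω => g (W ω))) μ := fun A hA =>
      indep_of_sm hindμ (measurable_const.indicator (measurableSet_singleton b))
        (hgWc.indicator ⟨A, hA, rfl⟩)
    have hindY : ∀ A : Set 𝒲, MeasurableSet A →
        IndepFun (fun ω => Set.indicator ({b} : Set Bool) (fun _ => (1:ℝ)) (T ω))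
          (Set.indicator (W ⁻¹' A) Y) μ := by
      intro A hA
      have heq : Set.indicator (W ⁻¹' A) Y
          = (fun p : 𝒲 × ℝ => Set.indicator A (fun _ => (1:ℝ)) p.1 * p.2)
            ∘ (fun ω => (W ω, Y ω)) := by
        funext x
        by_cases h2 : W x ∈ A <;> simp [Set.indicator, h2]
      rw [heq]
      exact hindμ.comp (measurable_const.indicator (measurableSet_singleton b))
        ((measurable_const.indicator hA).comp measurable_fst |>.mul measurable_snd)
    refine ⟨hgintμ, fun A hA => ?_⟩
    calc ∫ x in W ⁻¹' A, g (W x) ∂μ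
        = ∫ x in W ⁻¹' A, g (W x) ∂(μ[|T ⁻¹' {b}]) :=
          (setIntegral_cond_eq μ T hT W hW b hμTb _ (hgm.comp hW).aestronglyMeasurable hA
            (hindk A hA)).symm
      _ = ∫ x in W ⁻¹' A, ((μ[|T ⁻¹' {b}])[Y | MeasurableSpace.comap W inferInstance]) x
            ∂(μ[|T ⁻¹' {b}]) := integral_congr_ae (ae_restrict_of_ae hg)
      _ = ∫ x in W ⁻¹' A, Y x ∂(μ[|T ⁻¹' {b}]) :=
          setIntegral_condExp hW.comap_le hYb ⟨A, hA, rfl⟩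
      _ = ∫ x in W ⁻¹' A, Y x ∂μ :=
          setIntegral_cond_eq μ T hT W hW b hμTb Y hYμ.1 hA (hindY A hA)
  intro g₁ g₀ hg₁m hg₀m hg₁ hg₀
  obtain ⟨hint1, hI1⟩ := main true g₁ hg₁m hPSTC1 hg₁
  obtain ⟨hint0, hI0⟩ := main false g₀ hg₀m hPSTC0 hg₀
  refine Integrable.ae_eq_of_forall_setIntegral_eq g₁ g₀
    ((integrable_map_measure hg₁m.aestronglyMeasurable hW.aemeasurable).2 hint1)
    ((integrable_map_measure hg₀m.aestronglyMeasurable hW.aemeasurable).2 hint0) ?_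
  intro s hs _
  rw [setIntegral_map hs hg₁m.aestronglyMeasurable hW.aemeasurable,
    setIntegral_map hs hg₀m.aestronglyMeasurable hW.aemeasurable, hI1 s hs, hI0 s hs]
end
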